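/- arXiv:2010.13274 — 7 statements merged into one kernel-verified Lean document; each statement's English description precedes it below -/
import Mathlib

section
/- Let n > 3. The group presented by generators r_2, r_3, …, r_n subject to the relators (R1)–(R6) is isomorphic to the symmetric group of degree n (the group of permutations of a set with n elements). -/
/-- Generator indices `r_2, …, r_n` for the prefix-reversal presentation of `S_n`. -/
def GenA (n : ℕ) : Type := {k : ℕ // 2 ≤ k ∧ k ≤ n}

/-- The generator `r_k` as an element of the free group (equal to `1` out of range;
all occurrences in the relators below are in range). -/
def rA (n : ℕ) (k : ℕ) : FreeGroup (GenA n) :=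
  if h : 2 ≤ k ∧ k ≤ n then FreeGroup.of ⟨k, h⟩ else 1

/-- The relators (R1)–(R6). -/
def relsA (n : ℕ) : Set (FreeGroup (GenA n)) :=
  {w | (∃ k, 2 ≤ k ∧ k ≤ n ∧ w = (rA n k) ^ 2) ∨
       (w = (rA n 2 * rA n 3) ^ 3) ∨
       (∃ k, 4 ≤ k ∧ k ≤ n ∧ w = (rA n 2 * rA n k) ^ 4) ∨
       (∃ l k, 4 ≤ l ∧ l ≤ n ∧ 3 ≤ k ∧ k ≤ l - 1 ∧
         w = rA n l * rA n (l - k + 2) * rA n 2 * rA n (l - k + 2) *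
             rA n l * rA n k * rA n 2 * rA n k) ∨
       (∃ k, 3 ≤ k ∧ k ≤ n - 1 ∧
         w = rA n k * rA n (k - 1) * rA n (k + 1) * rA n 2 *
             rA n (k + 1) * rA n k * rA n (k + 1)) ∨
       (∃ k, 3 ≤ k ∧ k ≤ n - 1 ∧
         w = (rA n k * rA n (k - 1)) ^ 2 * rA n (k + 1) * rA n 3 *
             rA n (k + 1) * rA n (k - 1) * rA n (k + 1))}

namespace PancakeAux

def revP (n k : ℕ) (hk : k ≤ n) : Equiv.Perm (Fin n) :=
  Function.Involutive.toPerm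
    (fun i => if h : (i : ℕ) < k then ⟨k - 1 - (i : ℕ), by omega⟩ else i)
    (by intro i; dsimp only; split_ifs with h1 h2 <;>
          first | rfl | (apply Fin.ext; simp at * <;> omega))

lemma revP_val (n k : ℕ) (hk : k ≤ n) (i : Fin n) :
    ((revP n k hk i : Fin n) : ℕ) = if (i : ℕ) < k then k - 1 - (i : ℕ) else (i : ℕ) := by
  unfold revP
  show (((fun i : Fin n => if h : (i : ℕ) < k then (⟨k - 1 - (i : ℕ), by omega⟩ : Fin n) else i) i : Fin n) : ℕ) = _
  dsimp only
  split_ifs with h <;> simp [h]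

lemma revP_sq (n k : ℕ) (hk : k ≤ n) : revP n k hk * revP n k hk = 1 := by
  ext i
  have hi := i.isLt
  simp only [Equiv.Perm.mul_apply, Equiv.Perm.one_apply]
  simp only [revP_val]
  split_ifs <;> omega

set_option maxHeartbeats 1000000 in
lemma revP_R2 (n : ℕ) (h2 : (2:ℕ) ≤ n) (h3 : (3:ℕ) ≤ n) :
    (revP n 2 h2 * revP n 3 h3) ^ 3 = 1 := by
  ext i
  have hi := i.isLt
  simp only [pow_succ, pow_zero, one_mul]
  simp only [Equiv.Perm.mul_apply, Equiv.Perm.one_apply]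
  set x1 := revP n (3) h3 i with hx1
  have e1 := revP_val n (3) h3 i
  set x2 := revP n (2) h2 x1 with hx2
  have e2 := revP_val n (2) h2 x1
  set x3 := revP n (3) h3 x2 with hx3
  have e3 := revP_val n (3) h3 x2
  set x4 := revP n (2) h2 x3 with hx4
  have e4 := revP_val n (2) h2 x3
  set x5 := revP n (3) h3 x4 with hx5
  have e5 := revP_val n (3) h3 x4
  set x6 := revP n (2) h2 x5 with hx6
  have e6 := revP_val n (2) h2 x5
  split_ifs at e1 e2 e3 e4 e5 e6 <;> omega

set_option maxHeartbeats 1000000 in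
lemma revP_R3 (n k : ℕ) (hk4 : 4 ≤ k) (hkn : k ≤ n) (h2 : (2:ℕ) ≤ n) :
    (revP n 2 h2 * revP n k hkn) ^ 4 = 1 := by
  ext i
  have hi := i.isLt
  simp only [pow_succ, pow_zero, one_mul]
  simp only [Equiv.Perm.mul_apply, Equiv.Perm.one_apply]
  set x1 := revP n (k) hkn i with hx1
  have e1 := revP_val n (k) hkn i
  set x2 := revP n (2) h2 x1 with hx2
  have e2 := revP_val n (2) h2 x1
  set x3 := revP n (k) hkn x2 with hx3
  have e3 := revP_val n (k) hkn x2
  set x4 := revP n (2) h2 x3 with hx4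
  have e4 := revP_val n (2) h2 x3
  set x5 := revP n (k) hkn x4 with hx5
  have e5 := revP_val n (k) hkn x4
  set x6 := revP n (2) h2 x5 with hx6
  have e6 := revP_val n (2) h2 x5
  set x7 := revP n (k) hkn x6 with hx7
  have e7 := revP_val n (k) hkn x6
  set x8 := revP n (2) h2 x7 with hx8
  have e8 := revP_val n (2) h2 x7
  split_ifs at e1 e2 e3 e4 e5 e6 e7 e8 <;> omega

set_option maxHeartbeats 1000000 in
lemma revP_R4 (n l k : ℕ) (hl4 : 4 ≤ l) (hln : l ≤ n) (hk3 : 3 ≤ k) (hkl : k ≤ l - 1)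
    (h2 : (2:ℕ) ≤ n) (hj : l - k + 2 ≤ n) (hkn : k ≤ n) :
    revP n l hln * revP n (l-k+2) hj * revP n 2 h2 * revP n (l-k+2) hj *
      revP n l hln * revP n k hkn * revP n 2 h2 * revP n k hkn = 1 := by
  ext i
  have hi := i.isLt
  simp only [Equiv.Perm.mul_apply, Equiv.Perm.one_apply]
  set x1 := revP n (k) hkn i with hx1
  have e1 := revP_val n (k) hkn i
  set x2 := revP n (2) h2 x1 with hx2
  have e2 := revP_val n (2) h2 x1
  set x3 := revP n (k) hkn x2 with hx3
  have e3 := revP_val n (k) hkn x2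
  set x4 := revP n (l) hln x3 with hx4
  have e4 := revP_val n (l) hln x3
  set x5 := revP n (l-k+2) hj x4 with hx5
  have e5 := revP_val n (l-k+2) hj x4
  set x6 := revP n (2) h2 x5 with hx6
  have e6 := revP_val n (2) h2 x5
  set x7 := revP n (l-k+2) hj x6 with hx7
  have e7 := revP_val n (l-k+2) hj x6
  set x8 := revP n (l) hln x7 with hx8
  have e8 := revP_val n (l) hln x7
  split_ifs at e1 e2 e3 e4 e5 e6 e7 e8 <;> omega

set_option maxHeartbeats 1000000 in
lemma revP_R5 (n k : ℕ) (hk3 : 3 ≤ k) (hkn1 : k ≤ n - 1) (hn : 2 ≤ n)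
    (ha : k ≤ n) (hb : k - 1 ≤ n) (hc : k + 1 ≤ n) (h2 : (2:ℕ) ≤ n) :
    revP n k ha * revP n (k-1) hb * revP n (k+1) hc * revP n 2 h2 *
      revP n (k+1) hc * revP n k ha * revP n (k+1) hc = 1 := by
  ext i
  have hi := i.isLt
  simp only [Equiv.Perm.mul_apply, Equiv.Perm.one_apply]
  set x1 := revP n (k+1) hc i with hx1
  have e1 := revP_val n (k+1) hc i
  set x2 := revP n (k) ha x1 with hx2
  have e2 := revP_val n (k) ha x1
  set x3 := revP n (k+1) hc x2 with hx3
  have e3 := revP_val n (k+1) hc x2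
  set x4 := revP n (2) h2 x3 with hx4
  have e4 := revP_val n (2) h2 x3
  set x5 := revP n (k+1) hc x4 with hx5
  have e5 := revP_val n (k+1) hc x4
  set x6 := revP n (k-1) hb x5 with hx6
  have e6 := revP_val n (k-1) hb x5
  set x7 := revP n (k) ha x6 with hx7
  have e7 := revP_val n (k) ha x6
  split_ifs at e1 e2 e3 e4 e5 e6 e7 <;> omega

set_option maxHeartbeats 2000000 in
lemma revP_R6 (n k : ℕ) (hk3 : 3 ≤ k) (hkn1 : k ≤ n - 1) (hn : 3 < n)
    (ha : k ≤ n) (hb : k - 1 ≤ n) (hc : k + 1 ≤ n) (h3 : (3:ℕ) ≤ n) :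
    (revP n k ha * revP n (k-1) hb)^2 * revP n (k+1) hc * revP n 3 h3 *
      revP n (k+1) hc * revP n (k-1) hb * revP n (k+1) hc = 1 := by
  ext i
  have hi := i.isLt
  rw [pow_two]
  simp only [Equiv.Perm.mul_apply, Equiv.Perm.one_apply]
  set x1 := revP n (k+1) hc i with hx1
  have e1 := revP_val n (k+1) hc i
  set x2 := revP n (k-1) hb x1 with hx2
  have e2 := revP_val n (k-1) hb x1
  set x3 := revP n (k+1) hc x2 with hx3
  have e3 := revP_val n (k+1) hc x2
  set x4 := revP n (3) h3 x3 with hx4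
  have e4 := revP_val n (3) h3 x3
  set x5 := revP n (k+1) hc x4 with hx5
  have e5 := revP_val n (k+1) hc x4
  set x6 := revP n (k-1) hb x5 with hx6
  have e6 := revP_val n (k-1) hb x5
  set x7 := revP n (k) ha x6 with hx7
  have e7 := revP_val n (k) ha x6
  set x8 := revP n (k-1) hb x7 with hx8
  have e8 := revP_val n (k-1) hb x7
  set x9 := revP n (k) ha x8 with hx9
  have e9 := revP_val n (k) ha x8
  split_ifs at e1 e2 e3 e4 e5 e6 e7 e8 e9 <;> omega

set_option maxHeartbeats 1000000 in
lemma revP_swap (n k : ℕ) (hk2 : 2 ≤ k) (hkn : k ≤ n) (h2 : (2:ℕ) ≤ n) :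
    revP n k hkn * revP n 2 h2 * revP n k hkn =
      Equiv.swap (⟨k-2, by omega⟩ : Fin n) (⟨k-1, by omega⟩ : Fin n) := by
  ext i
  have hi := i.isLt
  simp only [Equiv.Perm.mul_apply, Equiv.swap_apply_def]
  set x1 := revP n k hkn i with hx1
  have e1 := revP_val n k hkn i
  set x2 := revP n 2 h2 x1 with hx2
  have e2 := revP_val n 2 h2 x1
  set x3 := revP n k hkn x2 with hx3
  have e3 := revP_val n k hkn x2
  simp only [Fin.ext_iff, apply_ite (Fin.val)]
  split_ifs at e1 e2 e3 ⊢ <;> omega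



variable {K : Type*} [Group K]

open Subgroup Set
section CoxAbstract
variable {K : Type*} [Group K]

lemma eq_of_mul_eq_one_of_sq {X Y : K} (h1 : X * Y = 1) (h2 : Y * Y = 1) : X = Y := by
  rw [eq_inv_of_mul_eq_one_left h1, inv_eq_of_mul_eq_one_right h2]

lemma flip_pow {a b : K} (m : ℕ) (ha : a * a = 1) (hb : b * b = 1)
    (h : (a * b) ^ m = 1) : (b * a) ^ m = 1 := by
  have : b * a = (a * b)⁻¹ := by
    rw [mul_inv_rev, inv_eq_of_mul_eq_one_right ha, inv_eq_of_mul_eq_one_right hb]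
  rw [this, inv_pow, h, inv_one]

lemma braid_eq {a b : K} (ha : a * a = 1) (hb : b * b = 1)
    (h : (a * b) ^ 3 = 1) : a * b * a = b * a * b := by
  apply eq_of_mul_eq_one_of_sq
  · have : a * b * a * (b * a * b) = (a * b) ^ 3 := by
      simp only [pow_succ, pow_zero, one_mul, mul_assoc]
    rw [this, h]
  · calc b * a * b * (b * a * b) = b * a * (b * b) * (a * b) := by
          simp only [mul_assoc]
    _ = 1 := by
          rw [hb, mul_one, mul_assoc, ← mul_assoc a a b, ha, one_mul, hb]

lemma comm_eq {a b : K} (ha : a * a = 1) (hb : b * b = 1)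
    (h : (a * b) ^ 2 = 1) : a * b = b * a := by
  apply eq_of_mul_eq_one_of_sq
  · calc a * b * (b * a) = a * (b * b) * a := by simp only [mul_assoc]
    _ = 1 := by rw [hb, mul_one, ha]
  · have := flip_pow 2 ha hb h
    simpa [pow_two, mul_assoc] using this

lemma conj_pow_invo {u a : K} (hu : u * u = 1) (m : ℕ) :
    (u * a * u) ^ m = u * a ^ m * u := by
  have hc : ∀ x : K, u * (u * x) = x := by
    intro x; rw [← mul_assoc, hu, one_mul]
  induction m with
  | zero => rw [pow_zero, pow_zero, mul_one, hu]
  | succ m ih =>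
      rw [pow_succ, ih, pow_succ]
      simp only [mul_assoc]
      rw [hc]

/-- `vseq s M d = s (M-d+1) * ⋯ * s M`. -/
def vseq (s : ℕ → K) (M : ℕ) : ℕ → K
  | 0 => 1
  | d + 1 => s (M - d) * vseq s M d

lemma vcomm (s : ℕ → K) (M : ℕ)
    (h3 : ∀ i j, 1 ≤ i → i + 2 ≤ j → j ≤ M → s i * s j = s j * s i) :
    ∀ d i, 1 ≤ i → i + d + 1 ≤ M → s i * vseq s M d = vseq s M d * s i := by
  intro d
  induction d with
  | zero => intro i _ _; simp [vseq]
  | succ d ih =>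
      intro i hi hle
      show s i * (s (M - d) * vseq s M d) = (s (M - d) * vseq s M d) * s i
      rw [← mul_assoc, h3 i (M - d) hi (by omega) (by omega), mul_assoc,
        ih i hi (by omega), mul_assoc]

lemma vshift {s : ℕ → K} {M : ℕ}
    (h2 : ∀ i, 1 ≤ i → i + 1 ≤ M → s i * s (i+1) * s i = s (i+1) * s i * s (i+1))
    (h3 : ∀ i j, 1 ≤ i → i + 2 ≤ j → j ≤ M → s i * s j = s j * s i) :
    ∀ d, d ≤ M → ∀ i, M + 2 ≤ i + d → i ≤ M →
      s i * vseq s M d = vseq s M d * s (i - 1) := by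
  intro d
  induction d using Nat.strong_induction_on with
  | _ d IH =>
      intro hdM i hMd hiM
      obtain ⟨e, rfl⟩ : ∃ e, d = e + 2 := ⟨d - 2, by omega⟩
      obtain ⟨b, hbe⟩ : ∃ b, b = M - e - 1 := ⟨_, rfl⟩
      have hb1 : (1:ℕ) ≤ b := by omega
      have hveq : vseq s M (e+2) = s b * (s (b+1) * vseq s M e) := by
        show s (M - (e+1)) * (s (M - e) * vseq s M e) = _
        rw [show M - (e+1) = b by omega, show M - e = b + 1 by omega]
      have hv1 : vseq s M (e+1) = s (b+1) * vseq s M e := by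
        show s (M - e) * vseq s M e = _
        rw [show M - e = b + 1 by omega]
      rcases eq_or_lt_of_le (show b + 1 ≤ i by omega) with heq | hlt
      · -- i = b + 1, braid case
        rw [hveq, show i - 1 = b by omega, ← heq]
        have hbM : b + 1 ≤ M := by omega
        have hcomm' : s b * vseq s M e = vseq s M e * s b :=
          vcomm s M h3 e b hb1 (by omega)
        calc s (b+1) * (s b * (s (b+1) * vseq s M e))
            = (s (b+1) * s b * s (b+1)) * vseq s M e := by simp only [mul_assoc]
          _ = (s b * s (b+1) * s b) * vseq s M e := by rw [← h2 b hb1 hbM]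
          _ = s b * (s (b+1) * (s b * vseq s M e)) := by simp only [mul_assoc]
          _ = s b * (s (b+1) * (vseq s M e * s b)) := by rw [hcomm']
          _ = s b * (s (b+1) * vseq s M e) * s b := by simp only [mul_assoc]
      · -- i ≥ b + 2
        have hcomm' : s i * s b = s b * s i :=
          (h3 b i hb1 (by omega) hiM).symm
        have hrec : s i * vseq s M (e+1) = vseq s M (e+1) * s (i-1) :=
          IH (e+1) (by omega) (by omega) i (by omega) hiM
        rw [hveq, ← hv1, ← mul_assoc, hcomm', mul_assoc, hrec, mul_assoc]

lemma vabsorb {s : ℕ → K} {M : ℕ}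
    (h1 : ∀ i, 1 ≤ i → i ≤ M → s i * s i = 1)
    (h2 : ∀ i, 1 ≤ i → i + 1 ≤ M → s i * s (i+1) * s i = s (i+1) * s i * s (i+1))
    (h3 : ∀ i j, 1 ≤ i → i + 2 ≤ j → j ≤ M → s i * s j = s j * s i) :
    ∀ d, d ≤ M → ∀ i, 1 ≤ i → i ≤ M →
      ∃ d' c, d' ≤ M ∧ (c = 1 ∨ ∃ j, 1 ≤ j ∧ j + 1 ≤ M ∧ c = s j) ∧
        s i * vseq s M d = vseq s M d' * c := by
  intro d hd i hi1 hiM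
  rcases Nat.lt_or_ge (i + d) M with hc1 | hc1
  · -- commute
    exact ⟨d, s i, hd, Or.inr ⟨i, hi1, by omega, rfl⟩,
      vcomm s M h3 d i hi1 (by omega)⟩
  rcases eq_or_lt_of_le hc1 with heq | hc2
  · -- i + d = M : s i * v d = v (d+1)
    refine ⟨d + 1, 1, by omega, Or.inl rfl, ?_⟩
    rw [mul_one]
    show _ = s (M - d) * vseq s M d
    rw [show M - d = i by omega]
  rcases eq_or_lt_of_le (show M + 1 ≤ i + d by omega) with heq | hc3
  · -- i + d = M + 1 : absorb
    obtain ⟨e, rfl⟩ : ∃ e, d = e + 1 := ⟨d - 1, by omega⟩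
    refine ⟨e, 1, by omega, Or.inl rfl, ?_⟩
    rw [mul_one]
    show s i * (s (M - e) * vseq s M e) = vseq s M e
    rw [show M - e = i by omega, ← mul_assoc, h1 i hi1 hiM, one_mul]
  · -- i + d ≥ M + 2 : shift
    exact ⟨d, s (i-1), hd, Or.inr ⟨i - 1, by omega, by omega, rfl⟩,
      vshift h2 h3 d hd i (by omega) hiM⟩

lemma coxBound (s : ℕ → K) : ∀ N : ℕ,
    (∀ i, 1 ≤ i → i ≤ N → s i * s i = 1) →
    (∀ i, 1 ≤ i → i + 1 ≤ N → s i * s (i+1) * s i = s (i+1) * s i * s (i+1)) →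
    (∀ i j, 1 ≤ i → i + 2 ≤ j → j ≤ N → s i * s j = s j * s i) →
    ((closure (s '' Set.Icc 1 N) : Subgroup K) : Set K).Finite ∧
      ((closure (s '' Set.Icc 1 N) : Subgroup K) : Set K).ncard ≤ (N + 1).factorial := by
  intro N
  induction N with
  | zero =>
      intro _ _ _
      have : s '' Set.Icc 1 0 = (∅ : Set K) := by simp
      rw [this, Subgroup.closure_empty]
      constructor
      · rw [Subgroup.coe_bot]; exact Set.finite_singleton 1
      · rw [Subgroup.coe_bot, Set.ncard_singleton]; exact le_refl 1
  | succ N ih =>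
      intro h1 h2 h3
      set M := N + 1 with hM
      obtain ⟨Hfin, Hcard⟩ := ih (fun i a b => h1 i a (by omega))
        (fun i a b => h2 i a (by omega)) (fun i j a b c => h3 i j a b (by omega))
      classical
      set Hs : Set K := ((closure (s '' Set.Icc 1 N) : Subgroup K) : Set K) with hHs
      set F : Finset K := (Finset.range (M + 1)).biUnion
        (fun d => Hfin.toFinset.image (fun h => vseq s M d * h)) with hF
      have memF : ∀ d ≤ M, ∀ h ∈ Hs, vseq s M d * h ∈ F := by
        intro d hd h hh
        rw [hF]
        refine Finset.mem_biUnion.2 ⟨d, Finset.mem_range.2 (by omega), ?_⟩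
        exact Finset.mem_image.2 ⟨h, Hfin.mem_toFinset.2 hh, rfl⟩
      have memF' : ∀ x ∈ F, ∃ d h, d ≤ M ∧ h ∈ Hs ∧ x = vseq s M d * h := by
        intro x hx
        rw [hF] at hx
        obtain ⟨d, hd, hx⟩ := Finset.mem_biUnion.1 hx
        obtain ⟨h, hh, rfl⟩ := Finset.mem_image.1 hx
        exact ⟨d, h, by have := Finset.mem_range.1 hd; omega, Hfin.mem_toFinset.1 hh, rfl⟩
      have hsub : ((closure (s '' Set.Icc 1 M) : Subgroup K) : Set K) ⊆ ↑F := by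
        intro x hx
        have hx' : x ∈ Submonoid.closure ((s '' Set.Icc 1 M) ∪ (s '' Set.Icc 1 M)⁻¹) := by
          rw [← Subgroup.closure_toSubmonoid]
          exact hx
        obtain ⟨l, hl, rfl⟩ := Submonoid.exists_list_of_mem_closure hx'
        clear hx hx'
        induction l with
        | nil =>
            simp only [List.prod_nil]
            have : (1 : K) = vseq s M 0 * 1 := by simp [vseq]
            rw [this]
            exact memF 0 (by omega) 1 (one_mem _)
        | cons a l ihl =>
            have hl' : ∀ y ∈ l, y ∈ (s '' Set.Icc 1 M) ∪ (s '' Set.Icc 1 M)⁻¹ :=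
              fun y hy => hl y (List.mem_cons_of_mem _ hy)
            obtain ⟨d, h, hd, hh, heq⟩ := memF' _ (ihl hl')
            have ha : ∃ i, 1 ≤ i ∧ i ≤ M ∧ a = s i := by
              rcases hl a List.mem_cons_self with hmem | hmem
              · obtain ⟨i, hi, rfl⟩ := hmem
                exact ⟨i, hi.1, hi.2, rfl⟩
              · rw [Set.mem_inv] at hmem
                obtain ⟨i, hi, hieq⟩ := hmem
                refine ⟨i, hi.1, hi.2, ?_⟩
                have := congrArg (·⁻¹) hieq
                simp only [inv_inv] at this
                rw [← this, inv_eq_of_mul_eq_one_right (h1 i hi.1 hi.2)]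
            obtain ⟨i, hi1, hiM, rfl⟩ := ha
            obtain ⟨d', c, hd', hc, habs⟩ := vabsorb h1 h2 h3 d hd i hi1 hiM
            have hch : c * h ∈ Hs := by
              have hcH : c ∈ Hs := by
                rcases hc with rfl | ⟨j, hj1, hjM, rfl⟩
                · exact one_mem _
                · exact subset_closure ⟨j, ⟨hj1, by omega⟩, rfl⟩
              exact mul_mem hcH hh
            rw [List.prod_cons, heq, ← mul_assoc, habs, mul_assoc]
            exact memF d' hd' (c * h) hch
      constructor
      · exact Set.Finite.subset F.finite_toSet hsub
      · have hle1 : ((closure (s '' Set.Icc 1 M) : Subgroup K) : Set K).ncard ≤ F.card := by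
          have := Set.ncard_le_ncard hsub F.finite_toSet
          rwa [Set.ncard_coe_finset] at this
        have hle2 : F.card ≤ (M + 1) * N.factorial * (N + 1) := by
          calc F.card ≤ ∑ d ∈ Finset.range (M+1),
              (Hfin.toFinset.image (fun h => vseq s M d * h)).card :=
                Finset.card_biUnion_le
            _ ≤ ∑ _d ∈ Finset.range (M+1), Hfin.toFinset.card := by
                refine Finset.sum_le_sum fun d _ => Finset.card_image_le
            _ = (M + 1) * Hfin.toFinset.card := by
                rw [Finset.sum_const, Finset.card_range, smul_eq_mul]
            _ ≤ (M + 1) * (N + 1).factorial := by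
                have : Hfin.toFinset.card = Hs.ncard := (Set.ncard_eq_toFinset_card _ Hfin).symm
                rw [this]
                exact Nat.mul_le_mul_left _ Hcard
            _ = (M + 1) * N.factorial * (N + 1) := by
                rw [Nat.factorial_succ]; ring
        calc ((closure (s '' Set.Icc 1 M) : Subgroup K) : Set K).ncard ≤ F.card := hle1
          _ ≤ (M + 1) * N.factorial * (N + 1) := hle2
          _ = (N + 1 + 1).factorial := by
              rw [hM, Nat.factorial_succ (N+1), Nat.factorial_succ N]
              ring

lemma coxCard (s : ℕ → K) (N : ℕ)
    (h1 : ∀ i, 1 ≤ i → i ≤ N → s i * s i = 1)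
    (h2 : ∀ i, 1 ≤ i → i + 1 ≤ N → s i * s (i+1) * s i = s (i+1) * s i * s (i+1))
    (h3 : ∀ i j, 1 ≤ i → i + 2 ≤ j → j ≤ N → s i * s j = s j * s i)
    (htop : closure (s '' Set.Icc 1 N) = ⊤) :
    Finite K ∧ Nat.card K ≤ (N + 1).factorial := by
  obtain ⟨hfin, hcard⟩ := coxBound s N h1 h2 h3
  rw [htop] at hfin hcard
  simp only [Subgroup.coe_top] at hfin hcard
  constructor
  · exact Set.finite_univ_iff.1 hfin
  · rwa [Set.ncard_univ] at hcard



end CoxAbstract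

lemma eq_of_mul_eq_one_of_sq' {K : Type*} [Group K] {X Y : K} (h1 : X * Y = 1) (h2 : Y * Y = 1) : X = Y := by
  rw [eq_inv_of_mul_eq_one_left h1, inv_eq_of_mul_eq_one_right h2]

lemma flip_pow' {K : Type*} [Group K] {a b : K} (m : ℕ) (ha : a * a = 1) (hb : b * b = 1)
    (h : (a * b) ^ m = 1) : (b * a) ^ m = 1 := by
  have : b * a = (a * b)⁻¹ := by
    rw [mul_inv_rev, inv_eq_of_mul_eq_one_right ha, inv_eq_of_mul_eq_one_right hb]
  rw [this, inv_pow, h, inv_one]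

section G
variable (n : ℕ)

/-- image of `r_k` in the presented group -/
def gG (k : ℕ) : PresentedGroup (relsA n) := PresentedGroup.mk (relsA n) (rA n k)

/-- `t_k = r_k r_2 r_k`; in `S_n` this is the transposition `(k-1, k)`. -/
def tG (k : ℕ) : PresentedGroup (relsA n) := gG n k * gG n 2 * gG n k

/-- `WG j = t_2 t_3 ⋯ t_(j+1)` -/
def WG : ℕ → PresentedGroup (relsA n)
  | 0 => 1
  | j + 1 => WG j * tG n (j + 2)

lemma relsA_one {w : FreeGroup (GenA n)} (hw : w ∈ relsA n) :
    PresentedGroup.mk (relsA n) w = 1 :=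
  (QuotientGroup.eq_one_iff _).mpr (Subgroup.subset_normalClosure hw)

variable {n}
variable (hn : 3 < n)

section rels
include hn

lemma hg2 (k : ℕ) (h1 : 2 ≤ k) (h2 : k ≤ n) : gG n k * gG n k = 1 := by
  have := relsA_one n (Or.inl ⟨k, h1, h2, rfl⟩)
  rwa [map_pow, pow_two] at this

lemma hR2 : (gG n 2 * gG n 3) ^ 3 = 1 := by
  have := relsA_one n (Or.inr (Or.inl rfl))
  rwa [map_pow, map_mul] at this

lemma hR3 (k : ℕ) (h1 : 4 ≤ k) (h2 : k ≤ n) : (gG n 2 * gG n k) ^ 4 = 1 := by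
  have := relsA_one n (Or.inr (Or.inr (Or.inl ⟨k, h1, h2, rfl⟩)))
  rwa [map_pow, map_mul] at this

lemma hR4 (l k : ℕ) (h1 : 4 ≤ l) (h2 : l ≤ n) (h3 : 3 ≤ k) (h4 : k ≤ l - 1) :
    gG n l * gG n (l - k + 2) * gG n 2 * gG n (l - k + 2) *
      gG n l * gG n k * gG n 2 * gG n k = 1 := by
  have := relsA_one n (Or.inr (Or.inr (Or.inr (Or.inl ⟨l, k, h1, h2, h3, h4, rfl⟩))))
  simp only [map_mul] at this; exact this

lemma hR5 (k : ℕ) (h1 : 3 ≤ k) (h2 : k ≤ n - 1) :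
    gG n k * gG n (k - 1) * gG n (k + 1) * gG n 2 *
      gG n (k + 1) * gG n k * gG n (k + 1) = 1 := by
  have := relsA_one n (Or.inr (Or.inr (Or.inr (Or.inr (Or.inl ⟨k, h1, h2, rfl⟩)))))
  simp only [map_mul] at this; exact this

lemma gcan (k : ℕ) (h1 : 2 ≤ k) (h2 : k ≤ n) :
    ∀ x : PresentedGroup (relsA n), gG n k * (gG n k * x) = x := by
  intro x; rw [← mul_assoc, hg2 hn k h1 h2, one_mul]

lemma tsq (k : ℕ) (h1 : 2 ≤ k) (h2 : k ≤ n) : tG n k * tG n k = 1 := by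
  have h2n : (2:ℕ) ≤ n := by omega
  show gG n k * gG n 2 * gG n k * (gG n k * gG n 2 * gG n k) = 1
  simp only [mul_assoc, gcan hn k h1 h2, gcan hn 2 le_rfl h2n]
  exact hg2 hn k h1 h2

lemma t2eq : tG n 2 = gG n 2 := by
  show gG n 2 * gG n 2 * gG n 2 = gG n 2
  rw [hg2 hn 2 le_rfl (by omega), one_mul]

lemma hconj (l j : ℕ) (hl1 : 3 ≤ l) (hl2 : l ≤ n) (hj1 : 2 ≤ j) (hj2 : j ≤ l) :
    gG n l * tG n j * gG n l = tG n (l - j + 2) := by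
  have h2n : (2:ℕ) ≤ n := by omega
  rcases eq_or_lt_of_le hj1 with rfl | hj3
  · rw [t2eq hn, show l - 2 + 2 = l by omega]; rfl
  rcases eq_or_lt_of_le hj2 with rfl | hj4
  · rw [show j - j + 2 = 2 by omega, t2eq hn]
    show gG n j * (gG n j * gG n 2 * gG n j) * gG n j = gG n 2
    simp only [mul_assoc, gcan hn j (by omega) hl2]
    rw [hg2 hn j (by omega) hl2, mul_one]
  · -- 3 ≤ j ≤ l - 1, so l ≥ 4
    have hl4 : 4 ≤ l := by omega
    have hm : l - (l - j + 2) + 2 = j := by omega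
    have R := hR4 hn l (l - j + 2) hl4 hl2 (by omega) (by omega)
    rw [hm] at R
    apply eq_of_mul_eq_one_of_sq'
    · show gG n l * tG n j * gG n l * (tG n (l - j + 2)) = 1
      show gG n l * (gG n j * gG n 2 * gG n j) * gG n l *
        (gG n (l-j+2) * gG n 2 * gG n (l-j+2)) = 1
      simp only [mul_assoc] at R ⊢
      exact R
    · exact tsq hn (l - j + 2) (by omega) (by omega)

lemma ginv (k : ℕ) (h1 : 2 ≤ k) (h2 : k ≤ n) : (gG n k)⁻¹ = gG n k :=
  inv_eq_of_mul_eq_one_right (hg2 hn k h1 h2)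

lemma tinv (k : ℕ) (h1 : 2 ≤ k) (h2 : k ≤ n) : (tG n k)⁻¹ = tG n k :=
  inv_eq_of_mul_eq_one_right (tsq hn k h1 h2)

lemma conj_pow_g (l : ℕ) (h1 : 2 ≤ l) (h2 : l ≤ n) (a : PresentedGroup (relsA n)) (m : ℕ) :
    (gG n l * a * gG n l) ^ m = gG n l * a ^ m * gG n l := by
  have hc := gcan hn l h1 h2
  induction m with
  | zero => rw [pow_zero, pow_zero, mul_one, hg2 hn l h1 h2]
  | succ m ih =>
      rw [pow_succ, ih, pow_succ]
      simp only [mul_assoc]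
      rw [hc]

lemma t23 : tG n 2 * tG n 3 = (gG n 2 * gG n 3) ^ 2 := by
  rw [t2eq hn]
  show gG n 2 * (gG n 3 * gG n 2 * gG n 3) = _
  rw [pow_two]
  simp only [mul_assoc]

lemma hbraid23 : (tG n 2 * tG n 3) ^ 3 = 1 := by
  rw [t23 hn, ← pow_mul]
  rw [show 2 * 3 = 3 * 2 by norm_num, pow_mul, hR2 hn, one_pow]

lemma hbraid (k : ℕ) (h1 : 2 ≤ k) (h2 : k + 1 ≤ n) : (tG n k * tG n (k + 1)) ^ 3 = 1 := by
  rcases eq_or_lt_of_le h1 with rfl | h3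
  · exact hbraid23 hn
  · -- k ≥ 3
    have hl2 : k + 1 ≤ n := h2
    have hc3 : gG n (k+1) * tG n 3 * gG n (k+1) = tG n k := by
      have := hconj hn (k+1) 3 (by omega) hl2 (by omega) (by omega)
      rwa [show k + 1 - 3 + 2 = k by omega] at this
    have hc2 : gG n (k+1) * tG n 2 * gG n (k+1) = tG n (k+1) := by
      have := hconj hn (k+1) 2 (by omega) hl2 le_rfl (by omega)
      rwa [show k + 1 - 2 + 2 = k + 1 by omega] at this
    have hmid : tG n k * tG n (k+1) = gG n (k+1) * (tG n 3 * tG n 2) * gG n (k+1) := by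
      rw [← hc3, ← hc2]
      simp only [mul_assoc]
      rw [gcan hn (k+1) (by omega) hl2]
    rw [hmid, conj_pow_g hn (k+1) (by omega) hl2]
    have h32 : (tG n 3 * tG n 2) ^ 3 = 1 :=
      flip_pow' 3 (tsq hn 2 le_rfl (by omega)) (tsq hn 3 (by omega) (by omega)) (hbraid23 hn)
    rw [h32, mul_one, hg2 hn (k+1) (by omega) hl2]

lemma hcomm2 (k : ℕ) (h1 : 4 ≤ k) (h2 : k ≤ n) : (tG n 2 * tG n k) ^ 2 = 1 := by
  have : tG n 2 * tG n k = (gG n 2 * gG n k) ^ 2 := by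
    rw [t2eq hn]
    show gG n 2 * (gG n k * gG n 2 * gG n k) = _
    rw [pow_two]; simp only [mul_assoc]
  rw [this, ← pow_mul, show 2 * 2 = 4 by norm_num, hR3 hn k h1 h2]

lemma hcomm (j k : ℕ) (h1 : 2 ≤ j) (h2 : j + 2 ≤ k) (h3 : k ≤ n) :
    (tG n j * tG n k) ^ 2 = 1 := by
  rcases eq_or_lt_of_le h1 with rfl | h4
  · exact hcomm2 hn k (by omega) h3
  · -- j ≥ 3, k ≥ 5
    have hm : 4 ≤ k - j + 2 := by omega
    have hmn : k - j + 2 ≤ n := by omega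
    have cj : gG n k * tG n j * gG n k = tG n (k - j + 2) :=
      hconj hn k j (by omega) h3 (by omega) (by omega)
    have cjj : tG n j = gG n k * tG n (k - j + 2) * gG n k := by
      rw [← cj]
      simp only [mul_assoc, gcan hn k (by omega) h3]
      rw [hg2 hn k (by omega) h3, mul_one]
    have ck : tG n k = gG n k * tG n 2 * gG n k := by
      rw [t2eq hn]; rfl
    have hmid : tG n j * tG n k = gG n k * (tG n (k-j+2) * tG n 2) * gG n k := by
      rw [cjj, ck]
      simp only [mul_assoc]
      rw [gcan hn k (by omega) h3]
    rw [hmid, conj_pow_g hn k (by omega) h3]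
    have hm2 : (tG n (k-j+2) * tG n 2) ^ 2 = 1 :=
      flip_pow' 2 (tsq hn 2 le_rfl (by omega)) (tsq hn (k-j+2) (by omega) hmn)
        (hcomm2 hn (k-j+2) hm hmn)
    rw [hm2, mul_one, hg2 hn k (by omega) h3]

lemma hW : ∀ m, 3 ≤ m → (m ≤ n → gG n m * gG n (m - 1) = WG n (m - 1)) := by
  intro m hm
  induction m, hm using Nat.le_induction with
  | base =>
      intro h3n
      show gG n 3 * gG n 2 = WG n 2
      have hw2 : WG n 2 = tG n 2 * tG n 3 := by
        show WG n 1 * tG n 3 = _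
        rw [show WG n 1 = 1 * tG n 2 from rfl, one_mul]
      have h6 : (gG n 2 * gG n 3) ^ 2 * (gG n 2 * gG n 3) = 1 := by
        rw [← pow_succ]; exact hR2 hn
      have hsq : (gG n 2 * gG n 3) ^ 2 = (gG n 2 * gG n 3)⁻¹ :=
        eq_inv_of_mul_eq_one_left h6
      rw [hw2, t23 hn, hsq, mul_inv_rev, ginv hn 2 le_rfl (by omega),
        ginv hn 3 (by omega) (by omega)]
  | succ m hm ih =>
      intro hmn
      obtain ⟨p, rfl⟩ : ∃ p, m = p + 1 := ⟨m - 1, by omega⟩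
      have hp2 : 2 ≤ p := by omega
      simp only [Nat.add_sub_cancel] at ih ⊢
      have ih' : gG n (p+1) * gG n p = WG n p := ih (by omega)
      have R := hR5 hn (p+1) (by omega) (by omega)
      rw [show p + 1 - 1 = p by omega] at R
      have hXY : (gG n (p+1) * gG n p * tG n (p+2)) * (gG n (p+1) * gG n (p+2)) = 1 := by
        show gG n (p+1) * gG n p * (gG n (p+2) * gG n 2 * gG n (p+2)) *
          (gG n (p+1) * gG n (p+2)) = 1
        simp only [mul_assoc] at R ⊢
        exact R
      have hY : (gG n (p+1) * gG n (p+2))⁻¹ = gG n (p+2) * gG n (p+1) := by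
        rw [mul_inv_rev, ginv hn (p+1) (by omega) (by omega),
          ginv hn (p+2) (by omega) (by omega)]
      calc gG n (p+1+1) * gG n (p+1)
          = (gG n (p+1) * gG n (p+2))⁻¹ := by
            rw [hY, show p+1+1 = p+2 from rfl]
        _ = gG n (p+1) * gG n p * tG n (p+2) :=
            (eq_inv_of_mul_eq_one_left hXY).symm
        _ = WG n p * tG n (p+2) := by rw [ih']
        _ = WG n (p+1) := rfl

lemma tmem (k : ℕ) (h1 : 2 ≤ k) (h2 : k ≤ n) :
    tG n k ∈ Subgroup.closure ((fun i => tG n (i+1)) '' Set.Icc 1 (n-1)) :=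
  Subgroup.subset_closure ⟨k - 1, ⟨by omega, by omega⟩, by show tG n (k - 1 + 1) = tG n k; rw [show k - 1 + 1 = k by omega]⟩

lemma Wmem : ∀ j, j ≤ n - 1 →
    WG n j ∈ Subgroup.closure ((fun i => tG n (i+1)) '' Set.Icc 1 (n-1)) := by
  intro j
  induction j with
  | zero => intro _; exact one_mem _
  | succ j ih =>
      intro hj
      exact mul_mem (ih (by omega)) (tmem hn (j+2) (by omega) (by omega))

lemma gmem : ∀ k, 2 ≤ k → (k ≤ n →
    gG n k ∈ Subgroup.closure ((fun i => tG n (i+1)) '' Set.Icc 1 (n-1))) := by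
  intro k hk
  induction k, hk using Nat.le_induction with
  | base =>
      intro _
      rw [← t2eq hn]
      exact tmem hn 2 le_rfl (by omega)
  | succ k hk ih =>
      intro hkn
      have hWk : gG n (k+1) * gG n k = WG n k := by
        have := hW hn (k+1) (by omega) hkn
        rwa [show k + 1 - 1 = k by omega] at this
      have h1 : gG n (k+1) = WG n k * gG n k := by
        rw [← hWk, mul_assoc, hg2 hn k (by omega) (by omega), mul_one]
      rw [h1]
      exact mul_mem (Wmem hn k (by omega)) (ih (by omega))

lemma htopG : Subgroup.closure ((fun i => tG n (i+1)) '' Set.Icc 1 (n-1)) = ⊤ := by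
  rw [eq_top_iff]
  rintro x -
  refine PresentedGroup.generated_by _ _ (fun j => ?_) x
  obtain ⟨k, hk⟩ := j
  have : (PresentedGroup.of ⟨k, hk⟩ : PresentedGroup (relsA n)) = gG n k := by
    show _ = PresentedGroup.mk (relsA n) (rA n k)
    rw [rA, dif_pos hk]
    rfl
  rw [this]
  exact gmem hn k hk.1 hk.2

end rels
end G

end PancakeAux

open PancakeAux in
theorem stmt0 (n : ℕ) (hn : 3 < n) :
    Nonempty (PresentedGroup (relsA n) ≃* Equiv.Perm (Fin n)) := by
  classical
  obtain ⟨m, rfl⟩ : ∃ m, n = m + 1 := ⟨n - 1, by omega⟩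
  have hm : 3 ≤ m := by omega
  let f : GenA (m+1) → Equiv.Perm (Fin (m+1)) := fun x => revP (m+1) x.1 x.2.2
  have hlift : ∀ (k : ℕ) (h1 : 2 ≤ k) (h2 : k ≤ m+1),
      FreeGroup.lift f (rA (m+1) k) = revP (m+1) k h2 := by
    intro k h1 h2
    rw [rA, dif_pos ⟨h1, h2⟩]
    exact FreeGroup.lift_apply_of
  have hrels : ∀ r ∈ relsA (m+1), FreeGroup.lift f r = 1 := by
    rintro r (⟨k, h1, h2, rfl⟩ | rfl | ⟨k, h1, h2, rfl⟩ | ⟨l, k, h1, h2, h3, h4, rfl⟩ |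
      ⟨k, h1, h2, rfl⟩ | ⟨k, h1, h2, rfl⟩)
    · rw [map_pow, hlift k h1 h2, pow_two]
      exact revP_sq _ _ _
    · rw [map_pow, map_mul, hlift 2 le_rfl (by omega), hlift 3 (by omega) (by omega)]
      exact revP_R2 _ _ _
    · rw [map_pow, map_mul, hlift 2 le_rfl (by omega), hlift k (by omega) h2]
      exact revP_R3 _ _ h1 _ _
    · simp only [map_mul]
      rw [hlift l (by omega) h2, hlift (l-k+2) (by omega) (by omega),
        hlift 2 le_rfl (by omega), hlift k (by omega) (by omega)]
      exact revP_R4 _ _ _ h1 _ h3 h4 _ _ _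
    · simp only [map_mul]
      rw [hlift k (by omega) (by omega), hlift (k-1) (by omega) (by omega),
        hlift (k+1) (by omega) (by omega), hlift 2 le_rfl (by omega)]
      exact revP_R5 _ _ h1 h2 (by omega) _ _ _ _
    · simp only [map_mul, map_pow]
      rw [hlift k (by omega) (by omega), hlift (k-1) (by omega) (by omega),
        hlift (k+1) (by omega) (by omega), hlift 3 (by omega) (by omega)]
      exact revP_R6 _ _ h1 h2 hn _ _ _ _
  let φ : PresentedGroup (relsA (m+1)) →* Equiv.Perm (Fin (m+1)) :=
    PresentedGroup.toGroup hrels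
  have hφg : ∀ (k : ℕ) (h1 : 2 ≤ k) (h2 : k ≤ m+1),
      φ (gG (m+1) k) = revP (m+1) k h2 := by
    intro k h1 h2
    have : φ (gG (m+1) k) = FreeGroup.lift f (rA (m+1) k) := rfl
    rw [this, hlift k h1 h2]
  have hrange : ∀ i : Fin m, Equiv.swap i.castSucc i.succ ∈ φ.range := by
    intro i
    refine ⟨tG (m+1) ((i:ℕ)+2), ?_⟩
    have h2i : 2 ≤ (i:ℕ)+2 := by omega
    have hi2 : (i:ℕ)+2 ≤ m+1 := by omega
    have hφt : φ (tG (m+1) ((i:ℕ)+2)) =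
        revP (m+1) ((i:ℕ)+2) hi2 * revP (m+1) 2 (by omega) * revP (m+1) ((i:ℕ)+2) hi2 := by
      show φ (gG (m+1) ((i:ℕ)+2) * gG (m+1) 2 * gG (m+1) ((i:ℕ)+2)) = _
      rw [map_mul, map_mul, hφg _ h2i hi2, hφg 2 le_rfl (by omega)]
    rw [hφt, revP_swap _ _ h2i hi2 (by omega)]
    congr 1
  have hsurj : Function.Surjective φ := by
    have hle : (⊤ : Submonoid (Equiv.Perm (Fin (m+1)))) ≤ (φ.range).toSubmonoid := by
      rw [← Equiv.Perm.mclosure_swap_castSucc_succ m]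
      exact Submonoid.closure_le.2 (by rintro x ⟨i, rfl⟩; exact hrange i)
    intro x
    exact hle (Submonoid.mem_top x)
  have htop : Subgroup.closure ((fun i => tG (m+1) (i+1)) '' Set.Icc 1 m) = ⊤ := by
    have := htopG hn
    rwa [show m + 1 - 1 = m by omega] at this
  have hcox := coxCard (K := PresentedGroup (relsA (m+1))) (fun i => tG (m+1) (i+1)) m
    (fun i a b => tsq hn (i+1) (by omega) (by omega))
    (fun i a b => braid_eq (tsq hn (i+1) (by omega) (by omega))
      (tsq hn (i+1+1) (by omega) (by omega)) (hbraid hn (i+1) (by omega) (by omega)))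
    (fun i j a b c => comm_eq (tsq hn (i+1) (by omega) (by omega))
      (tsq hn (j+1) (by omega) (by omega)) (hcomm hn (i+1) (j+1) (by omega) (by omega) (by omega)))
    htop
  obtain ⟨hfin, hcard⟩ := hcox
  haveI : Finite (PresentedGroup (relsA (m+1))) := hfin
  have hcardP : Nat.card (Equiv.Perm (Fin (m+1))) = (m+1).factorial := by
    rw [Nat.card_eq_fintype_card, Fintype.card_perm, Fintype.card_fin]
  have hb : Function.Bijective φ := by
    apply hsurj.bijective_of_nat_card_le
    rw [hcardP]
    exact hcard
  exact ⟨MulEquiv.ofBijective φ hb⟩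
end

section
/- Let n > 3. The group presented by generators r_1, r_2, …, r_n subject to the relators (Rb1)–(Rb8) is isomorphic to the Coxeter group of type B_n (the hyperoctahedral group of signed permutations of degree n), i.e. the group with generators s_0, s_1, …, s_{n-1} and relators s_i^2 for i ∈ [0,n-1], (s_0 s_1)^4, (s_i s_{i+1})^3 for i ∈ [1,n-2], and (s_i s_j)^2 for i ∈ [0,n-3] and j ∈ [i+2,n-1]. -/
/-- Generator indices `r_1, …, r_n` for the prefix-reversal presentation of `B_n`. -/
def GenB (n : ℕ) : Type := {k : ℕ // 1 ≤ k ∧ k ≤ n}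

/-- The generator `r_k` as an element of the free group (equal to `1` out of range;
all occurrences in the relators below are in range). -/
def rB (n : ℕ) (k : ℕ) : FreeGroup (GenB n) :=
  if h : 1 ≤ k ∧ k ≤ n then FreeGroup.of ⟨k, h⟩ else 1

/-- The relators (Rb1)–(Rb8). -/
def relsB (n : ℕ) : Set (FreeGroup (GenB n)) :=
  {w | (∃ k, 1 ≤ k ∧ k ≤ n ∧ w = (rB n k) ^ 2) ∨
       (w = (rB n 2 * rB n 3) ^ 6) ∨
       (∃ k, 2 ≤ k ∧ k ≤ n ∧ w = (rB n 1 * rB n k) ^ 4) ∨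
       (∃ k, 4 ≤ k ∧ k ≤ n ∧ w = (rB n 1 * rB n 2 * rB n 1 * rB n k) ^ 4) ∨
       (∃ k, 3 ≤ k ∧ k ≤ n ∧ w = (rB n k * rB n 1 * rB n k * rB n 2) ^ 2) ∨
       (∃ k, 2 ≤ k ∧ k ≤ n - 1 ∧
         w = rB n k * rB n 1 * rB n 2 * rB n 1 * rB n k * rB n (k + 1) *
             rB n 2 * rB n 3 * rB n 2 * rB n 1 * rB n (k + 1)) ∨
       (∃ k, 2 ≤ k ∧ k ≤ n - 1 ∧
         w = rB n (k + 1) * rB n 1 * rB n 2 * rB n 1 * rB n (k + 1) *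
             rB n (k - 1) * rB n k * rB n (k + 1) * rB n k) ∨
       (∃ k l, 2 ≤ k ∧ k ≤ n - 2 ∧ k + 2 ≤ l ∧ l ≤ n ∧
         w = rB n k * rB n 1 * rB n 2 * rB n 1 * rB n k * rB n l *
             rB n (l - k + 2) * rB n 1 * rB n 2 * rB n 1 * rB n (l - k + 2) * rB n l)}

/-- Generator indices `s_0, …, s_{n-1}` for the Coxeter presentation of `B_n`. -/
def CoxGenB (n : ℕ) : Type := {i : ℕ // i ≤ n - 1}

/-- The generator `s_i` as an element of the free group. -/
def sB (n : ℕ) (i : ℕ) : FreeGroup (CoxGenB n) :=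
  if h : i ≤ n - 1 then FreeGroup.of ⟨i, h⟩ else 1

/-- The type `B_n` Coxeter relators. -/
def coxRelsB (n : ℕ) : Set (FreeGroup (CoxGenB n)) :=
  {w | (∃ i, i ≤ n - 1 ∧ w = (sB n i) ^ 2) ∨
       (w = (sB n 0 * sB n 1) ^ 4) ∨
       (∃ i, 1 ≤ i ∧ i ≤ n - 2 ∧ w = (sB n i * sB n (i + 1)) ^ 3) ∨
       (∃ i j, i ≤ n - 3 ∧ i + 2 ≤ j ∧ j ≤ n - 1 ∧ w = (sB n i * sB n j) ^ 2)}


namespace BnPf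


variable {G : Type*} {H : Type*} [Group G] [Group H]

lemma inv_self {x : G} (h : x * x = 1) : x⁻¹ = x :=
  inv_eq_of_mul_eq_one_right h

lemma pow_swap (m : ℕ) {x y : G} (hx : x * x = 1) (hy : y * y = 1)
    (h : (x * y) ^ (2 * m) = 1) : (x * y) ^ m = (y * x) ^ m := by
  have h2 : (x * y) ^ m * (x * y) ^ m = 1 := by
    rw [← pow_add] at *
    simpa [two_mul] using h
  calc (x * y) ^ m = ((x * y) ^ m)⁻¹ := (inv_self h2).symm
    _ = ((x * y)⁻¹) ^ m := by rw [inv_pow]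
    _ = (y * x) ^ m := by rw [mul_inv_rev, inv_self hx, inv_self hy]

lemma two_comm {x y : G} (hx : x * x = 1) (hy : y * y = 1)
    (h : (x * y) ^ 2 = 1) : x * y = y * x := by
  have := pow_swap 1 hx hy (by simpa using h)
  simpa using this

lemma four_comm {x y : G} (hx : x * x = 1) (hy : y * y = 1)
    (h : (x * y) ^ 4 = 1) : x * y * (x * y) = y * x * (y * x) := by
  have := pow_swap 2 hx hy (by simpa using h)
  simpa [pow_two, mul_assoc] using this

lemma braid_of_cube {x y : G} (hy : y * y = 1)
    (h : (x * y) ^ 3 = 1) : x * y * x = y⁻¹ * x⁻¹ * y⁻¹ := by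
  have h' : (x * y) * ((x * y) * (x * y)) = 1 := by
    simpa [pow_succ, mul_assoc] using h
  have : (x * y * x) * (y * (x * y)) = 1 := by
    simpa [mul_assoc] using h'
  have h2 := inv_eq_of_mul_eq_one_right this
  rw [← inv_inv (x * y * x), h2]
  simp [mul_assoc]

/-- `Pw s k = s 0 * s 1 * ⋯ * s k`. -/
def Pw (s : ℕ → G) : ℕ → G
  | 0 => s 0
  | k + 1 => Pw s k * s (k + 1)

/-- `Rw s k = P_{k-1} * P_{k-2} * ⋯ * P_0`. -/
def Rw (s : ℕ → G) : ℕ → G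
  | 0 => 1
  | k + 1 => Pw s k * Rw s k

/-- `Qw s k = s k * ⋯ * s 1 * s 0`. -/
def Qw (s : ℕ → G) : ℕ → G
  | 0 => s 0
  | k + 1 => s (k + 1) * Qw s k

/-- `epsw s m = ε_{m+1}`, the sign change in coordinate `m+1`. -/
def epsw (s : ℕ → G) : ℕ → G
  | 0 => s 0
  | m + 1 => s (m + 1) * epsw s m * s (m + 1)

@[simp] lemma Pw_zero (s : ℕ → G) : Pw s 0 = s 0 := rfl
@[simp] lemma Pw_succ (s : ℕ → G) (k : ℕ) : Pw s (k + 1) = Pw s k * s (k + 1) := rfl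
@[simp] lemma Rw_zero (s : ℕ → G) : Rw s 0 = 1 := rfl
@[simp] lemma Rw_succ (s : ℕ → G) (k : ℕ) : Rw s (k + 1) = Pw s k * Rw s k := rfl
@[simp] lemma Qw_zero (s : ℕ → G) : Qw s 0 = s 0 := rfl
@[simp] lemma Qw_succ (s : ℕ → G) (k : ℕ) : Qw s (k + 1) = s (k + 1) * Qw s k := rfl
@[simp] lemma epsw_zero (s : ℕ → G) : epsw s 0 = s 0 := rfl
@[simp] lemma epsw_succ (s : ℕ → G) (m : ℕ) :
    epsw s (m + 1) = s (m + 1) * epsw s m * s (m + 1) := rfl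

lemma map_Pw (f : G →* H) (s : ℕ → G) (k : ℕ) : f (Pw s k) = Pw (fun i => f (s i)) k := by
  induction k with
  | zero => rfl
  | succ k ih => simp [ih]

lemma map_Rw (f : G →* H) (s : ℕ → G) (k : ℕ) : f (Rw s k) = Rw (fun i => f (s i)) k := by
  induction k with
  | zero => simp
  | succ k ih => simp [ih, map_Pw]

lemma Pw_congr {s s' : ℕ → G} (k : ℕ) (h : ∀ i ≤ k, s i = s' i) : Pw s k = Pw s' k := by
  induction k with
  | zero => simpa using h 0 (by omega)
  | succ k ih => simp [ih (fun i hi => h i (by omega)), h (k+1) le_rfl]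

lemma Rw_congr {s s' : ℕ → G} (k : ℕ) (h : ∀ i < k, s i = s' i) : Rw s k = Rw s' k := by
  induction k with
  | zero => rfl
  | succ k ih =>
    simp [ih (fun i hi => h i (by omega)), Pw_congr k (fun i hi => h i (by omega))]


/-! ### Direction A: in a group with Coxeter-B relations, the reversal words satisfy Rb1–Rb8 -/

structure CoxHyp (s : ℕ → G) (n : ℕ) : Prop where
  sq : ∀ i, i ≤ n - 1 → s i * s i = 1
  h01 : s 0 * s 1 * s 0 * s 1 = s 1 * s 0 * s 1 * s 0
  br : ∀ i, 1 ≤ i → i + 1 ≤ n - 1 → s i * s (i + 1) * s i = s (i + 1) * s i * s (i + 1)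
  cm : ∀ i j, i + 2 ≤ j → j ≤ n - 1 → s i * s j = s j * s i

namespace CoxHyp

variable {s : ℕ → G} {n : ℕ}

lemma csP (h : CoxHyp s n) (k j : ℕ) (hkj : k + 2 ≤ j) (hj : j ≤ n - 1) :
    s j * Pw s k = Pw s k * s j := by
  induction k with
  | zero => exact (h.cm 0 j (by omega) hj).symm
  | succ k ih =>
    calc s j * Pw s (k + 1) = s j * Pw s k * s (k + 1) := by rw [Pw_succ, mul_assoc]
      _ = Pw s k * s j * s (k + 1) := by rw [ih (by omega)]
      _ = Pw s k * (s (k + 1) * s j) := by rw [mul_assoc, ← h.cm (k + 1) j (by omega) hj]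
      _ = Pw s (k + 1) * s j := by rw [Pw_succ]; group

lemma csR (h : CoxHyp s n) (k j : ℕ) (hkj : k + 1 ≤ j) (hj : j ≤ n - 1) :
    s j * Rw s k = Rw s k * s j := by
  induction k with
  | zero => simp
  | succ k ih =>
    calc s j * Rw s (k + 1) = s j * Pw s k * Rw s k := by rw [Rw_succ, mul_assoc]
      _ = Pw s k * s j * Rw s k := by rw [h.csP k j (by omega) hj]
      _ = Pw s k * (Rw s k * s j) := by rw [mul_assoc, ih (by omega)]
      _ = Rw s (k + 1) * s j := by rw [Rw_succ]; group

lemma cseH (h : CoxHyp s n) (m j : ℕ) (hmj : m + 2 ≤ j) (hj : j ≤ n - 1) :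
    s j * epsw s m = epsw s m * s j := by
  induction m with
  | zero => exact h.cm 0 j (by omega) hj |>.symm
  | succ m ih =>
    calc s j * epsw s (m + 1) = s j * s (m + 1) * (epsw s m * s (m + 1)) := by
          rw [epsw_succ]; group
      _ = s (m + 1) * s j * (epsw s m * s (m + 1)) := by rw [← h.cm (m + 1) j (by omega) hj]
      _ = s (m + 1) * (s j * epsw s m) * s (m + 1) := by group
      _ = s (m + 1) * (epsw s m * s j) * s (m + 1) := by rw [ih (by omega)]
      _ = s (m + 1) * epsw s m * (s j * s (m + 1)) := by group
      _ = s (m + 1) * epsw s m * (s (m + 1) * s j) := by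
          rw [← h.cm (m + 1) j (by omega) hj]
      _ = epsw s (m + 1) * s j := by rw [epsw_succ]; group

lemma cseL (h : CoxHyp s n) (m j : ℕ) (hjm : j + 1 ≤ m) (hm : m ≤ n - 1) :
    s j * epsw s m = epsw s m * s j := by
  induction m with
  | zero => omega
  | succ m ih =>
    by_cases hc : j + 1 ≤ m
    · calc s j * epsw s (m + 1) = s j * s (m + 1) * (epsw s m * s (m + 1)) := by
            rw [epsw_succ]; group
        _ = s (m + 1) * s j * (epsw s m * s (m + 1)) := by
            rw [← h.cm j (m + 1) (by omega) hm]
        _ = s (m + 1) * (s j * epsw s m) * s (m + 1) := by group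
        _ = s (m + 1) * (epsw s m * s j) * s (m + 1) := by rw [ih hc (by omega)]
        _ = s (m + 1) * epsw s m * (s j * s (m + 1)) := by group
        _ = s (m + 1) * epsw s m * (s (m + 1) * s j) := by
            rw [h.cm j (m + 1) (by omega) hm]
        _ = epsw s (m + 1) * s j := by rw [epsw_succ]; group
    · have hm' : m = j := by omega
      subst hm'
      match m, hjm, hm with
      | 0, _, hm =>
        show s 0 * epsw s 1 = epsw s 1 * s 0
        calc s 0 * epsw s 1 = s 0 * s 1 * s 0 * s 1 := by rw [epsw_succ, epsw_zero]; group
          _ = s 1 * s 0 * s 1 * s 0 := h.h01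
          _ = epsw s 1 * s 0 := by rw [epsw_succ, epsw_zero]
      | (t+1), _, hm =>
        show s (t+1) * epsw s (t+2) = epsw s (t+2) * s (t+1)
        have hbr := h.br (t+1) (by omega) (by omega)
        have hH := h.cseH t (t+2) (by omega) (by omega)
        calc s (t+1) * epsw s (t+2)
            = (s (t+1) * s (t+2) * s (t+1)) * (epsw s t * (s (t+1) * s (t+2))) := by
              rw [epsw_succ, epsw_succ]; group
          _ = (s (t+2) * s (t+1) * s (t+2)) * (epsw s t * (s (t+1) * s (t+2))) := by rw [hbr]
          _ = s (t+2) * s (t+1) * (s (t+2) * epsw s t) * (s (t+1) * s (t+2)) := by group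
          _ = s (t+2) * s (t+1) * (epsw s t * s (t+2)) * (s (t+1) * s (t+2)) := by rw [hH]
          _ = s (t+2) * (s (t+1) * epsw s t) * (s (t+2) * s (t+1) * s (t+2)) := by group
          _ = s (t+2) * (s (t+1) * epsw s t) * (s (t+1) * s (t+2) * s (t+1)) := by rw [← hbr]
          _ = epsw s (t+2) * s (t+1) := by rw [epsw_succ, epsw_succ]; group

lemma eps_sq (h : CoxHyp s n) (m : ℕ) (hm : m ≤ n - 1) : epsw s m * epsw s m = 1 := by
  induction m with
  | zero => exact h.sq 0 (by omega)
  | succ m ih =>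
    calc epsw s (m + 1) * epsw s (m + 1)
        = s (m + 1) * epsw s m * (s (m + 1) * s (m + 1)) * epsw s m * s (m + 1) := by
          rw [epsw_succ]; group
      _ = s (m + 1) * (epsw s m * epsw s m) * s (m + 1) := by
          rw [h.sq (m + 1) hm]; group
      _ = s (m + 1) * (1 : G) * s (m + 1) := by rw [ih (by omega)]
      _ = s (m + 1) * s (m + 1) := by group
      _ = 1 := h.sq (m + 1) hm

lemma cee (h : CoxHyp s n) (m k : ℕ) (hmk : m + 1 ≤ k) (hk : k ≤ n - 1) :
    epsw s m * epsw s k = epsw s k * epsw s m := by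
  induction m with
  | zero => exact h.cseL k 0 (by omega) hk
  | succ m ih =>
    have h1 := h.cseL k (m + 1) (by omega) hk
    calc epsw s (m + 1) * epsw s k
        = s (m + 1) * (epsw s m * (s (m + 1) * epsw s k)) := by rw [epsw_succ]; group
      _ = s (m + 1) * (epsw s m * (epsw s k * s (m + 1))) := by rw [h1]
      _ = s (m + 1) * (epsw s m * epsw s k) * s (m + 1) := by group
      _ = s (m + 1) * (epsw s k * epsw s m) * s (m + 1) := by rw [ih (by omega)]
      _ = (s (m + 1) * epsw s k) * (epsw s m * s (m + 1)) := by group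
      _ = (epsw s k * s (m + 1)) * (epsw s m * s (m + 1)) := by rw [h1]
      _ = epsw s k * epsw s (m + 1) := by rw [epsw_succ]; group

lemma cPe (h : CoxHyp s n) (m k : ℕ) (hmk : m + 1 ≤ k) (hk : k ≤ n - 1) :
    Pw s m * epsw s k = epsw s k * Pw s m := by
  induction m with
  | zero => exact h.cseL k 0 (by omega) hk
  | succ m ih =>
    have h1 := h.cseL k (m + 1) (by omega) hk
    calc Pw s (m + 1) * epsw s k = Pw s m * (s (m + 1) * epsw s k) := by rw [Pw_succ]; group
      _ = Pw s m * (epsw s k * s (m + 1)) := by rw [h1]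
      _ = (Pw s m * epsw s k) * s (m + 1) := by group
      _ = (epsw s k * Pw s m) * s (m + 1) := by rw [ih (by omega)]
      _ = epsw s k * Pw s (m + 1) := by rw [Pw_succ]; group

lemma se_swap (h : CoxHyp s n) (m : ℕ) (hm : m + 1 ≤ n - 1) :
    s (m + 1) * epsw s m = epsw s (m + 1) * s (m + 1) := by
  calc s (m + 1) * epsw s m
      = s (m + 1) * epsw s m * (s (m + 1) * s (m + 1)) := by rw [h.sq (m + 1) hm]; group
    _ = epsw s (m + 1) * s (m + 1) := by rw [epsw_succ]; group

lemma PQ_one (h : CoxHyp s n) (k : ℕ) (hk : k ≤ n - 1) : Pw s k * Qw s k = 1 := by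
  induction k with
  | zero => exact h.sq 0 (by omega)
  | succ k ih =>
    calc Pw s (k + 1) * Qw s (k + 1)
        = Pw s k * (s (k + 1) * s (k + 1)) * Qw s k := by rw [Pw_succ, Qw_succ]; group
      _ = Pw s k * Qw s k := by rw [h.sq (k + 1) hk]; group
      _ = 1 := ih (by omega)

lemma QP_one (h : CoxHyp s n) (k : ℕ) (hk : k ≤ n - 1) : Qw s k * Pw s k = 1 := by
  have h1 := inv_eq_of_mul_eq_one_right (h.PQ_one k hk)
  rw [← h1, inv_mul_cancel]

lemma E_eq (h : CoxHyp s n) (k : ℕ) (hk : k ≤ n - 1) :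
    Rw s k * Qw s k = Pw s k * Rw s k := by
  induction k with
  | zero => simp
  | succ k ih =>
    calc Rw s (k + 1) * Qw s (k + 1)
        = Pw s k * (Rw s k * s (k + 1)) * Qw s k := by rw [Rw_succ, Qw_succ]; group
      _ = Pw s k * (s (k + 1) * Rw s k) * Qw s k := by rw [← h.csR k (k + 1) (by omega) hk]
      _ = (Pw s k * s (k + 1)) * (Rw s k * Qw s k) := by group
      _ = (Pw s k * s (k + 1)) * (Pw s k * Rw s k) := by rw [ih (by omega)]
      _ = Pw s (k + 1) * Rw s (k + 1) := by rw [Pw_succ, Rw_succ]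

lemma R_sq (h : CoxHyp s n) (k : ℕ) (hk : k ≤ n) : Rw s k * Rw s k = 1 := by
  induction k with
  | zero => simp
  | succ k ih =>
    calc Rw s (k + 1) * Rw s (k + 1)
        = Pw s k * Rw s k * (Pw s k * Rw s k) := by rw [Rw_succ]
      _ = Pw s k * Rw s k * (Rw s k * Qw s k) := by rw [h.E_eq k (by omega)]
      _ = Pw s k * (Rw s k * Rw s k) * Qw s k := by group
      _ = Pw s k * Qw s k := by rw [ih (by omega)]; group
      _ = 1 := h.PQ_one k (by omega)

lemma J_eq (h : CoxHyp s n) (k j : ℕ) (hj1 : 1 ≤ j) (hjk : j + 1 ≤ k) (hk : k ≤ n - 1) :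
    Pw s k * s j = s (j + 1) * Pw s k := by
  induction k with
  | zero => omega
  | succ k ih =>
    by_cases hc : j + 1 ≤ k
    · calc Pw s (k + 1) * s j = Pw s k * (s (k + 1) * s j) := by rw [Pw_succ]; group
        _ = Pw s k * (s j * s (k + 1)) := by rw [h.cm j (k + 1) (by omega) hk]
        _ = (Pw s k * s j) * s (k + 1) := by group
        _ = (s (j + 1) * Pw s k) * s (k + 1) := by rw [ih hc (by omega)]
        _ = s (j + 1) * Pw s (k + 1) := by rw [Pw_succ]; group
    · have hjk' : j = k := by omega
      subst hjk'
      match j, hj1, hjk, hk with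
      | (t+1), _, _, hk =>
        have hbr := h.br (t + 1) (by omega) (by omega)
        have hP := h.csP t (t + 2) (by omega) (by omega)
        calc Pw s (t + 2) * s (t + 1)
            = Pw s t * (s (t + 1) * s (t + 2) * s (t + 1)) := by
              rw [Pw_succ, Pw_succ]; group
          _ = Pw s t * (s (t + 2) * s (t + 1) * s (t + 2)) := by rw [hbr]
          _ = (Pw s t * s (t + 2)) * (s (t + 1) * s (t + 2)) := by group
          _ = (s (t + 2) * Pw s t) * (s (t + 1) * s (t + 2)) := by rw [← hP]
          _ = s (t + 2) * Pw s (t + 2) := by rw [Pw_succ, Pw_succ]; group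

lemma LB (h : CoxHyp s n) (k i : ℕ) (hi : 1 ≤ i) (hik : i + 1 ≤ k) (hk : k ≤ n) :
    Rw s k * s i = s (k - i) * Rw s k := by
  induction k generalizing i with
  | zero => omega
  | succ k ih =>
    have key : ∀ i', 1 ≤ i' → i' + 1 ≤ k → Rw s (k + 1) * s i' = s (k + 1 - i') * Rw s (k + 1) := by
      intro i' hi' hik'
      have harith : k - i' + 1 = k + 1 - i' := by omega
      calc Rw s (k + 1) * s i' = Pw s k * (Rw s k * s i') := by rw [Rw_succ]; group
        _ = Pw s k * (s (k - i') * Rw s k) := by rw [ih i' hi' hik' (by omega)]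
        _ = (Pw s k * s (k - i')) * Rw s k := by group
        _ = (s (k - i' + 1) * Pw s k) * Rw s k := by
            rw [h.J_eq k (k - i') (by omega) (by omega) (by omega)]
        _ = s (k + 1 - i') * Rw s (k + 1) := by rw [harith, Rw_succ]; group
    by_cases hc : i + 1 ≤ k
    · exact key i hi hc
    · have hik' : i = k := by omega
      subst hik'
      by_cases hi2 : 2 ≤ i
      · have e1 := key 1 (by omega) (by omega)
        have hR := h.R_sq (i + 1) hk
        have harith : i + 1 - 1 = i := by omega
        rw [harith] at e1
        have e2 : Rw s (i + 1) * (s 1 * Rw s (i + 1)) = s i := by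
          calc Rw s (i + 1) * (s 1 * Rw s (i + 1))
              = (Rw s (i + 1) * s 1) * Rw s (i + 1) := by group
            _ = (s i * Rw s (i + 1)) * Rw s (i + 1) := by rw [e1]
            _ = s i * (Rw s (i + 1) * Rw s (i + 1)) := by group
            _ = s i := by rw [hR]; group
        have e3 : s 1 * Rw s (i + 1) = Rw s (i + 1) * s i := by
          calc s 1 * Rw s (i + 1)
              = (Rw s (i + 1) * Rw s (i + 1)) * (s 1 * Rw s (i + 1)) := by rw [hR]; group
            _ = Rw s (i + 1) * (Rw s (i + 1) * (s 1 * Rw s (i + 1))) := by group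
            _ = Rw s (i + 1) * s i := by rw [e2]
        have harith2 : i + 1 - i = 1 := by omega
        rw [harith2]
        exact e3.symm
      · have hi1 : i = 1 := by omega
        subst hi1
        show Rw s 2 * s 1 = s (2 - 1) * Rw s 2
        have : Rw s 2 = s 0 * s 1 * s 0 := by
          simp only [Rw_succ, Rw_zero, Pw_succ, Pw_zero, mul_one]
        rw [this]
        calc s 0 * s 1 * s 0 * s 1 = s 1 * s 0 * s 1 * s 0 := h.h01
          _ = s (2 - 1) * (s 0 * s 1 * s 0) := by norm_num; group

lemma LC (h : CoxHyp s n) (k : ℕ) (h1 : 1 ≤ k) (hk : k ≤ n) :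
    Rw s k * s 0 = epsw s (k - 1) * Rw s k := by
  induction k with
  | zero => omega
  | succ k ih =>
    match k, ih with
    | 0, _ =>
      show Rw s 1 * s 0 = epsw s 0 * Rw s 1
      simp only [Rw_succ, Rw_zero, Pw_zero, mul_one, epsw_zero]
    | (t+1), ih =>
      have ih' := ih (by omega) (by omega)
      have hsw := h.se_swap t (by omega)
      have hPe := h.cPe t (t + 1) (by omega) (by omega)
      have harith : t + 1 - 1 = t := by omega
      rw [harith] at ih'
      calc Rw s (t + 2) * s 0
          = Pw s (t + 1) * (Rw s (t + 1) * s 0) := by rw [Rw_succ]; group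
        _ = Pw s (t + 1) * (epsw s t * Rw s (t + 1)) := by rw [ih']
        _ = Pw s t * (s (t + 1) * epsw s t) * Rw s (t + 1) := by rw [Pw_succ]; group
        _ = Pw s t * (epsw s (t + 1) * s (t + 1)) * Rw s (t + 1) := by rw [hsw]
        _ = (Pw s t * epsw s (t + 1)) * (s (t + 1) * Rw s (t + 1)) := by group
        _ = (epsw s (t + 1) * Pw s t) * (s (t + 1) * Rw s (t + 1)) := by rw [hPe]
        _ = epsw s (t + 1) * (Pw s (t + 1) * Rw s (t + 1)) := by rw [Pw_succ]; group
        _ = epsw s (t + 1) * Rw s (t + 2) := by simp only [Rw_succ]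
        _ = epsw s (t + 2 - 1) * Rw s (t + 2) := by norm_num

lemma Ssk (h : CoxHyp s n) (k : ℕ) (h1 : 1 ≤ k) (hk : k + 1 ≤ n) :
    Rw s (k - 1) * Rw s k * Rw s (k + 1) * Rw s k = s k := by
  match k, h1, hk with
  | (t+1), _, hk =>
    have hE := h.E_eq t (by omega)
    have hRt := h.R_sq t (by omega)
    have hQP := h.QP_one t (by omega)
    show Rw s t * Rw s (t + 1) * Rw s (t + 2) * Rw s (t + 1) = s (t + 1)
    calc Rw s t * Rw s (t + 1) * Rw s (t + 2) * Rw s (t + 1)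
        = Rw s t * (Pw s t * Rw s t) * (Pw s (t + 1) * (Rw s (t + 1) * Rw s (t + 1))) := by
          simp only [Rw_succ]; group
      _ = Rw s t * (Pw s t * Rw s t) * Pw s (t + 1) := by
          rw [h.R_sq (t + 1) (by omega)]; group
      _ = Rw s t * (Rw s t * Qw s t) * Pw s (t + 1) := by rw [hE]
      _ = (Rw s t * Rw s t) * (Qw s t * (Pw s t * s (t + 1))) := by rw [Pw_succ]; group
      _ = (Rw s t * Rw s t) * ((Qw s t * Pw s t) * s (t + 1)) := by group
      _ = s (t + 1) := by rw [hRt, hQP]; group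

lemma Rw_one : Rw s 1 = s 0 := by simp

lemma Rw_two : Rw s 2 = s 0 * s 1 * s 0 := by
  simp only [Rw_succ, Rw_zero, Pw_succ, Pw_zero, mul_one]

lemma Rw_three : Rw s 3 = s 0 * s 1 * s 2 * (s 0 * s 1 * s 0) := by
  simp only [Rw_succ, Rw_zero, Pw_succ, Pw_zero, mul_one]

lemma c_eq (h : CoxHyp s n) (hn : 4 ≤ n) : Rw s 2 * Rw s 3 = s 2 * s 1 * s 0 := by
  rw [Rw_two, Rw_three]
  calc s 0 * s 1 * s 0 * (s 0 * s 1 * s 2 * (s 0 * s 1 * s 0))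
      = s 0 * (s 1 * (s 0 * s 0) * s 1) * (s 2 * (s 0 * s 1 * s 0)) := by group
    _ = s 0 * (s 1 * s 1) * (s 2 * (s 0 * s 1 * s 0)) := by rw [h.sq 0 (by omega)]; group
    _ = (s 0 * s 2) * (s 0 * s 1 * s 0) := by rw [h.sq 1 (by omega)]; group
    _ = (s 2 * s 0) * (s 0 * s 1 * s 0) := by rw [h.cm 0 2 (by omega) (by omega)]
    _ = s 2 * (s 0 * s 0) * (s 1 * s 0) := by group
    _ = s 2 * s 1 * s 0 := by rw [h.sq 0 (by omega)]; group

lemma sRs (h : CoxHyp s n) (hn : 4 ≤ n) : Rw s 1 * Rw s 2 * Rw s 1 = s 1 := by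
  rw [Rw_one, Rw_two]
  calc s 0 * (s 0 * s 1 * s 0) * s 0 = (s 0 * s 0) * s 1 * (s 0 * s 0) := by group
    _ = s 1 := by rw [h.sq 0 (by omega)]; group

lemma sRs2 (h : CoxHyp s n) (hn : 4 ≤ n) : Rw s 2 * Rw s 3 * Rw s 2 * Rw s 1 = s 2 := by
  calc Rw s 2 * Rw s 3 * Rw s 2 * Rw s 1
      = (Rw s 2 * Rw s 3) * ((s 0 * s 1 * s 0) * s 0) := by rw [Rw_two, Rw_one]; group
    _ = (s 2 * s 1 * s 0) * ((s 0 * s 1 * s 0) * s 0) := by rw [h.c_eq hn]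
    _ = s 2 * s 1 * (s 0 * s 0) * (s 1 * (s 0 * s 0)) := by group
    _ = s 2 * (s 1 * s 1) := by rw [h.sq 0 (by omega)]; group
    _ = s 2 := by rw [h.sq 1 (by omega)]; group

lemma conj1 (h : CoxHyp s n) (k : ℕ) (h2 : 2 ≤ k) (hk : k ≤ n) :
    Rw s k * s 1 * Rw s k = s (k - 1) := by
  calc Rw s k * s 1 * Rw s k = s (k - 1) * (Rw s k * Rw s k) := by
        rw [h.LB k 1 (by omega) (by omega) hk]; group
    _ = s (k - 1) := by rw [h.R_sq k hk]; group

lemma conj0 (h : CoxHyp s n) (k : ℕ) (h1 : 1 ≤ k) (hk : k ≤ n) :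
    Rw s k * Rw s 1 * Rw s k = epsw s (k - 1) := by
  rw [Rw_one]
  calc Rw s k * s 0 * Rw s k = epsw s (k - 1) * (Rw s k * Rw s k) := by
        rw [h.LC k h1 hk]; group
    _ = epsw s (k - 1) := by rw [h.R_sq k hk]; group

lemma RA1 (h : CoxHyp s n) (k : ℕ) (hk : k ≤ n) : (Rw s k) ^ 2 = 1 := by
  rw [pow_two]; exact h.R_sq k hk

lemma RA2 (h : CoxHyp s n) (hn : 4 ≤ n) : (Rw s 2 * Rw s 3) ^ 6 = 1 := by
  have e1 : (s 2 * s 1 * s 0) ^ 3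
      = s 2 * s 1 * s 2 * (s 0 * s 1 * s 2) * (s 0 * s 1 * s 0) := by
    calc (s 2 * s 1 * s 0) ^ 3
        = s 2 * s 1 * (s 0 * s 2) * s 1 * (s 0 * s 2) * (s 1 * s 0) := by
          rw [pow_succ, pow_succ, pow_one]; group
      _ = s 2 * s 1 * (s 2 * s 0) * s 1 * (s 2 * s 0) * (s 1 * s 0) := by
          rw [h.cm 0 2 (by omega) (by omega)]
      _ = s 2 * s 1 * s 2 * (s 0 * s 1 * s 2) * (s 0 * s 1 * s 0) := by group
  have e2 : epsw s 2 * epsw s 1 * epsw s 0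
      = s 2 * s 1 * s 2 * (s 0 * s 1 * s 2) * (s 0 * s 1 * s 0) := by
    calc epsw s 2 * epsw s 1 * epsw s 0
        = s 2 * s 1 * s 0 * (s 1 * s 2 * s 1) * (s 0 * (s 1 * s 0)) := by
          simp only [epsw_succ, epsw_zero]; group
      _ = s 2 * s 1 * s 0 * (s 2 * s 1 * s 2) * (s 0 * (s 1 * s 0)) := by
          rw [h.br 1 (by omega) (by omega)]
      _ = s 2 * s 1 * (s 0 * s 2) * (s 1 * (s 2 * (s 0 * (s 1 * s 0)))) := by group
      _ = s 2 * s 1 * (s 2 * s 0) * (s 1 * (s 2 * (s 0 * (s 1 * s 0)))) := by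
          rw [h.cm 0 2 (by omega) (by omega)]
      _ = s 2 * s 1 * s 2 * (s 0 * s 1 * s 2) * (s 0 * s 1 * s 0) := by group
  have hc3 : (Rw s 2 * Rw s 3) ^ 3 = epsw s 2 * epsw s 1 * epsw s 0 := by
    rw [h.c_eq hn, e1, e2]
  have e3 : (epsw s 2 * epsw s 1 * epsw s 0) * (epsw s 2 * epsw s 1 * epsw s 0) = 1 := by
    calc (epsw s 2 * epsw s 1 * epsw s 0) * (epsw s 2 * epsw s 1 * epsw s 0)
        = epsw s 2 * epsw s 1 * (epsw s 0 * epsw s 2) * (epsw s 1 * epsw s 0) := by group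
      _ = epsw s 2 * epsw s 1 * (epsw s 2 * epsw s 0) * (epsw s 1 * epsw s 0) := by
          rw [h.cee 0 2 (by omega) (by omega)]
      _ = epsw s 2 * (epsw s 1 * epsw s 2) * (epsw s 0 * epsw s 1) * epsw s 0 := by group
      _ = epsw s 2 * (epsw s 2 * epsw s 1) * (epsw s 1 * epsw s 0) * epsw s 0 := by
          rw [h.cee 1 2 (by omega) (by omega), h.cee 0 1 (by omega) (by omega)]
      _ = (epsw s 2 * epsw s 2) * ((epsw s 1 * epsw s 1) * (epsw s 0 * epsw s 0)) := by group
      _ = 1 := by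
          rw [h.eps_sq 2 (by omega), h.eps_sq 1 (by omega), h.eps_sq 0 (by omega)]; group
  calc (Rw s 2 * Rw s 3) ^ 6 = (Rw s 2 * Rw s 3) ^ 3 * (Rw s 2 * Rw s 3) ^ 3 := by
        rw [← pow_add]
    _ = 1 := by rw [hc3]; exact e3

lemma RA3 (h : CoxHyp s n) (hn : 4 ≤ n) (k : ℕ) (h2 : 2 ≤ k) (hk : k ≤ n) :
    (Rw s 1 * Rw s k) ^ 4 = 1 := by
  have hL : Rw s 1 * Rw s k * (Rw s 1 * Rw s k) = s 0 * epsw s (k - 1) := by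
    calc Rw s 1 * Rw s k * (Rw s 1 * Rw s k)
        = s 0 * (Rw s k * s 0) * Rw s k := by rw [Rw_one]; group
      _ = s 0 * (epsw s (k - 1) * Rw s k) * Rw s k := by rw [h.LC k (by omega) hk]
      _ = s 0 * epsw s (k - 1) * (Rw s k * Rw s k) := by group
      _ = s 0 * epsw s (k - 1) := by rw [h.R_sq k hk]; group
  calc (Rw s 1 * Rw s k) ^ 4
      = Rw s 1 * Rw s k * (Rw s 1 * Rw s k) * (Rw s 1 * Rw s k * (Rw s 1 * Rw s k)) := by
        rw [pow_succ, pow_succ, pow_succ, pow_one]; group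
    _ = s 0 * (epsw s (k - 1) * s 0) * epsw s (k - 1) := by rw [hL]; group
    _ = s 0 * (s 0 * epsw s (k - 1)) * epsw s (k - 1) := by
        rw [← h.cseL (k - 1) 0 (by omega) (by omega)]
    _ = (s 0 * s 0) * (epsw s (k - 1) * epsw s (k - 1)) := by group
    _ = 1 := by rw [h.sq 0 (by omega), h.eps_sq (k - 1) (by omega)]; group

lemma RA4 (h : CoxHyp s n) (hn : 4 ≤ n) (k : ℕ) (h4 : 4 ≤ k) (hk : k ≤ n) :
    (Rw s 1 * Rw s 2 * Rw s 1 * Rw s k) ^ 4 = 1 := by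
  have eb := h.conj1 k (by omega) hk
  calc (Rw s 1 * Rw s 2 * Rw s 1 * Rw s k) ^ 4 = (s 1 * Rw s k) ^ 4 := by rw [h.sRs hn]
    _ = s 1 * (Rw s k * s 1 * Rw s k) * (s 1 * (Rw s k * s 1 * Rw s k)) := by
        rw [pow_succ, pow_succ, pow_succ, pow_one]; group
    _ = s 1 * s (k - 1) * (s 1 * s (k - 1)) := by rw [eb]
    _ = s 1 * (s (k - 1) * s 1) * s (k - 1) := by group
    _ = s 1 * (s 1 * s (k - 1)) * s (k - 1) := by rw [← h.cm 1 (k - 1) (by omega) (by omega)]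
    _ = (s 1 * s 1) * (s (k - 1) * s (k - 1)) := by group
    _ = 1 := by rw [h.sq 1 (by omega), h.sq (k - 1) (by omega)]; group

lemma RA5 (h : CoxHyp s n) (hn : 4 ≤ n) (k : ℕ) (h3 : 3 ≤ k) (hk : k ≤ n) :
    (Rw s k * Rw s 1 * Rw s k * Rw s 2) ^ 2 = 1 := by
  have ee := h.conj0 k (by omega) hk
  have c0 := h.cseL (k - 1) 0 (by omega) (by omega)
  have c1 := h.cseL (k - 1) 1 (by omega) (by omega)
  have ce : epsw s (k - 1) * Rw s 2 = Rw s 2 * epsw s (k - 1) := by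
    rw [Rw_two]
    calc epsw s (k - 1) * (s 0 * s 1 * s 0)
        = (epsw s (k - 1) * s 0) * (s 1 * s 0) := by group
      _ = (s 0 * epsw s (k - 1)) * (s 1 * s 0) := by rw [← c0]
      _ = s 0 * (epsw s (k - 1) * s 1) * s 0 := by group
      _ = s 0 * (s 1 * epsw s (k - 1)) * s 0 := by rw [← c1]
      _ = s 0 * s 1 * (epsw s (k - 1) * s 0) := by group
      _ = s 0 * s 1 * (s 0 * epsw s (k - 1)) := by rw [← c0]
      _ = s 0 * s 1 * s 0 * epsw s (k - 1) := by group
  calc (Rw s k * Rw s 1 * Rw s k * Rw s 2) ^ 2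
      = (Rw s k * Rw s 1 * Rw s k) * Rw s 2 * ((Rw s k * Rw s 1 * Rw s k) * Rw s 2) := by
        rw [pow_two]
    _ = epsw s (k - 1) * Rw s 2 * (epsw s (k - 1) * Rw s 2) := by rw [ee]
    _ = epsw s (k - 1) * (Rw s 2 * epsw s (k - 1)) * Rw s 2 := by group
    _ = epsw s (k - 1) * (epsw s (k - 1) * Rw s 2) * Rw s 2 := by rw [← ce]
    _ = (epsw s (k - 1) * epsw s (k - 1)) * (Rw s 2 * Rw s 2) := by group
    _ = 1 := by rw [h.eps_sq (k - 1) (by omega), h.R_sq 2 (by omega)]; group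

lemma RA6 (h : CoxHyp s n) (hn : 4 ≤ n) (k : ℕ) (h2 : 2 ≤ k) (hk : k ≤ n - 1) :
    Rw s k * Rw s 1 * Rw s 2 * Rw s 1 * Rw s k * Rw s (k + 1) * Rw s 2 * Rw s 3 * Rw s 2 *
      Rw s 1 * Rw s (k + 1) = 1 := by
  have e3 := h.conj1 k (by omega) (by omega)
  have e4 : Rw s (k + 1) * s 2 * Rw s (k + 1) = s (k - 1) := by
    have hLB := h.LB (k + 1) 2 (by omega) (by omega) (by omega)
    have ha : k + 1 - 2 = k - 1 := by omega
    rw [ha] at hLB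
    calc Rw s (k + 1) * s 2 * Rw s (k + 1) = s (k - 1) * (Rw s (k + 1) * Rw s (k + 1)) := by
          rw [hLB]; group
      _ = s (k - 1) := by rw [h.R_sq (k + 1) (by omega)]; group
  calc Rw s k * Rw s 1 * Rw s 2 * Rw s 1 * Rw s k * Rw s (k + 1) * Rw s 2 * Rw s 3 * Rw s 2 *
        Rw s 1 * Rw s (k + 1)
      = Rw s k * (Rw s 1 * Rw s 2 * Rw s 1) * Rw s k *
          (Rw s (k + 1) * (Rw s 2 * Rw s 3 * Rw s 2 * Rw s 1) * Rw s (k + 1)) := by group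
    _ = Rw s k * s 1 * Rw s k * (Rw s (k + 1) * s 2 * Rw s (k + 1)) := by
        rw [h.sRs hn, h.sRs2 hn]
    _ = s (k - 1) * s (k - 1) := by rw [e3, e4]
    _ = 1 := h.sq (k - 1) (by omega)

lemma RA7 (h : CoxHyp s n) (hn : 4 ≤ n) (k : ℕ) (h2 : 2 ≤ k) (hk : k ≤ n - 1) :
    Rw s (k + 1) * Rw s 1 * Rw s 2 * Rw s 1 * Rw s (k + 1) * Rw s (k - 1) * Rw s k *
      Rw s (k + 1) * Rw s k = 1 := by
  have e5 : Rw s (k + 1) * s 1 * Rw s (k + 1) = s k := by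
    have hLB := h.LB (k + 1) 1 (by omega) (by omega) (by omega)
    have ha : k + 1 - 1 = k := by omega
    rw [ha] at hLB
    calc Rw s (k + 1) * s 1 * Rw s (k + 1) = s k * (Rw s (k + 1) * Rw s (k + 1)) := by
          rw [hLB]; group
      _ = s k := by rw [h.R_sq (k + 1) (by omega)]; group
  have e6 := h.Ssk k (by omega) (by omega)
  calc Rw s (k + 1) * Rw s 1 * Rw s 2 * Rw s 1 * Rw s (k + 1) * Rw s (k - 1) * Rw s k *
        Rw s (k + 1) * Rw s k
      = (Rw s (k + 1) * (Rw s 1 * Rw s 2 * Rw s 1) * Rw s (k + 1)) *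
          (Rw s (k - 1) * Rw s k * Rw s (k + 1) * Rw s k) := by group
    _ = (Rw s (k + 1) * s 1 * Rw s (k + 1)) * s k := by rw [h.sRs hn, e6]
    _ = s k * s k := by rw [e5]
    _ = 1 := h.sq k hk

lemma RA8 (h : CoxHyp s n) (hn : 4 ≤ n) (k l : ℕ) (h2 : 2 ≤ k) (hk : k ≤ n - 2)
    (hl2 : k + 2 ≤ l) (hl : l ≤ n) :
    Rw s k * Rw s 1 * Rw s 2 * Rw s 1 * Rw s k * Rw s l * Rw s (l - k + 2) * Rw s 1 * Rw s 2 *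
      Rw s 1 * Rw s (l - k + 2) * Rw s l = 1 := by
  have e3 := h.conj1 k (by omega) (by omega)
  have e6 := h.conj1 (l - k + 2) (by omega) (by omega)
  have e7 : Rw s l * s (l - k + 2 - 1) * Rw s l = s (k - 1) := by
    have hLB := h.LB l (l - k + 2 - 1) (by omega) (by omega) hl
    have ha : l - (l - k + 2 - 1) = k - 1 := by omega
    rw [ha] at hLB
    calc Rw s l * s (l - k + 2 - 1) * Rw s l = s (k - 1) * (Rw s l * Rw s l) := by
          rw [hLB]; group
      _ = s (k - 1) := by rw [h.R_sq l hl]; group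
  calc Rw s k * Rw s 1 * Rw s 2 * Rw s 1 * Rw s k * Rw s l * Rw s (l - k + 2) * Rw s 1 *
        Rw s 2 * Rw s 1 * Rw s (l - k + 2) * Rw s l
      = Rw s k * (Rw s 1 * Rw s 2 * Rw s 1) * Rw s k *
          (Rw s l * (Rw s (l - k + 2) * (Rw s 1 * Rw s 2 * Rw s 1) * Rw s (l - k + 2)) *
            Rw s l) := by group
    _ = Rw s k * s 1 * Rw s k *
          (Rw s l * (Rw s (l - k + 2) * s 1 * Rw s (l - k + 2)) * Rw s l) := by rw [h.sRs hn]
    _ = s (k - 1) * (Rw s l * s (l - k + 2 - 1) * Rw s l) := by rw [e3, e6]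
    _ = s (k - 1) * s (k - 1) := by rw [e7]
    _ = 1 := h.sq (k - 1) (by omega)

end CoxHyp
/-! ### Direction B: in a group with the Rb relations, the words S_i satisfy Coxeter-B relations -/

lemma conj_sq {x y : G} (hx : x * x = 1) (hy : y * y = 1) : y * x * y * (y * x * y) = 1 := by
  calc y * x * y * (y * x * y) = y * (x * (y * y) * x) * y := by group
    _ = y * (x * x) * y := by rw [hy]; group
    _ = y * y := by rw [hx]; group
    _ = 1 := hy

structure RelHyp (r : ℕ → G) (n : ℕ) : Prop where
  h0 : r 0 = 1
  h1 : ∀ k, 1 ≤ k → k ≤ n → r k * r k = 1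
  h2 : (r 2 * r 3) ^ 6 = 1
  h3 : ∀ k, 2 ≤ k → k ≤ n → (r 1 * r k) ^ 4 = 1
  h4 : ∀ k, 4 ≤ k → k ≤ n → (r 1 * r 2 * r 1 * r k) ^ 4 = 1
  h5 : ∀ k, 3 ≤ k → k ≤ n → (r k * r 1 * r k * r 2) ^ 2 = 1
  h6 : ∀ k, 2 ≤ k → k ≤ n - 1 →
    r k * r 1 * r 2 * r 1 * r k * r (k + 1) * r 2 * r 3 * r 2 * r 1 * r (k + 1) = 1
  h7 : ∀ k, 2 ≤ k → k ≤ n - 1 →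
    r (k + 1) * r 1 * r 2 * r 1 * r (k + 1) * r (k - 1) * r k * r (k + 1) * r k = 1
  h8 : ∀ k l, 2 ≤ k → k ≤ n - 2 → k + 2 ≤ l → l ≤ n →
    r k * r 1 * r 2 * r 1 * r k * r l * r (l - k + 2) * r 1 * r 2 * r 1 * r (l - k + 2) * r l = 1

/-- The Coxeter generators built from the prefix-reversal generators. -/
def Sb (r : ℕ → G) : ℕ → G := fun i => if i = 0 then r 1 else r (i - 1) * r i * r (i + 1) * r i

@[simp] lemma Sb_zero (r : ℕ → G) : Sb r 0 = r 1 := rfl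

lemma Sb_succ (r : ℕ → G) (i : ℕ) :
    Sb r (i + 1) = r i * r (i + 1) * r (i + 2) * r (i + 1) := by
  simp [Sb]

lemma map_Sb (f : G →* H) (r : ℕ → G) (i : ℕ) : f (Sb r i) = Sb (fun j => f (r j)) i := by
  rcases i with _ | i
  · rfl
  · simp [Sb]

namespace RelHyp

variable {r : ℕ → G} {n : ℕ}

lemma Sb_one (h : RelHyp r n) : Sb r 1 = r 1 * r 2 * r 1 := by
  rw [Sb_succ, h.h0, one_mul]

lemma a_sq (h : RelHyp r n) (hn : 4 ≤ n) : (r 1 * r 2 * r 1) * (r 1 * r 2 * r 1) = 1 := by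
  calc (r 1 * r 2 * r 1) * (r 1 * r 2 * r 1) = r 1 * (r 2 * (r 1 * r 1) * r 2) * r 1 := by group
    _ = r 1 * (r 2 * r 2) * r 1 := by rw [h.h1 1 (by omega) (by omega)]; group
    _ = r 1 * r 1 := by rw [h.h1 2 (by omega) (by omega)]; group
    _ = 1 := h.h1 1 (by omega) (by omega)

lemma Sb_two (h : RelHyp r n) (hn : 4 ≤ n) (i : ℕ) (h2 : 2 ≤ i) (hi : i ≤ n - 1) :
    Sb r i = r (i + 1) * (r 1 * r 2 * r 1) * r (i + 1) := by
  obtain ⟨t, rfl⟩ : ∃ t, i = t + 1 := ⟨i - 1, by omega⟩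
  have h7 := h.h7 (t + 1) h2 hi
  have hA : (r (t + 2) * (r 1 * r 2 * r 1) * r (t + 2)) * Sb r (t + 1) = 1 := by
    rw [Sb_succ]
    calc (r (t + 2) * (r 1 * r 2 * r 1) * r (t + 2)) * (r t * r (t + 1) * r (t + 2) * r (t + 1))
        = r (t + 1 + 1) * r 1 * r 2 * r 1 * r (t + 1 + 1) * r (t + 1 - 1) * r (t + 1) *
            r (t + 1 + 1) * r (t + 1) := by norm_num; group
      _ = 1 := h7
  have hXX : (r (t + 2) * (r 1 * r 2 * r 1) * r (t + 2)) *
      (r (t + 2) * (r 1 * r 2 * r 1) * r (t + 2)) = 1 :=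
    conj_sq (h.a_sq hn) (h.h1 (t + 2) (by omega) (by omega))
  have h1 := inv_eq_of_mul_eq_one_right hA
  rw [inv_self hXX] at h1
  exact h1.symm

lemma Sb_two' (h : RelHyp r n) (hn : 4 ≤ n) (i : ℕ) (h2 : 2 ≤ i) (hi : i + 1 ≤ n - 1) :
    Sb r i = r (i + 2) * (r 1 * r 2 * r 3 * r 2) * r (i + 2) := by
  have h6 := h.h6 (i + 1) (by omega) hi
  have hXZ : Sb r i * (r (i + 2) * (r 2 * r 3 * r 2 * r 1) * r (i + 2)) = 1 := by
    rw [h.Sb_two hn i h2 (by omega)]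
    calc (r (i + 1) * (r 1 * r 2 * r 1) * r (i + 1)) *
          (r (i + 2) * (r 2 * r 3 * r 2 * r 1) * r (i + 2))
        = r (i + 1) * r 1 * r 2 * r 1 * r (i + 1) * r (i + 1 + 1) * r 2 * r 3 * r 2 * r 1 *
            r (i + 1 + 1) := by norm_num; group
      _ = 1 := h6
  have hYZ : (r (i + 2) * (r 1 * r 2 * r 3 * r 2) * r (i + 2)) *
      (r (i + 2) * (r 2 * r 3 * r 2 * r 1) * r (i + 2)) = 1 := by
    calc (r (i + 2) * (r 1 * r 2 * r 3 * r 2) * r (i + 2)) *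
          (r (i + 2) * (r 2 * r 3 * r 2 * r 1) * r (i + 2))
        = r (i + 2) * (r 1 * r 2 * r 3 * r 2) *
            ((r (i + 2) * r (i + 2)) * ((r 2 * r 3 * r 2 * r 1) * r (i + 2))) := by group
      _ = r (i + 2) * (r 1 * r 2 * r 3 * (r 2 * r 2) * r 3 * r 2 * r 1) * r (i + 2) := by
          rw [h.h1 (i + 2) (by omega) (by omega)]; group
      _ = r (i + 2) * (r 1 * r 2 * (r 3 * r 3) * r 2 * r 1) * r (i + 2) := by
          rw [h.h1 2 (by omega) (by omega)]; group
      _ = r (i + 2) * (r 1 * (r 2 * r 2) * r 1) * r (i + 2) := by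
          rw [h.h1 3 (by omega) (by omega)]; group
      _ = r (i + 2) * (r 1 * r 1) * r (i + 2) := by rw [h.h1 2 (by omega) (by omega)]; group
      _ = r (i + 2) * r (i + 2) := by rw [h.h1 1 (by omega) (by omega)]; group
      _ = 1 := h.h1 (i + 2) (by omega) (by omega)
  have e1 := eq_inv_of_mul_eq_one_left hXZ
  have e2 := eq_inv_of_mul_eq_one_left hYZ
  rw [e1, e2]

lemma zc1 (h : RelHyp r n) (hn : 4 ≤ n) (k : ℕ) (h2 : 2 ≤ k) (hk : k ≤ n) :
    (r k * r 1 * r k) * r 1 = r 1 * (r k * r 1 * r k) := by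
  have hf := four_comm (h.h1 1 (by omega) (by omega)) (h.h1 k (by omega) hk) (h.h3 k h2 hk)
  calc (r k * r 1 * r k) * r 1 = r k * r 1 * (r k * r 1) := by group
    _ = r 1 * r k * (r 1 * r k) := by rw [← hf]
    _ = r 1 * (r k * r 1 * r k) := by group

lemma zc2 (h : RelHyp r n) (hn : 4 ≤ n) (k : ℕ) (h3 : 3 ≤ k) (hk : k ≤ n) :
    (r k * r 1 * r k) * r 2 = r 2 * (r k * r 1 * r k) := by
  have hx : (r k * r 1 * r k) * (r k * r 1 * r k) = 1 :=
    conj_sq (h.h1 1 (by omega) (by omega)) (h.h1 k (by omega) hk)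
  exact two_comm hx (h.h1 2 (by omega) (by omega)) (h.h5 k h3 hk)

lemma star (h : RelHyp r n) (hn : 4 ≤ n) :
    r 3 * (r 1 * r 2 * r 1) * r 3 = r 2 * r 3 * r 2 * r 1 := by
  have h7 := h.h7 2 (by omega) (by omega)
  have hXB : (r 3 * (r 1 * r 2 * r 1) * r 3) * (r 1 * r 2 * r 3 * r 2) = 1 := by
    calc (r 3 * (r 1 * r 2 * r 1) * r 3) * (r 1 * r 2 * r 3 * r 2)
        = r (2 + 1) * r 1 * r 2 * r 1 * r (2 + 1) * r (2 - 1) * r 2 * r (2 + 1) * r 2 := by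
          norm_num; group
      _ = 1 := h7
  have hYB : (r 2 * r 3 * r 2 * r 1) * (r 1 * r 2 * r 3 * r 2) = 1 := by
    calc (r 2 * r 3 * r 2 * r 1) * (r 1 * r 2 * r 3 * r 2)
        = r 2 * r 3 * (r 2 * ((r 1 * r 1) * r 2) * r 3) * r 2 := by group
      _ = r 2 * r 3 * ((r 2 * r 2) * r 3) * r 2 := by rw [h.h1 1 (by omega) (by omega)]; group
      _ = r 2 * (r 3 * r 3) * r 2 := by rw [h.h1 2 (by omega) (by omega)]; group
      _ = r 2 * r 2 := by rw [h.h1 3 (by omega) (by omega)]; group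
      _ = 1 := h.h1 2 (by omega) (by omega)
  have e1 := eq_inv_of_mul_eq_one_left hXB
  have e2 := eq_inv_of_mul_eq_one_left hYB
  rw [e1, e2]

lemma acomm2 (h : RelHyp r n) (hn : 4 ≤ n) :
    r 2 * (r 1 * r 2 * r 1) * r 2 = r 1 * r 2 * r 1 := by
  have hf := four_comm (h.h1 1 (by omega) (by omega)) (h.h1 2 (by omega) (by omega))
    (h.h3 2 (by omega) (by omega))
  calc r 2 * (r 1 * r 2 * r 1) * r 2 = (r 2 * r 1 * (r 2 * r 1)) * r 2 := by group
    _ = (r 1 * r 2 * (r 1 * r 2)) * r 2 := by rw [← hf]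
    _ = r 1 * r 2 * r 1 * (r 2 * r 2) := by group
    _ = r 1 * r 2 * r 1 := by rw [h.h1 2 (by omega) (by omega)]; group

lemma dstar (h : RelHyp r n) (hn : 4 ≤ n) :
    r 1 * r 2 * r 1 = r 3 * (r 1 * r 2 * r 3 * r 2) * r 3 := by
  have h6 := h.h6 2 (by omega) (by omega)
  have hXW : (r 1 * r 2 * r 1) * (r 3 * (r 2 * r 3 * r 2 * r 1) * r 3) = 1 := by
    calc (r 1 * r 2 * r 1) * (r 3 * (r 2 * r 3 * r 2 * r 1) * r 3)
        = (r 2 * (r 1 * r 2 * r 1) * r 2) * (r 3 * (r 2 * r 3 * r 2 * r 1) * r 3) := by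
          rw [h.acomm2 hn]
      _ = r 2 * r 1 * r 2 * r 1 * r 2 * r (2 + 1) * r 2 * r 3 * r 2 * r 1 * r (2 + 1) := by
          norm_num; group
      _ = 1 := h6
  have hYW : (r 3 * (r 1 * r 2 * r 3 * r 2) * r 3) * (r 3 * (r 2 * r 3 * r 2 * r 1) * r 3) = 1 := by
    calc (r 3 * (r 1 * r 2 * r 3 * r 2) * r 3) * (r 3 * (r 2 * r 3 * r 2 * r 1) * r 3)
        = r 3 * (r 1 * r 2 * r 3 * r 2) * ((r 3 * r 3) * ((r 2 * r 3 * r 2 * r 1) * r 3)) := by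
          group
      _ = r 3 * (r 1 * r 2 * r 3 * (r 2 * r 2) * r 3 * r 2 * r 1) * r 3 := by
          rw [h.h1 3 (by omega) (by omega)]; group
      _ = r 3 * (r 1 * r 2 * (r 3 * r 3) * r 2 * r 1) * r 3 := by
          rw [h.h1 2 (by omega) (by omega)]; group
      _ = r 3 * (r 1 * (r 2 * r 2) * r 1) * r 3 := by
          rw [h.h1 3 (by omega) (by omega)]; group
      _ = r 3 * (r 1 * r 1) * r 3 := by rw [h.h1 2 (by omega) (by omega)]; group
      _ = r 3 * r 3 := by rw [h.h1 1 (by omega) (by omega)]; group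
      _ = 1 := h.h1 3 (by omega) (by omega)
  have e1 := eq_inv_of_mul_eq_one_left hXW
  have e2 := eq_inv_of_mul_eq_one_left hYW
  rw [e1, e2]

lemma dagger (h : RelHyp r n) (hn : 4 ≤ n) :
    r 1 * (r 2 * r 3 * r 2) = (r 2 * r 3 * r 2) * r 1 := by
  have hd := h.dstar hn
  have hs := h.star hn
  calc r 1 * (r 2 * r 3 * r 2)
      = (r 3 * r 3) * (r 1 * r 2 * r 3 * r 2) * (r 3 * r 3) := by
        rw [h.h1 3 (by omega) (by omega)]; group
    _ = r 3 * (r 3 * (r 1 * r 2 * r 3 * r 2) * r 3) * r 3 := by group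
    _ = r 3 * (r 1 * r 2 * r 1) * r 3 := by rw [← hd]
    _ = r 2 * r 3 * r 2 * r 1 := hs
    _ = (r 2 * r 3 * r 2) * r 1 := by group

lemma ycomm (h : RelHyp r n) (hn : 4 ≤ n) :
    r 3 * (r 2 * r 1 * r 2) = (r 2 * r 1 * r 2) * r 3 := by
  have hsq : (r 2 * r 3 * r 2) * (r 2 * r 3 * r 2) = 1 :=
    conj_sq (h.h1 3 (by omega) (by omega)) (h.h1 2 (by omega) (by omega))
  have e1 : (r 2 * r 3 * r 2) * r 1 * (r 2 * r 3 * r 2) = r 1 := by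
    calc (r 2 * r 3 * r 2) * r 1 * (r 2 * r 3 * r 2)
        = (r 1 * (r 2 * r 3 * r 2)) * (r 2 * r 3 * r 2) := by rw [← h.dagger hn]
      _ = r 1 * ((r 2 * r 3 * r 2) * (r 2 * r 3 * r 2)) := by group
      _ = r 1 := by rw [hsq]; group
  have e2 : r 3 * (r 2 * r 1 * r 2) * r 3 = r 2 * r 1 * r 2 := by
    calc r 3 * (r 2 * r 1 * r 2) * r 3
        = (r 2 * r 2) * r 3 * (r 2 * r 1 * r 2) * r 3 * (r 2 * r 2) := by
          rw [h.h1 2 (by omega) (by omega)]; group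
      _ = r 2 * ((r 2 * r 3 * r 2) * r 1 * (r 2 * r 3 * r 2)) * r 2 := by group
      _ = r 2 * r 1 * r 2 := by rw [e1]
  calc r 3 * (r 2 * r 1 * r 2) = r 3 * (r 2 * r 1 * r 2) * (r 3 * r 3) := by
        rw [h.h1 3 (by omega) (by omega)]; group
    _ = (r 3 * (r 2 * r 1 * r 2) * r 3) * r 3 := by group
    _ = (r 2 * r 1 * r 2) * r 3 := by rw [e2]

lemma Tlem (h : RelHyp r n) (hn : 4 ≤ n) :
    (r 1 * r 3 * r 2) * (r 1 * r 3 * r 2) * (r 1 * r 3 * r 2) = 1 := by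
  have sq3 := h.h1 3 (by omega) (by omega)
  have hz1 := h.zc1 hn 3 (by omega) (by omega)
  have hz2 := h.zc2 hn 3 (by omega) (by omega)
  have l13 : r 1 * r 3 = r 3 * (r 3 * r 1 * r 3) := by
    calc r 1 * r 3 = (r 3 * r 3) * (r 1 * r 3) := by rw [sq3]; group
      _ = r 3 * (r 3 * r 1 * r 3) := by group
  have l31 : (r 3 * r 1 * r 3) * r 3 = r 3 * r 1 := by
    calc (r 3 * r 1 * r 3) * r 3 = r 3 * r 1 * (r 3 * r 3) := by group
      _ = r 3 * r 1 := by rw [sq3]; group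
  calc (r 1 * r 3 * r 2) * (r 1 * r 3 * r 2) * (r 1 * r 3 * r 2)
      = (r 1 * r 3) * r 2 * (r 1 * (r 3 * r 2)) * (r 1 * (r 3 * r 2)) := by group
    _ = (r 3 * (r 3 * r 1 * r 3)) * r 2 * (r 1 * (r 3 * r 2)) * (r 1 * (r 3 * r 2)) := by
        rw [l13]
    _ = r 3 * ((r 3 * r 1 * r 3) * r 2) * (r 1 * (r 3 * r 2)) * (r 1 * (r 3 * r 2)) := by group
    _ = r 3 * (r 2 * (r 3 * r 1 * r 3)) * (r 1 * (r 3 * r 2)) * (r 1 * (r 3 * r 2)) := by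
        rw [hz2]
    _ = r 3 * r 2 * ((r 3 * r 1 * r 3) * r 1) * (r 3 * r 2) * (r 1 * (r 3 * r 2)) := by group
    _ = r 3 * r 2 * (r 1 * (r 3 * r 1 * r 3)) * (r 3 * r 2) * (r 1 * (r 3 * r 2)) := by
        rw [hz1]
    _ = r 3 * r 2 * r 1 * ((r 3 * r 1 * r 3) * r 3) * r 2 * (r 1 * (r 3 * r 2)) := by group
    _ = r 3 * r 2 * r 1 * (r 3 * r 1) * r 2 * (r 1 * (r 3 * r 2)) := by rw [l31]
    _ = r 3 * r 2 * r 1 * (r 3 * (r 1 * r 2 * r 1) * r 3) * r 2 := by group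
    _ = r 3 * r 2 * r 1 * (r 2 * r 3 * r 2 * r 1) * r 2 := by rw [h.star hn]
    _ = r 3 * (r 2 * r 1 * r 2) * (r 3 * (r 2 * r 1 * r 2)) := by group
    _ = (r 2 * r 1 * r 2) * r 3 * ((r 2 * r 1 * r 2) * r 3) := by rw [h.ycomm hn]
    _ = (r 2 * r 1 * r 2) * (r 3 * (r 2 * r 1 * r 2)) * r 3 := by group
    _ = (r 2 * r 1 * r 2) * ((r 2 * r 1 * r 2) * r 3) * r 3 := by rw [h.ycomm hn]
    _ = ((r 2 * r 1 * r 2) * (r 2 * r 1 * r 2)) * (r 3 * r 3) := by group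
    _ = 1 := by
        rw [conj_sq (h.h1 1 (by omega) (by omega)) (h.h1 2 (by omega) (by omega)), sq3]; group

lemma sq' (h : RelHyp r n) (k : ℕ) (hk : k ≤ n) : r k * r k = 1 := by
  rcases k with _ | k
  · rw [h.h0, mul_one]
  · exact h.h1 (k + 1) (by omega) hk

lemma Sb_two_def (h : RelHyp r n) : Sb r 2 = r 1 * r 2 * r 3 * r 2 := by
  norm_num [Sb]

lemma Sb_sq (h : RelHyp r n) (hn : 4 ≤ n) (i : ℕ) (hi : i ≤ n - 1) :
    Sb r i * Sb r i = 1 := by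
  rcases Nat.lt_or_ge i 2 with h2 | h2
  · rcases Nat.lt_or_ge i 1 with h1 | h1
    · have : i = 0 := by omega
      subst this
      rw [Sb_zero]; exact h.h1 1 (by omega) (by omega)
    · have : i = 1 := by omega
      subst this
      rw [h.Sb_one]; exact h.a_sq hn
  · rw [h.Sb_two hn i h2 hi]
    exact conj_sq (h.a_sq hn) (h.h1 (i + 1) (by omega) (by omega))

lemma CB1 (h : RelHyp r n) (hn : 4 ≤ n) (i : ℕ) (hi : i ≤ n - 1) : (Sb r i) ^ 2 = 1 := by
  rw [pow_two]; exact h.Sb_sq hn i hi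

lemma CB2 (h : RelHyp r n) (hn : 4 ≤ n) : (Sb r 0 * Sb r 1) ^ 4 = 1 := by
  have e : Sb r 0 * Sb r 1 = r 2 * r 1 := by
    rw [Sb_zero, h.Sb_one]
    calc r 1 * (r 1 * r 2 * r 1) = (r 1 * r 1) * (r 2 * r 1) := by group
      _ = r 2 * r 1 := by rw [h.h1 1 (by omega) (by omega)]; group
  have e2 : r 2 * r 1 = (r 1 * r 2)⁻¹ := by
    rw [mul_inv_rev, inv_self (h.h1 1 (by omega) (by omega)),
      inv_self (h.h1 2 (by omega) (by omega))]
  rw [e, e2, inv_pow, h.h3 2 (by omega) (by omega), inv_one]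

lemma SbS12 (h : RelHyp r n) (hn : 4 ≤ n) : Sb r 1 * Sb r 2 = r 1 * r 3 * r 2 := by
  rw [h.Sb_one, h.Sb_two_def]
  calc (r 1 * r 2 * r 1) * (r 1 * r 2 * r 3 * r 2)
      = r 1 * r 2 * (r 1 * r 1) * (r 2 * (r 3 * r 2)) := by group
    _ = r 1 * (r 2 * r 2) * (r 3 * r 2) := by rw [h.h1 1 (by omega) (by omega)]; group
    _ = r 1 * r 3 * r 2 := by rw [h.h1 2 (by omega) (by omega)]; group

lemma CB3_12 (h : RelHyp r n) (hn : 4 ≤ n) : (Sb r 1 * Sb r 2) ^ 3 = 1 := by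
  calc (Sb r 1 * Sb r 2) ^ 3
      = (r 1 * r 3 * r 2) * (r 1 * r 3 * r 2) * (r 1 * r 3 * r 2) := by
        rw [h.SbS12 hn, pow_succ, pow_succ, pow_one]
    _ = 1 := h.Tlem hn

lemma CB3 (h : RelHyp r n) (hn : 4 ≤ n) (i : ℕ) (h1i : 1 ≤ i) (hi : i ≤ n - 2) :
    (Sb r i * Sb r (i + 1)) ^ 3 = 1 := by
  rcases Nat.lt_or_ge i 2 with hlt | hge
  · have : i = 1 := by omega
    subst this
    exact h.CB3_12 hn
  · have hS1 : Sb r 1 * Sb r 1 = 1 := h.Sb_sq hn 1 (by omega)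
    have hS2 : Sb r 2 * Sb r 2 = 1 := h.Sb_sq hn 2 (by omega)
    have hu3 : (Sb r 2 * Sb r 1) ^ 3 = 1 := by
      have hu : Sb r 2 * Sb r 1 = (Sb r 1 * Sb r 2)⁻¹ := by
        rw [mul_inv_rev, inv_self hS1, inv_self hS2]
      rw [hu, inv_pow, h.CB3_12 hn, inv_one]
    have E1 : Sb r i = r (i + 2) * Sb r 2 * r (i + 2) := by
      rw [h.Sb_two' hn i hge (by omega), h.Sb_two_def]
    have E2 : Sb r (i + 1) = r (i + 2) * Sb r 1 * r (i + 2) := by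
      rw [h.Sb_two hn (i + 1) (by omega) (by omega), h.Sb_one]
    have eP : Sb r i * Sb r (i + 1) = r (i + 2) * (Sb r 2 * Sb r 1) * r (i + 2) := by
      rw [E1, E2]
      calc r (i + 2) * Sb r 2 * r (i + 2) * (r (i + 2) * Sb r 1 * r (i + 2))
          = r (i + 2) * Sb r 2 * ((r (i + 2) * r (i + 2)) * (Sb r 1 * r (i + 2))) := by group
        _ = r (i + 2) * (Sb r 2 * Sb r 1) * r (i + 2) := by
            rw [h.h1 (i + 2) (by omega) (by omega)]; group
    calc (Sb r i * Sb r (i + 1)) ^ 3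
        = (r (i + 2) * (Sb r 2 * Sb r 1) * r (i + 2)) ^ 3 := by rw [eP]
      _ = r (i + 2) * ((Sb r 2 * Sb r 1) * ((r (i + 2) * r (i + 2)) * ((Sb r 2 * Sb r 1) *
            ((r (i + 2) * r (i + 2)) * ((Sb r 2 * Sb r 1) * r (i + 2)))))) := by
          rw [pow_succ, pow_succ, pow_one]; group
      _ = r (i + 2) * ((Sb r 2 * Sb r 1) * ((Sb r 2 * Sb r 1) * (Sb r 2 * Sb r 1))) *
            r (i + 2) := by rw [h.h1 (i + 2) (by omega) (by omega)]; group
      _ = r (i + 2) * (Sb r 2 * Sb r 1) ^ 3 * r (i + 2) := by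
          rw [pow_succ, pow_succ, pow_one]; group
      _ = r (i + 2) * r (i + 2) := by rw [hu3]; group
      _ = 1 := h.h1 (i + 2) (by omega) (by omega)

lemma rkr2rk_comm (h : RelHyp r n) (hn : 4 ≤ n) (k : ℕ) (h3 : 3 ≤ k) (hk : k ≤ n) :
    r 1 * (r k * r 2 * r k) = (r k * r 2 * r k) * r 1 := by
  have hz2 := h.zc2 hn k h3 hk
  have hzz : (r k * r 1 * r k) * (r k * r 1 * r k) = 1 :=
    conj_sq (h.h1 1 (by omega) (by omega)) (h.h1 k (by omega) hk)
  have e0 : (r k * r 1 * r k) * r 2 * (r k * r 1 * r k) = r 2 := by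
    calc (r k * r 1 * r k) * r 2 * (r k * r 1 * r k)
        = (r 2 * (r k * r 1 * r k)) * (r k * r 1 * r k) := by rw [hz2]
      _ = r 2 * ((r k * r 1 * r k) * (r k * r 1 * r k)) := by group
      _ = r 2 := by rw [hzz]; group
  have e1 : r 1 * (r k * r 2 * r k) * r 1 = r k * r 2 * r k := by
    calc r 1 * (r k * r 2 * r k) * r 1
        = (r k * r k) * r 1 * r k * r 2 * r k * r 1 * (r k * r k) := by
          rw [h.h1 k (by omega) hk]; group
      _ = r k * ((r k * r 1 * r k) * r 2 * (r k * r 1 * r k)) * r k := by group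
      _ = r k * r 2 * r k := by rw [e0]
  calc r 1 * (r k * r 2 * r k) = r 1 * (r k * r 2 * r k) * (r 1 * r 1) := by
        rw [h.h1 1 (by omega) (by omega)]; group
    _ = (r 1 * (r k * r 2 * r k) * r 1) * r 1 := by group
    _ = (r k * r 2 * r k) * r 1 := by rw [e1]

lemma c0j (h : RelHyp r n) (hn : 4 ≤ n) (j : ℕ) (h2 : 2 ≤ j) (hj : j ≤ n - 1) :
    r 1 * Sb r j = Sb r j * r 1 := by
  have hz1 := h.zc1 hn (j + 1) (by omega) (by omega)
  have hM := h.rkr2rk_comm hn (j + 1) (by omega) (by omega)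
  have expand : Sb r j =
      (r (j+1) * r 1 * r (j+1)) * (r (j+1) * r 2 * r (j+1)) * (r (j+1) * r 1 * r (j+1)) := by
    rw [h.Sb_two hn j h2 hj]
    calc r (j+1) * (r 1 * r 2 * r 1) * r (j+1)
        = r (j+1) * r 1 * ((r (j+1) * r (j+1)) * (r 2 * ((r (j+1) * r (j+1)) *
            (r 1 * r (j+1))))) := by rw [h.h1 (j + 1) (by omega) (by omega)]; group
      _ = (r (j+1) * r 1 * r (j+1)) * (r (j+1) * r 2 * r (j+1)) *
            (r (j+1) * r 1 * r (j+1)) := by group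
  rw [expand]
  calc r 1 * ((r (j+1) * r 1 * r (j+1)) * (r (j+1) * r 2 * r (j+1)) *
        (r (j+1) * r 1 * r (j+1)))
      = (r 1 * (r (j+1) * r 1 * r (j+1))) * ((r (j+1) * r 2 * r (j+1)) *
          (r (j+1) * r 1 * r (j+1))) := by group
    _ = ((r (j+1) * r 1 * r (j+1)) * r 1) * ((r (j+1) * r 2 * r (j+1)) *
          (r (j+1) * r 1 * r (j+1))) := by rw [← hz1]
    _ = (r (j+1) * r 1 * r (j+1)) * (r 1 * (r (j+1) * r 2 * r (j+1))) *
          (r (j+1) * r 1 * r (j+1)) := by group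
    _ = (r (j+1) * r 1 * r (j+1)) * ((r (j+1) * r 2 * r (j+1)) * r 1) *
          (r (j+1) * r 1 * r (j+1)) := by rw [hM]
    _ = (r (j+1) * r 1 * r (j+1)) * (r (j+1) * r 2 * r (j+1)) *
          (r 1 * (r (j+1) * r 1 * r (j+1))) := by group
    _ = (r (j+1) * r 1 * r (j+1)) * (r (j+1) * r 2 * r (j+1)) *
          ((r (j+1) * r 1 * r (j+1)) * r 1) := by rw [← hz1]
    _ = (r (j+1) * r 1 * r (j+1)) * (r (j+1) * r 2 * r (j+1)) *
          (r (j+1) * r 1 * r (j+1)) * r 1 := by group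

lemma CB4 (h : RelHyp r n) (hn : 4 ≤ n) (i j : ℕ) (hi : i ≤ n - 3) (hij : i + 2 ≤ j)
    (hj : j ≤ n - 1) : (Sb r i * Sb r j) ^ 2 = 1 := by
  rcases Nat.lt_or_ge i 1 with h0 | h1i
  · have : i = 0 := by omega
    subst this
    have hc := h.c0j hn j (by omega) hj
    have hSj := h.Sb_sq hn j hj
    calc (Sb r 0 * Sb r j) ^ 2 = r 1 * (Sb r j * r 1) * Sb r j := by
          rw [pow_two, Sb_zero]; group
      _ = r 1 * (r 1 * Sb r j) * Sb r j := by rw [← hc]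
      _ = (r 1 * r 1) * (Sb r j * Sb r j) := by group
      _ = 1 := by rw [h.h1 1 (by omega) (by omega), hSj]; group
  rcases Nat.lt_or_ge i 2 with h1 | h2i
  · have : i = 1 := by omega
    subst this
    have h4 := h.h4 (j + 1) (by omega) (by omega)
    calc (Sb r 1 * Sb r j) ^ 2
        = ((r 1 * r 2 * r 1) * (r (j+1) * (r 1 * r 2 * r 1) * r (j+1))) ^ 2 := by
          rw [h.Sb_one, h.Sb_two hn j (by omega) hj]
      _ = (r 1 * r 2 * r 1 * r (j+1)) ^ 4 := by
          rw [pow_two, pow_succ, pow_succ, pow_succ, pow_one]; group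
      _ = 1 := h4
  · have harith : j + 1 - (i + 1) + 2 = j - i + 2 := by omega
    have h8 := h.h8 (i + 1) (j + 1) (by omega) (by omega) (by omega) (by omega)
    rw [harith] at h8
    have hXY : Sb r i * (r (j+1) * (r (j-i+2) * (r 1 * r 2 * r 1) * r (j-i+2)) * r (j+1)) = 1 := by
      rw [h.Sb_two hn i (by omega) (by omega)]
      calc (r (i+1) * (r 1 * r 2 * r 1) * r (i+1)) *
            (r (j+1) * (r (j-i+2) * (r 1 * r 2 * r 1) * r (j-i+2)) * r (j+1))
          = r (i + 1) * r 1 * r 2 * r 1 * r (i + 1) * r (j + 1) * r (j-i+2) * r 1 * r 2 * r 1 *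
              r (j-i+2) * r (j + 1) := by group
        _ = 1 := h8
    have hYsq : (r (j+1) * (r (j-i+2) * (r 1 * r 2 * r 1) * r (j-i+2)) * r (j+1)) *
        (r (j+1) * (r (j-i+2) * (r 1 * r 2 * r 1) * r (j-i+2)) * r (j+1)) = 1 :=
      conj_sq (conj_sq (h.a_sq hn) (h.h1 (j-i+2) (by omega) (by omega)))
        (h.h1 (j+1) (by omega) (by omega))
    have E8 : Sb r i = r (j+1) * (r (j-i+2) * (r 1 * r 2 * r 1) * r (j-i+2)) * r (j+1) := by
      have e := eq_inv_of_mul_eq_one_left hXY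
      rw [inv_self hYsq] at e; exact e
    have hm4 : (r (j-i+2) * (r 1 * r 2 * r 1)) ^ 4 = 1 := by
      have h4 := h.h4 (j-i+2) (by omega) (by omega)
      have hfree : (r (j-i+2) * (r 1 * r 2 * r 1)) ^ 4 =
          r (j-i+2) * ((r 1 * r 2 * r 1 * r (j-i+2)) ^ 4 * (r (j-i+2))⁻¹) := by
        rw [pow_succ, pow_succ, pow_succ, pow_one,
          pow_succ (r 1 * r 2 * r 1 * r (j-i+2)), pow_succ (r 1 * r 2 * r 1 * r (j-i+2)),
          pow_succ (r 1 * r 2 * r 1 * r (j-i+2)), pow_one]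
        group
      rw [hfree, h4, one_mul, mul_inv_cancel]
    have eP : Sb r i * Sb r j =
        r (j+1) * (r (j-i+2) * (r 1 * r 2 * r 1) * r (j-i+2) * (r 1 * r 2 * r 1)) * r (j+1) := by
      rw [E8, h.Sb_two hn j (by omega) hj]
      calc (r (j+1) * (r (j-i+2) * (r 1 * r 2 * r 1) * r (j-i+2)) * r (j+1)) *
            (r (j+1) * (r 1 * r 2 * r 1) * r (j+1))
          = r (j+1) * (r (j-i+2) * (r 1 * r 2 * r 1) * r (j-i+2)) *
              ((r (j+1) * r (j+1)) * ((r 1 * r 2 * r 1) * r (j+1))) := by group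
        _ = r (j+1) * (r (j-i+2) * (r 1 * r 2 * r 1) * r (j-i+2) * (r 1 * r 2 * r 1)) *
              r (j+1) := by rw [h.h1 (j+1) (by omega) (by omega)]; group
    calc (Sb r i * Sb r j) ^ 2
        = (r (j+1) * (r (j-i+2) * (r 1 * r 2 * r 1) * r (j-i+2) * (r 1 * r 2 * r 1)) *
            r (j+1)) ^ 2 := by rw [eP]
      _ = r (j+1) * (r (j-i+2) * (r 1 * r 2 * r 1) * r (j-i+2) * (r 1 * r 2 * r 1) *
            ((r (j+1) * r (j+1)) * (r (j-i+2) * (r 1 * r 2 * r 1) * r (j-i+2) *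
              (r 1 * r 2 * r 1)))) * r (j+1) := by rw [pow_two]; group
      _ = r (j+1) * ((r (j-i+2) * (r 1 * r 2 * r 1)) * ((r (j-i+2) * (r 1 * r 2 * r 1)) *
            ((r (j-i+2) * (r 1 * r 2 * r 1)) * (r (j-i+2) * (r 1 * r 2 * r 1))))) *
            r (j+1) := by rw [h.h1 (j+1) (by omega) (by omega)]; group
      _ = r (j+1) * (r (j-i+2) * (r 1 * r 2 * r 1)) ^ 4 * r (j+1) := by
          rw [pow_succ, pow_succ, pow_succ, pow_one]; group
      _ = r (j+1) * r (j+1) := by rw [hm4]; group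
      _ = 1 := h.h1 (j+1) (by omega) (by omega)

lemma PS (h : RelHyp r n) (hn : 4 ≤ n) (k : ℕ) (hk : k + 1 ≤ n) :
    Pw (Sb r) k = r (k + 1) * r k := by
  induction k with
  | zero => rw [Pw_zero, Sb_zero, h.h0, mul_one]
  | succ k ih =>
    rw [Pw_succ, ih (by omega), Sb_succ]
    calc r (k+1) * r k * (r k * r (k+1) * r (k+2) * r (k+1))
        = r (k+1) * ((r k * r k) * (r (k+1) * (r (k+2) * r (k+1)))) := by group
      _ = (r (k+1) * r (k+1)) * (r (k+2) * r (k+1)) := by rw [h.sq' k (by omega)]; group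
      _ = r (k+2) * r (k+1) := by rw [h.h1 (k+1) (by omega) (by omega)]; group

lemma RS (h : RelHyp r n) (hn : 4 ≤ n) (k : ℕ) (hk : k ≤ n) : Rw (Sb r) k = r k := by
  induction k with
  | zero => rw [Rw_zero, h.h0]
  | succ k ih =>
    rw [Rw_succ, h.PS hn k (by omega), ih (by omega)]
    calc r (k+1) * r k * r k = r (k+1) * (r k * r k) := by group
      _ = r (k+1) := by rw [h.sq' k (by omega)]; group

end RelHyp

/-! ### Assembly: the two presented groups and the isomorphism -/

section Assembly

variable (n : ℕ)

def sigW : ℕ → PresentedGroup (coxRelsB n) := fun i => PresentedGroup.mk _ (sB n i)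

def rhoH : ℕ → PresentedGroup (relsB n) := fun k => PresentedGroup.mk _ (rB n k)

def fmap : GenB n → PresentedGroup (coxRelsB n) := fun x => Rw (sigW n) x.1

def gmap : CoxGenB n → PresentedGroup (relsB n) := fun x => Sb (rhoH n) x.1

lemma mk_rel_one {α : Type*} {rels : Set (FreeGroup α)} {w : FreeGroup α} (hw : w ∈ rels) :
    PresentedGroup.mk rels w = 1 :=
  (QuotientGroup.eq_one_iff w).2 (Subgroup.subset_normalClosure hw)

lemma coxHyp_sigW (hn : 4 ≤ n) : CoxHyp (sigW n) n := by
  have hsq : ∀ i, i ≤ n - 1 → sigW n i * sigW n i = 1 := by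
    intro i hi
    have hmem : ((sB n i) ^ 2) ∈ coxRelsB n := Or.inl ⟨i, hi, rfl⟩
    have h1 := mk_rel_one hmem
    rw [map_pow, pow_two] at h1
    exact h1
  have h4 : (sigW n 0 * sigW n 1) ^ 4 = 1 := by
    have hmem : ((sB n 0 * sB n 1) ^ 4) ∈ coxRelsB n := Or.inr (Or.inl rfl)
    have h1 := mk_rel_one hmem
    rw [map_pow, map_mul] at h1
    exact h1
  refine ⟨hsq, ?_, ?_, ?_⟩
  · have hf := four_comm (hsq 0 (by omega)) (hsq 1 (by omega)) h4
    calc sigW n 0 * sigW n 1 * sigW n 0 * sigW n 1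
        = sigW n 0 * sigW n 1 * (sigW n 0 * sigW n 1) := by group
      _ = sigW n 1 * sigW n 0 * (sigW n 1 * sigW n 0) := hf
      _ = sigW n 1 * sigW n 0 * sigW n 1 * sigW n 0 := by group
  · intro i h1 h2
    have hmem : ((sB n i * sB n (i + 1)) ^ 3) ∈ coxRelsB n :=
      Or.inr (Or.inr (Or.inl ⟨i, h1, by omega, rfl⟩))
    have hc : (sigW n i * sigW n (i + 1)) ^ 3 = 1 := by
      have hc' := mk_rel_one hmem
      rw [map_pow, map_mul] at hc'
      exact hc'
    have hb := braid_of_cube (hsq (i + 1) (by omega)) hc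
    rw [inv_self (hsq i (by omega)), inv_self (hsq (i + 1) (by omega))] at hb
    exact hb
  · intro i j hij hj
    have hmem : ((sB n i * sB n j) ^ 2) ∈ coxRelsB n :=
      Or.inr (Or.inr (Or.inr ⟨i, j, by omega, hij, hj, rfl⟩))
    have hc := mk_rel_one hmem
    rw [map_pow, map_mul] at hc
    exact two_comm (hsq i (by omega)) (hsq j hj) hc

lemma relHyp_rhoH (hn : 4 ≤ n) : RelHyp (rhoH n) n := by
  refine ⟨?_, ?_, ?_, ?_, ?_, ?_, ?_, ?_, ?_⟩
  · show PresentedGroup.mk _ (rB n 0) = 1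
    rw [rB, dif_neg (by omega)]
    exact map_one _
  · intro k h1 h2
    have hc := mk_rel_one (show ((rB n k) ^ 2) ∈ relsB n from Or.inl ⟨k, h1, h2, rfl⟩)
    rw [map_pow, pow_two] at hc
    exact hc
  · have hc := mk_rel_one (show ((rB n 2 * rB n 3) ^ 6) ∈ relsB n from Or.inr (Or.inl rfl))
    rw [map_pow, map_mul] at hc
    exact hc
  · intro k h1 h2
    have hc := mk_rel_one (show ((rB n 1 * rB n k) ^ 4) ∈ relsB n from
      Or.inr (Or.inr (Or.inl ⟨k, h1, h2, rfl⟩)))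
    rw [map_pow, map_mul] at hc
    exact hc
  · intro k h1 h2
    have hc := mk_rel_one (show ((rB n 1 * rB n 2 * rB n 1 * rB n k) ^ 4) ∈ relsB n from
      Or.inr (Or.inr (Or.inr (Or.inl ⟨k, h1, h2, rfl⟩))))
    simp only [map_pow, map_mul] at hc
    exact hc
  · intro k h1 h2
    have hc := mk_rel_one (show ((rB n k * rB n 1 * rB n k * rB n 2) ^ 2) ∈ relsB n from
      Or.inr (Or.inr (Or.inr (Or.inr (Or.inl ⟨k, h1, h2, rfl⟩)))))
    simp only [map_pow, map_mul] at hc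
    exact hc
  · intro k h1 h2
    have hc := mk_rel_one (show _ ∈ relsB n from
      Or.inr (Or.inr (Or.inr (Or.inr (Or.inr (Or.inl ⟨k, h1, h2, rfl⟩))))))
    simp only [map_mul] at hc
    exact hc
  · intro k h1 h2
    have hc := mk_rel_one (show _ ∈ relsB n from
      Or.inr (Or.inr (Or.inr (Or.inr (Or.inr (Or.inr (Or.inl ⟨k, h1, h2, rfl⟩)))))))
    simp only [map_mul] at hc
    exact hc
  · intro k l h1 h2 h3 h4
    have hc := mk_rel_one (show _ ∈ relsB n from
      Or.inr (Or.inr (Or.inr (Or.inr (Or.inr (Or.inr (Or.inr ⟨k, l, h1, h2, h3, h4, rfl⟩)))))))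
    simp only [map_mul] at hc
    exact hc

lemma lift_rB (k : ℕ) (hk : 1 ≤ k ∧ k ≤ n) :
    FreeGroup.lift (fmap n) (rB n k) = Rw (sigW n) k := by
  rw [rB, dif_pos hk]
  exact FreeGroup.lift_apply_of

lemma lift_sB (i : ℕ) (hi : i ≤ n - 1) :
    FreeGroup.lift (gmap n) (sB n i) = Sb (rhoH n) i := by
  rw [sB, dif_pos hi]
  exact FreeGroup.lift_apply_of

lemma liftF_rels (hn : 4 ≤ n) : ∀ w ∈ relsB n, FreeGroup.lift (fmap n) w = 1 := by
  have hcox := coxHyp_sigW n hn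
  intro w hw
  rcases hw with ⟨k, h1, h2, rfl⟩ | rfl | ⟨k, h1, h2, rfl⟩ | ⟨k, h1, h2, rfl⟩ | ⟨k, h1, h2, rfl⟩ |
    ⟨k, h1, h2, rfl⟩ | ⟨k, h1, h2, rfl⟩ | ⟨k, l, h1, h2, h3, h4, rfl⟩
  · rw [map_pow, lift_rB n k ⟨h1, h2⟩]
    exact hcox.RA1 k h2
  · rw [map_pow, map_mul, lift_rB n 2 ⟨by omega, by omega⟩, lift_rB n 3 ⟨by omega, by omega⟩]
    exact hcox.RA2 hn
  · rw [map_pow, map_mul, lift_rB n 1 ⟨by omega, by omega⟩, lift_rB n k ⟨by omega, h2⟩]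
    exact hcox.RA3 hn k h1 h2
  · simp only [map_pow, map_mul]
    rw [lift_rB n 1 ⟨by omega, by omega⟩, lift_rB n 2 ⟨by omega, by omega⟩,
      lift_rB n k ⟨by omega, h2⟩]
    exact hcox.RA4 hn k h1 h2
  · simp only [map_pow, map_mul]
    rw [lift_rB n k ⟨by omega, h2⟩, lift_rB n 1 ⟨by omega, by omega⟩,
      lift_rB n 2 ⟨by omega, by omega⟩]
    exact hcox.RA5 hn k h1 h2
  · simp only [map_mul]
    rw [lift_rB n k ⟨by omega, by omega⟩, lift_rB n 1 ⟨by omega, by omega⟩,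
      lift_rB n 2 ⟨by omega, by omega⟩, lift_rB n 3 ⟨by omega, by omega⟩,
      lift_rB n (k + 1) ⟨by omega, by omega⟩]
    exact hcox.RA6 hn k h1 h2
  · simp only [map_mul]
    rw [lift_rB n (k + 1) ⟨by omega, by omega⟩, lift_rB n 1 ⟨by omega, by omega⟩,
      lift_rB n 2 ⟨by omega, by omega⟩, lift_rB n (k - 1) ⟨by omega, by omega⟩,
      lift_rB n k ⟨by omega, by omega⟩]
    exact hcox.RA7 hn k h1 h2
  · simp only [map_mul]
    rw [lift_rB n k ⟨by omega, by omega⟩, lift_rB n 1 ⟨by omega, by omega⟩,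
      lift_rB n 2 ⟨by omega, by omega⟩, lift_rB n l ⟨by omega, h4⟩,
      lift_rB n (l - k + 2) ⟨by omega, by omega⟩]
    exact hcox.RA8 hn k l h1 h2 h3 h4

lemma liftG_rels (hn : 4 ≤ n) : ∀ w ∈ coxRelsB n, FreeGroup.lift (gmap n) w = 1 := by
  have hrel := relHyp_rhoH n hn
  intro w hw
  rcases hw with ⟨i, hi, rfl⟩ | rfl | ⟨i, h1, h2, rfl⟩ | ⟨i, j, h1, h2, h3, rfl⟩
  · rw [map_pow, lift_sB n i hi]
    exact hrel.CB1 hn i hi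
  · rw [map_pow, map_mul, lift_sB n 0 (by omega), lift_sB n 1 (by omega)]
    exact hrel.CB2 hn
  · rw [map_pow, map_mul, lift_sB n i (by omega), lift_sB n (i + 1) (by omega)]
    exact hrel.CB3 hn i h1 h2
  · rw [map_pow, map_mul, lift_sB n i (by omega), lift_sB n j h3]
    exact hrel.CB4 hn i j h1 h2 h3

noncomputable def phiAB (hn : 4 ≤ n) :
    PresentedGroup (relsB n) →* PresentedGroup (coxRelsB n) :=
  PresentedGroup.toGroup (liftF_rels n hn)

noncomputable def psiBA (hn : 4 ≤ n) :
    PresentedGroup (coxRelsB n) →* PresentedGroup (relsB n) :=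
  PresentedGroup.toGroup (liftG_rels n hn)

lemma main_iso (hn : 4 ≤ n) :
    Nonempty (PresentedGroup (relsB n) ≃* PresentedGroup (coxRelsB n)) := by
  have hcox := coxHyp_sigW n hn
  have hrel := relHyp_rhoH n hn
  set A := phiAB n hn with hA
  set B := psiBA n hn with hB
  have eA : ∀ k, k ≤ n → A (rhoH n k) = Rw (sigW n) k := by
    intro k hk
    rcases k with _ | t
    · show A (PresentedGroup.mk _ (rB n 0)) = _
      rw [rB, dif_neg (by omega), map_one, map_one, Rw_zero]
    · show A (PresentedGroup.mk _ (rB n (t + 1))) = _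
      rw [rB, dif_pos (⟨by omega, hk⟩ : 1 ≤ t + 1 ∧ t + 1 ≤ n)]
      exact PresentedGroup.toGroup.of (liftF_rels n hn)
  have eB : ∀ i, i ≤ n - 1 → B (sigW n i) = Sb (rhoH n) i := by
    intro i hi
    show B (PresentedGroup.mk _ (sB n i)) = _
    rw [sB, dif_pos hi]
    exact PresentedGroup.toGroup.of (liftG_rels n hn)
  have hBA : B.comp A = MonoidHom.id _ := by
    apply PresentedGroup.ext
    intro x
    obtain ⟨k, hk⟩ := x
    show B (A (PresentedGroup.of ⟨k, hk⟩)) = PresentedGroup.of ⟨k, hk⟩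
    calc B (A (PresentedGroup.of ⟨k, hk⟩)) = B (Rw (sigW n) k) := by
          rw [hA, phiAB]; erw [PresentedGroup.toGroup.of]; rfl
      _ = Rw (fun i => B (sigW n i)) k := map_Rw B (sigW n) k
      _ = Rw (Sb (rhoH n)) k := Rw_congr k (fun i hik => eB i (by omega))
      _ = rhoH n k := hrel.RS hn k hk.2
      _ = PresentedGroup.of ⟨k, hk⟩ := by
          show PresentedGroup.mk (relsB n) (rB n k) = _
          rw [rB, dif_pos hk]; rfl
  have hAB : A.comp B = MonoidHom.id _ := by
    apply PresentedGroup.ext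
    intro x
    obtain ⟨i, hi⟩ := x
    show A (B (PresentedGroup.of ⟨i, hi⟩)) = PresentedGroup.of ⟨i, hi⟩
    have hstep : A (B (PresentedGroup.of ⟨i, hi⟩)) = Sb (fun k => A (rhoH n k)) i := by
      calc A (B (PresentedGroup.of ⟨i, hi⟩)) = A (Sb (rhoH n) i) := by
            rw [hB, psiBA]; erw [PresentedGroup.toGroup.of]; rfl
        _ = Sb (fun k => A (rhoH n k)) i := map_Sb A (rhoH n) i
    rw [hstep]
    rcases i with _ | t
    · show A (rhoH n 1) = PresentedGroup.of ⟨0, hi⟩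
      rw [eA 1 (by omega), CoxHyp.Rw_one]
      show PresentedGroup.mk _ (sB n 0) = _
      rw [sB, dif_pos (by omega : (0:ℕ) ≤ n - 1)]; rfl
    · rw [Sb_succ]
      show A (rhoH n t) * A (rhoH n (t + 1)) * A (rhoH n (t + 2)) * A (rhoH n (t + 1)) = _
      rw [eA t (by omega), eA (t + 1) (by omega), eA (t + 2) (by omega)]
      have hS := hcox.Ssk (t + 1) (by omega) (by omega)
      simp only [Nat.add_sub_cancel] at hS
      rw [hS]
      show PresentedGroup.mk _ (sB n (t + 1)) = _
      rw [sB, dif_pos hi]; rfl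
  exact ⟨MonoidHom.toMulEquiv A B hBA hAB⟩

end Assembly
end BnPf

theorem stmt1 (n : ℕ) (hn : 3 < n) :
    Nonempty (PresentedGroup (relsB n) ≃* PresentedGroup (coxRelsB n)) := by
  exact BnPf.main_iso n (by omega)
end

section
/- Let n > 3. The group presented by generators r̄_2, r_2, r_3, …, r_n subject to the relators (Rd1)–(Rd10) is isomorphic to the Coxeter group of type D_n, i.e. the group with generators s_0', s_1, …, s_{n-1} and relators s_i^2 for i ∈ [1,n-1], (s_0')^2, (s_0' s_2)^3, (s_i s_{i+1})^3 for i ∈ [1,n-2], (s_0' s_i)^2 for i ∈ {1} ∪ [3,n-1], and (s_i s_j)^2 for i ∈ [1,n-1] and j ∈ [i+2,n-1]. -/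
set_option linter.unusedSectionVars false
set_option maxHeartbeats 1000000


/-- Generator indices for the prefix-reversal presentation of `D_n`:
`none` stands for `r̄_2` and `some k` for `r_k`, `k ∈ [2,n]`. -/
def GenD (n : ℕ) : Type := Option {k : ℕ // 2 ≤ k ∧ k ≤ n}

/-- The generator `r̄_2` as an element of the free group. -/
def rbD (n : ℕ) : FreeGroup (GenD n) := FreeGroup.of none

/-- The generator `r_k` as an element of the free group (equal to `1` out of range;
all occurrences in the relators below are in range). -/
def rD (n : ℕ) (k : ℕ) : FreeGroup (GenD n) :=
  if h : 2 ≤ k ∧ k ≤ n then FreeGroup.of (some ⟨k, h⟩) else 1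

/-- The relators (Rd1)–(Rd10). -/
def relsD (n : ℕ) : Set (FreeGroup (GenD n)) :=
  {w | (w = (rbD n) ^ 2) ∨
       (∃ k, 2 ≤ k ∧ k ≤ n ∧ w = (rD n k) ^ 2) ∨
       (w = (rbD n * rD n 2) ^ 2) ∨
       (w = (rD n 2 * rD n 3) ^ 3) ∨
       (∃ k, 4 ≤ k ∧ k ≤ n ∧ w = (rD n 2 * rD n k) ^ 4) ∨
       (w = (rbD n * rD n 3 * rD n 2 * rD n 3) ^ 3) ∨
       (∃ k, 4 ≤ k ∧ k ≤ n ∧ w = (rbD n * rD n k * rD n 2 * rD n k) ^ 2) ∨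
       (∃ k, 3 ≤ k ∧ k ≤ n - 1 ∧
         w = rD n k * rD n (k - 1) * rD n (k + 1) * rD n 2 *
             rD n (k + 1) * rD n k * rD n (k + 1)) ∨
       (∃ k, 3 ≤ k ∧ k ≤ n - 1 ∧
         w = (rD n k * rD n (k - 1)) ^ 2 * rD n (k + 1) * rD n 3 *
             rD n (k + 1) * rD n (k - 1) * rD n (k + 1)) ∨
       (∃ l k, 4 ≤ l ∧ l ≤ n ∧ 3 ≤ k ∧ k ≤ l - 2 ∧
         w = rD n l * rD n (l - k + 2) * rD n 2 * rD n (l - k + 2) *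
             rD n l * rD n k * rD n 2 * rD n k)}

/-- Generator indices for the Coxeter presentation of `D_n`:
`none` stands for `s_0'` and `some i` for `s_i`, `i ∈ [1,n-1]`. -/
def CoxGenD (n : ℕ) : Type := Option {i : ℕ // 1 ≤ i ∧ i ≤ n - 1}

/-- The generator `s_0'` as an element of the free group. -/
def s0D (n : ℕ) : FreeGroup (CoxGenD n) := FreeGroup.of none

/-- The generator `s_i` as an element of the free group. -/
def sD (n : ℕ) (i : ℕ) : FreeGroup (CoxGenD n) :=
  if h : 1 ≤ i ∧ i ≤ n - 1 then FreeGroup.of (some ⟨i, h⟩) else 1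

/-- The type `D_n` Coxeter relators. -/
def coxRelsD (n : ℕ) : Set (FreeGroup (CoxGenD n)) :=
  {w | (∃ i, 1 ≤ i ∧ i ≤ n - 1 ∧ w = (sD n i) ^ 2) ∨
       (w = (s0D n) ^ 2) ∨
       (w = (s0D n * sD n 2) ^ 3) ∨
       (∃ i, 1 ≤ i ∧ i ≤ n - 2 ∧ w = (sD n i * sD n (i + 1)) ^ 3) ∨
       (∃ i, (i = 1 ∨ (3 ≤ i ∧ i ≤ n - 1)) ∧ w = (s0D n * sD n i) ^ 2) ∨
       (∃ i j, 1 ≤ i ∧ i ≤ n - 1 ∧ i + 2 ≤ j ∧ j ≤ n - 1 ∧ w = (sD n i * sD n j) ^ 2)}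

namespace Aux2
variable (n : ℕ)

abbrev GG := PresentedGroup (relsD n)
abbrev HH := PresentedGroup (coxRelsD n)

def τ (k : ℕ) : GG n := PresentedGroup.mk _ (rD n k)
def aG : GG n := PresentedGroup.mk _ (rbD n)
def uG (i : ℕ) : GG n := τ n (i + 1) * (τ n 2 * τ n (i + 1))

variable {n}

lemma relG {w : FreeGroup (GenD n)} (h : w ∈ relsD n) :
    PresentedGroup.mk (relsD n) w = 1 :=
  (QuotientGroup.eq_one_iff w).2 (Subgroup.subset_normalClosure h)

variable (hn : 3 < n)
include hn

omit hn in
lemma τsq (k : ℕ) : τ n k * τ n k = 1 := by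
  by_cases h : 2 ≤ k ∧ k ≤ n
  · have := relG (n := n) (w := (rD n k) ^ 2) (Or.inr (Or.inl ⟨k, h.1, h.2, rfl⟩))
    simpa [τ, pow_two] using this
  · simp [τ, rD, dif_neg h]

omit hn in
lemma τcan (k : ℕ) (x : GG n) : τ n k * (τ n k * x) = x := by
  rw [← mul_assoc, τsq, one_mul]

omit hn in
lemma τinv (k : ℕ) : (τ n k)⁻¹ = τ n k := by
  rw [inv_eq_iff_mul_eq_one, τsq]

omit hn in
lemma asq : aG n * aG n = 1 := by
  have := relG (n := n) (w := (rbD n) ^ 2) (Or.inl rfl)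
  simpa [aG, pow_two] using this

omit hn in
lemma acan (x : GG n) : aG n * (aG n * x) = x := by rw [← mul_assoc, asq, one_mul]

omit hn in
lemma usq (i : ℕ) (x : GG n) : uG n i * (uG n i * x) = x := by
  simp [uG, mul_assoc, τcan]

lemma gR3 : aG n * (τ n 2 * (aG n * τ n 2)) = 1 := by
  have := relG (n := n) (Or.inr (Or.inr (Or.inl rfl)))
  simpa [τ, aG, map_mul, map_pow, pow_succ, mul_assoc] using this

lemma gR4 : τ n 2 * (τ n 3 * (τ n 2 * (τ n 3 * (τ n 2 * τ n 3)))) = 1 := by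
  have := relG (n := n) (Or.inr (Or.inr (Or.inr (Or.inl rfl))))
  simpa [τ, map_mul, map_pow, pow_succ, mul_assoc] using this

lemma gR5 (k : ℕ) (h4 : 4 ≤ k) (hk : k ≤ n) :
    τ n 2 * (τ n k * (τ n 2 * (τ n k * (τ n 2 * (τ n k * (τ n 2 * τ n k)))))) = 1 := by
  have := relG (n := n) (Or.inr (Or.inr (Or.inr (Or.inr (Or.inl ⟨k, h4, hk, rfl⟩)))))
  simpa [τ, map_mul, map_pow, pow_succ, mul_assoc] using this

lemma gR6 : aG n * (τ n 3 * (τ n 2 * (τ n 3 * (aG n * (τ n 3 *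
    (τ n 2 * (τ n 3 * (aG n * (τ n 3 * (τ n 2 * τ n 3)))))))))) = 1 := by
  have := relG (n := n) (Or.inr (Or.inr (Or.inr (Or.inr (Or.inr (Or.inl rfl))))))
  simpa [τ, aG, map_mul, map_pow, pow_succ, mul_assoc] using this

lemma gR7 (k : ℕ) (h4 : 4 ≤ k) (hk : k ≤ n) :
    aG n * (τ n k * (τ n 2 * (τ n k * (aG n * (τ n k * (τ n 2 * τ n k)))))) = 1 := by
  have := relG (n := n)
    (Or.inr (Or.inr (Or.inr (Or.inr (Or.inr (Or.inr (Or.inl ⟨k, h4, hk, rfl⟩)))))))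
  simpa [τ, aG, map_mul, map_pow, pow_succ, mul_assoc] using this

lemma rel8 (k : ℕ) (h3 : 3 ≤ k) (h1 : k ≤ n - 1) :
    τ n k * (τ n (k - 1) * (τ n (k + 1) * (τ n 2 * (τ n (k + 1) * (τ n k * τ n (k + 1)))))) = 1 := by
  have := relG (n := n) (Or.inr (Or.inr (Or.inr (Or.inr (Or.inr (Or.inr (Or.inr (Or.inl
    ⟨k, h3, h1, rfl⟩))))))))
  simpa [τ, map_mul, mul_assoc] using this

lemma rel9 (k : ℕ) (h3 : 3 ≤ k) (h1 : k ≤ n - 1) :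
    τ n k * (τ n (k - 1) * (τ n k * (τ n (k - 1) * (τ n (k + 1) * (τ n 3 *
      (τ n (k + 1) * (τ n (k - 1) * τ n (k + 1)))))))) = 1 := by
  have := relG (n := n) (Or.inr (Or.inr (Or.inr (Or.inr (Or.inr (Or.inr (Or.inr (Or.inr (Or.inl
    ⟨k, h3, h1, rfl⟩)))))))))
  simpa [τ, map_mul, map_pow, pow_succ, mul_assoc] using this

lemma rel10 (l k : ℕ) (h4 : 4 ≤ l) (hl : l ≤ n) (h3 : 3 ≤ k) (hk : k ≤ l - 2) :
    τ n l * (τ n (l - k + 2) * (τ n 2 * (τ n (l - k + 2) * (τ n l *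
      (τ n k * (τ n 2 * τ n k)))))) = 1 := by
  have := relG (n := n) (Or.inr (Or.inr (Or.inr (Or.inr (Or.inr (Or.inr (Or.inr (Or.inr (Or.inr
    ⟨l, k, h4, hl, h3, hk, rfl⟩)))))))))
  simpa [τ, map_mul, mul_assoc] using this

lemma R8' (k : ℕ) (h3 : 3 ≤ k) (h1 : k ≤ n - 1) :
    uG n k = τ n (k - 1) * (τ n k * (τ n (k + 1) * τ n k)) := by
  have h := rel8 hn k h3 h1
  have := congrArg (fun y => τ n (k - 1) * (τ n k * y) * (τ n (k + 1) * τ n k)) h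
  simpa [uG, mul_assoc, τcan, τsq] using this

/-- The main conjugation lemma on the `G` side:  `τ_l u_j τ_l = u_{l-j}`. -/
lemma F1 (l j : ℕ) (h2 : 2 ≤ l) (hl : l ≤ n) (hj1 : 1 ≤ j) (hjl : j ≤ l - 1) :
    τ n l * (uG n j * τ n l) = uG n (l - j) := by
  have hl1 : l - 1 + 1 = l := by omega
  by_cases hj : j = 1
  · subst hj
    rw [show l - 1 = l - 1 from rfl]
    simp only [uG, hl1]
    simp [mul_assoc, τcan]
  by_cases hjtop : j = l - 1
  · subst hjtop
    have : l - (l - 1) = 1 := by omega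
    rw [this]
    simp only [uG, hl1]
    simp [mul_assoc, τcan, τsq]
  -- now 2 ≤ j ≤ l - 2
  have hj2 : 2 ≤ j := by omega
  have hjl2 : j ≤ l - 2 := by omega
  by_cases hj3 : 3 ≤ j
  · -- direct from Rd10
    have h := rel10 hn l (l - j + 1) (by omega) hl (by omega) (by omega)
    rw [show l - (l - j + 1) + 2 = j + 1 by omega] at h
    have := congrArg (fun y => y * (τ n (l - j + 1) * (τ n 2 * τ n (l - j + 1)))) h
    simp only [uG]
    simpa [mul_assoc, τcan, τsq] using this
  -- j = 2
  have hj2' : j = 2 := by omega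
  subst hj2'
  by_cases hl5 : 5 ≤ l
  · -- use Rd10 with k = 3
    have h := rel10 hn l 3 (by omega) hl le_rfl (by omega)
    rw [show l - 3 + 2 = l - 2 + 1 by omega] at h
    have e := congrArg (fun y => y * (τ n 3 * (τ n 2 * τ n 3))) h
    simp only [mul_assoc, τcan, τsq, mul_one, one_mul] at e
    -- e : τ l * (τ (l-2+1) * (τ 2 * (τ (l-2+1) * τ l))) = τ 3 * (τ 2 * τ 3)
    have e2 := congrArg (fun y => τ n l * (y * τ n l)) e
    simp only [uG]
    simpa [mul_assoc, τcan, τsq] using e2.symm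
  -- l = 4 : the special case
  have hl4 : l = 4 := by omega
  subst hl4
  have hn1 : (3:ℕ) ≤ n - 1 := by omega
  -- diamond : τ4 τ2 τ4 = τ2 τ3 τ4 τ3   (from Rd8 at k = 3)
  have h8 := rel8 hn 3 le_rfl hn1
  norm_num at h8
  -- kappa : τ3 τ4 τ3 = τ2 τ4 τ2 τ4
  have kap : τ n 3 * (τ n 4 * τ n 3) = τ n 2 * (τ n 4 * (τ n 2 * τ n 4)) := by
    have := congrArg (fun y => τ n 2 * (τ n 3 * y) * (τ n 4 * τ n 3)) h8
    have e := congrArg (fun y => τ n 2 * y) this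
    simpa [mul_assoc, τcan, τsq] using e.symm
  -- heart : τ4 τ3 τ4 = τ2 τ3 τ2 τ3 τ4 τ2   (from Rd9 at k = 3)
  have h9 := rel9 hn 3 le_rfl hn1
  norm_num at h9
  have heart : τ n 4 * (τ n 3 * τ n 4) =
      τ n 2 * (τ n 3 * (τ n 2 * (τ n 3 * (τ n 4 * τ n 2)))) := by
    have := congrArg
      (fun y => τ n 2 * (τ n 3 * (τ n 2 * (τ n 3 * y))) * (τ n 4 * τ n 2)) h9
    simpa [mul_assoc, τcan, τsq] using this
  -- E : (τ4 τ3 τ2 τ3)² = 1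
  have c1 : τ n 4 * (τ n 3 * (τ n 2 * (τ n 3 * (τ n 4 * (τ n 3 * (τ n 2 * τ n 3)))))) =
      τ n 4 * (τ n 3 * (τ n 4 * (τ n 2 * (τ n 4 * (τ n 2 * τ n 3))))) := by
    have := congrArg (fun y => τ n 4 * (τ n 3 * (τ n 2 * y)) * (τ n 2 * τ n 3)) kap
    simpa [mul_assoc, τcan, τsq] using this
  have c2 : τ n 4 * (τ n 3 * (τ n 4 * (τ n 2 * (τ n 4 * (τ n 2 * τ n 3))))) =
      τ n 2 * (τ n 3 * (τ n 2 * (τ n 3 * (τ n 2 * τ n 3)))) := by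
    have := congrArg (fun y => y * (τ n 2 * (τ n 4 * (τ n 2 * τ n 3)))) heart
    simpa [mul_assoc, τcan, τsq] using this
  have E : τ n 4 * (τ n 3 * (τ n 2 * (τ n 3 * (τ n 4 * (τ n 3 * (τ n 2 * τ n 3)))))) = 1 :=
    c1.trans (c2.trans (gR4 hn))
  have := congrArg (fun y => y * (τ n 3 * (τ n 2 * τ n 3))) E
  norm_num
  simp only [uG]
  norm_num
  simpa [mul_assoc, τcan, τsq] using this

end Aux2

namespace Aux2
variable (n : ℕ)

/-- `CG t = u_1 u_2 ⋯ u_t` -/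
def CG : ℕ → GG n
  | 0 => 1
  | t + 1 => CG t * uG n (t + 1)

/-- `SG k` : the word for the prefix reversal `r_k` in terms of the `u_i`. -/
def SG : ℕ → GG n
  | 0 => 1
  | k + 1 => CG n k * SG k

variable {n} (hn : 3 < n)
include hn

omit hn in
lemma uG1 : uG n 1 = τ n 2 := by simp [uG, mul_assoc, τcan, τsq]

lemma SG2 : SG n 2 = τ n 2 := by
  show CG n 1 * SG n 1 = τ n 2
  show (CG n 0 * uG n 1) * (CG n 0 * SG n 0) = τ n 2
  show ((1:GG n) * uG n 1) * ((1:GG n) * 1) = τ n 2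
  simp [uG1]

lemma SG3 : SG n 3 = τ n 3 := by
  show CG n 2 * SG n 2 = τ n 3
  rw [SG2 hn]
  show (CG n 1 * uG n 2) * τ n 2 = τ n 3
  show ((CG n 0 * uG n 1) * uG n 2) * τ n 2 = τ n 3
  show (((1:GG n) * uG n 1) * uG n 2) * τ n 2 = τ n 3
  rw [uG1]
  have := congrArg (fun y => y * τ n 3) (gR4 hn)
  simpa [uG, mul_assoc, τcan, τsq] using this

lemma SG_eq : ∀ k, 2 ≤ k → k ≤ n → SG n k = τ n k := by
  intro k
  induction k using Nat.strong_induction_on with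
  | _ k ih =>
    intro h2 hk
    match k, h2 with
    | 2, _ => exact SG2 hn
    | 3, _ => exact SG3 hn
    | (m + 4), _ =>
      have e3 : SG n (m + 3) = τ n (m + 3) := ih (m + 3) (by omega) (by omega) (by omega)
      have e2 : SG n (m + 2) = τ n (m + 2) := ih (m + 2) (by omega) (by omega) (by omega)
      have hC : CG n (m + 2) = τ n (m + 3) * τ n (m + 2) := by
        have hh : CG n (m + 2) * SG n (m + 2) = SG n (m + 3) := rfl
        rw [e3, e2] at hh
        have := congrArg (fun y => y * τ n (m + 2)) hh
        simpa [mul_assoc, τcan, τsq] using this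
      have hr : uG n (m + 3) = τ n (m + 2) * (τ n (m + 3) * (τ n (m + 4) * τ n (m + 3))) := by
        have := R8' hn (m + 3) (by omega) (by omega)
        simpa using this
      show CG n (m + 3) * SG n (m + 3) = τ n (m + 4)
      show (CG n (m + 2) * uG n (m + 3)) * SG n (m + 3) = τ n (m + 4)
      rw [e3, hC, hr]
      simp [mul_assoc, τcan, τsq]

end Aux2

namespace Aux2
variable (n : ℕ)

def σ (i : ℕ) : HH n := PresentedGroup.mk _ (sD n i)
def σ0 : HH n := PresentedGroup.mk _ (s0D n)

variable {n}

lemma relH {w : FreeGroup (CoxGenD n)} (h : w ∈ coxRelsD n) :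
    PresentedGroup.mk (coxRelsD n) w = 1 :=
  (QuotientGroup.eq_one_iff w).2 (Subgroup.subset_normalClosure h)

lemma σsq (i : ℕ) : σ n i * σ n i = 1 := by
  by_cases h : 1 ≤ i ∧ i ≤ n - 1
  · have := relH (n := n) (w := (sD n i) ^ 2) (Or.inl ⟨i, h.1, h.2, rfl⟩)
    simpa [σ, pow_two] using this
  · simp [σ, sD, dif_neg h]

lemma σcan (i : ℕ) (x : HH n) : σ n i * (σ n i * x) = x := by
  rw [← mul_assoc, σsq, one_mul]

lemma σinv (i : ℕ) : (σ n i)⁻¹ = σ n i := by rw [inv_eq_iff_mul_eq_one, σsq]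

lemma σ0sq : σ0 n * σ0 n = 1 := by
  have := relH (n := n) (w := (s0D n) ^ 2) (Or.inr (Or.inl rfl))
  simpa [σ0, pow_two] using this

lemma σ0can (x : HH n) : σ0 n * (σ0 n * x) = x := by rw [← mul_assoc, σ0sq, one_mul]

lemma coxRel3 : σ0 n * (σ n 2 * (σ0 n * (σ n 2 * (σ0 n * σ n 2)))) = 1 := by
  have := relH (n := n) (Or.inr (Or.inr (Or.inl rfl)))
  simpa [σ, σ0, map_mul, map_pow, pow_succ, mul_assoc] using this

lemma braidRel (i : ℕ) (h1 : 1 ≤ i) (h2 : i ≤ n - 2) :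
    σ n i * (σ n (i + 1) * (σ n i * (σ n (i + 1) * (σ n i * σ n (i + 1))))) = 1 := by
  have := relH (n := n) (Or.inr (Or.inr (Or.inr (Or.inl ⟨i, h1, h2, rfl⟩))))
  simpa [σ, map_mul, map_pow, pow_succ, mul_assoc] using this

lemma cox5Rel (i : ℕ) (h : i = 1 ∨ (3 ≤ i ∧ i ≤ n - 1)) :
    σ0 n * (σ n i * (σ0 n * σ n i)) = 1 := by
  have := relH (n := n) (Or.inr (Or.inr (Or.inr (Or.inr (Or.inl ⟨i, h, rfl⟩)))))
  simpa [σ, σ0, map_mul, map_pow, pow_succ, mul_assoc] using this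

lemma commRel (i j : ℕ) (h1 : 1 ≤ i) (h2 : i + 2 ≤ j) (h3 : j ≤ n - 1) :
    σ n i * (σ n j * (σ n i * σ n j)) = 1 := by
  have := relH (n := n) (Or.inr (Or.inr (Or.inr (Or.inr (Or.inr
    ⟨i, j, h1, by omega, h2, h3, rfl⟩)))))
  simpa [σ, map_mul, map_pow, pow_succ, mul_assoc] using this

/-- commuting generators, valid without upper range assumptions. -/
lemma hcomm (i j : ℕ) (h1 : 1 ≤ i) (h2 : i + 2 ≤ j) : σ n i * σ n j = σ n j * σ n i := by
  by_cases h3 : j ≤ n - 1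
  · have h := commRel i j h1 h2 h3
    have := congrArg (fun y => y * (σ n j * σ n i)) h
    simpa [mul_assoc, σcan, σsq] using this
  · have : σ n j = 1 := by simp [σ, sD, dif_neg (fun hh : 1 ≤ j ∧ j ≤ n - 1 => h3 hh.2)]
    rw [this, one_mul, mul_one]

/-- braid relation in usable form. -/
lemma hbraid (i : ℕ) (h1 : 1 ≤ i) (h2 : i ≤ n - 2) :
    σ n i * (σ n (i + 1) * σ n i) = σ n (i + 1) * (σ n i * σ n (i + 1)) := by
  have h := braidRel i h1 h2
  have := congrArg (fun y => y * (σ n (i + 1) * (σ n i * σ n (i + 1)))) h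
  simpa [mul_assoc, σcan, σsq] using this

variable (n)

/-- `Cc t = σ_1 σ_2 ⋯ σ_t`. -/
def Cc : ℕ → HH n
  | 0 => 1
  | t + 1 => Cc t * σ n (t + 1)

/-- `Ss k` : the image of the prefix reversal `r_k`. -/
def Ss : ℕ → HH n
  | 0 => 1
  | k + 1 => Cc n k * Ss k

variable {n}

lemma commC (j t : ℕ) (h : t + 2 ≤ j) : σ n j * Cc n t = Cc n t * σ n j := by
  induction t with
  | zero => show σ n j * 1 = 1 * σ n j; simp
  | succ t ih =>
      show σ n j * (Cc n t * σ n (t + 1)) = (Cc n t * σ n (t + 1)) * σ n j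
      rw [← mul_assoc, ih (by omega), mul_assoc, ← hcomm (t + 1) j (by omega) (by omega),
        mul_assoc]

lemma commS (j m : ℕ) (h : m + 1 ≤ j) : σ n j * Ss n m = Ss n m * σ n j := by
  induction m with
  | zero => show σ n j * 1 = 1 * σ n j; simp
  | succ m ih =>
      show σ n j * (Cc n m * Ss n m) = (Cc n m * Ss n m) * σ n j
      rw [← mul_assoc, commC j m (by omega), mul_assoc, ih (by omega), mul_assoc]

/-- key : `S_k C_k = C_k⁻¹ S_k`. -/
lemma SsC : ∀ k, Ss n k * Cc n k = (Cc n k)⁻¹ * Ss n k := by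
  intro k
  induction k with
  | zero => show (1:HH n) * 1 = 1⁻¹ * 1; simp
  | succ k ih =>
      show (Cc n k * Ss n k) * (Cc n k * σ n (k + 1)) =
        (Cc n k * σ n (k + 1))⁻¹ * (Cc n k * Ss n k)
      rw [mul_inv_rev, σinv]
      calc (Cc n k * Ss n k) * (Cc n k * σ n (k + 1))
          = Cc n k * ((Ss n k * Cc n k) * σ n (k + 1)) := by group
        _ = Cc n k * (((Cc n k)⁻¹ * Ss n k) * σ n (k + 1)) := by rw [ih]
        _ = Ss n k * σ n (k + 1) := by group
        _ = σ n (k + 1) * Ss n k := (commS (k + 1) k (by omega)).symm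
        _ = σ n (k + 1) * (Cc n k)⁻¹ * (Cc n k * Ss n k) := by group

lemma Ss_sq : ∀ k, Ss n k * Ss n k = 1 := by
  intro k
  induction k with
  | zero => show (1:HH n) * 1 = 1; simp
  | succ k ih =>
      show (Cc n k * Ss n k) * (Cc n k * Ss n k) = 1
      calc (Cc n k * Ss n k) * (Cc n k * Ss n k)
          = Cc n k * ((Ss n k * Cc n k) * Ss n k) := by group
        _ = Cc n k * (((Cc n k)⁻¹ * Ss n k) * Ss n k) := by rw [SsC]
        _ = Ss n k * Ss n k := by group
        _ = 1 := ih

lemma Sscan (k : ℕ) (x : HH n) : Ss n k * (Ss n k * x) = x := by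
  rw [← mul_assoc, Ss_sq, one_mul]

lemma Ssinv (k : ℕ) : (Ss n k)⁻¹ = Ss n k := by rw [inv_eq_iff_mul_eq_one, Ss_sq]

lemma SS (k : ℕ) : Ss n (k + 1) * Ss n k = Cc n k := by
  show (Cc n k * Ss n k) * Ss n k = Cc n k
  rw [mul_assoc, Ss_sq, mul_one]

lemma SS' (k : ℕ) : Ss n k * Ss n (k + 1) = (Cc n k)⁻¹ := by
  show Ss n k * (Cc n k * Ss n k) = (Cc n k)⁻¹
  rw [← mul_assoc, SsC, mul_assoc, Ss_sq, mul_one]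

/-- `C_l σ_m = σ_{m+1} C_l` for `1 ≤ m ≤ l-1`, `l ≤ n-1`. -/
lemma Ccσ : ∀ l m, 1 ≤ m → m + 1 ≤ l → l ≤ n - 1 → Cc n l * σ n m = σ n (m + 1) * Cc n l := by
  intro l
  induction l with
  | zero => intro m h1 h2; omega
  | succ l ih =>
      intro m h1 h2 h3
      by_cases hm : m + 1 ≤ l
      · show (Cc n l * σ n (l + 1)) * σ n m = σ n (m + 1) * (Cc n l * σ n (l + 1))
        rw [mul_assoc, ← hcomm m (l + 1) h1 (by omega), ← mul_assoc,
          ih m h1 hm (by omega), mul_assoc]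
      · have hm' : m = l := by omega
        subst hm'
        obtain ⟨t, rfl⟩ : ∃ t, m = t + 1 := ⟨m - 1, by omega⟩
        show (Cc n (t + 1) * σ n (t + 2)) * σ n (t + 1) =
          σ n (t + 2) * (Cc n (t + 1) * σ n (t + 2))
        show ((Cc n t * σ n (t + 1)) * σ n (t + 2)) * σ n (t + 1) =
          σ n (t + 2) * ((Cc n t * σ n (t + 1)) * σ n (t + 2))
        calc ((Cc n t * σ n (t + 1)) * σ n (t + 2)) * σ n (t + 1)
            = Cc n t * (σ n (t + 1) * (σ n (t + 2) * σ n (t + 1))) := by group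
          _ = Cc n t * (σ n (t + 2) * (σ n (t + 1) * σ n (t + 2))) := by
              rw [hbraid (t + 1) (by omega) (by omega)]
          _ = (σ n (t + 2) * Cc n t) * (σ n (t + 1) * σ n (t + 2)) := by
              rw [commC (t + 2) t (by omega)]; group
          _ = σ n (t + 2) * ((Cc n t * σ n (t + 1)) * σ n (t + 2)) := by group

/-- The conjugation lemma on the Coxeter side : `S_l σ_j S_l = σ_{l-j}`. -/
lemma Bσ : ∀ l, 2 ≤ l → l ≤ n → ∀ j, 1 ≤ j → j ≤ l - 1 →
    Ss n l * (σ n j * Ss n l) = σ n (l - j) := by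
  intro l hl2
  induction l, hl2 using Nat.le_induction with
  | base =>
      intro _ j h1 h2
      have : j = 1 := by omega
      subst this
      have hS2 : Ss n 2 = σ n 1 := by
        show Cc n 1 * Ss n 1 = σ n 1
        show (Cc n 0 * σ n 1) * (Cc n 0 * Ss n 0) = σ n 1
        show ((1:HH n) * σ n 1) * ((1:HH n) * 1) = σ n 1
        simp
      rw [hS2]
      show σ n 1 * (σ n 1 * σ n 1) = σ n (2 - 1)
      rw [σcan]
  | succ l hl ih =>
      intro hln j h1 h2
      have main : ∀ j, 1 ≤ j → j ≤ l - 1 →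
          Ss n (l + 1) * (σ n j * Ss n (l + 1)) = σ n (l + 1 - j) := by
        intro j hj1 hj2
        have step1 : Ss n (l + 1) * (σ n j * Ss n (l + 1)) =
            Cc n l * (Ss n l * (σ n j * Ss n l)) * (Cc n l)⁻¹ := by
          show (Cc n l * Ss n l) * (σ n j * (Cc n l * Ss n l)) = _
          have : σ n j * (Cc n l * Ss n l) =
              (σ n j * Ss n l) * ((Ss n l * Cc n l) * Ss n l) := by
            simp [mul_assoc, Sscan]
          rw [this, SsC]
          simp [mul_assoc, Ss_sq, Sscan]
        rw [step1, ih (by omega) j hj1 hj2,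
          Ccσ l (l - j) (by omega) (by omega) (by omega)]
        rw [mul_assoc, mul_inv_cancel, mul_one]
        congr 1
        omega
      by_cases hj : j ≤ l - 1
      · exact main j h1 hj
      · have hjl : j = l := by omega
        have h1' := main 1 le_rfl (by omega)
        rw [show l + 1 - 1 = l from by omega] at h1'
        rw [hjl, show l + 1 - l = 1 from by omega, ← h1']
        simp [mul_assoc, Sscan, σcan, Ss_sq]

end Aux2

namespace Aux2
variable (n : ℕ)

def fφ : GenD n → HH n := fun x => x.elim (σ0 n) (fun p => Ss n p.1)

variable {n}

lemma Ss2eq : Ss n 2 = σ n 1 := by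
  show Cc n 1 * Ss n 1 = σ n 1
  show (Cc n 0 * σ n 1) * (Cc n 0 * Ss n 0) = σ n 1
  show ((1:HH n) * σ n 1) * ((1:HH n) * 1) = σ n 1
  simp

lemma Ss3eq : Ss n 3 = σ n 1 * (σ n 2 * σ n 1) := by
  show Cc n 2 * Ss n 2 = _
  rw [Ss2eq]
  show (Cc n 1 * σ n 2) * σ n 1 = _
  show ((Cc n 0 * σ n 1) * σ n 2) * σ n 1 = _
  show (((1:HH n) * σ n 1) * σ n 2) * σ n 1 = _
  simp [mul_assoc]

lemma CmC (m : ℕ) : Cc n (m + 1) * σ n (m + 1) = Cc n m := by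
  show (Cc n m * σ n (m + 1)) * σ n (m + 1) = Cc n m
  rw [mul_assoc, σsq, mul_one]

lemma Cinv' (m : ℕ) : (Cc n m)⁻¹ = σ n (m + 1) * (Cc n (m + 1))⁻¹ := by
  rw [show Cc n (m + 1) = Cc n m * σ n (m + 1) from rfl, mul_inv_rev, σinv, σcan]

lemma liftφ_rb : FreeGroup.lift (fφ n) (rbD n) = σ0 n := FreeGroup.lift_apply_of

lemma liftφ_r (k : ℕ) (h2 : 2 ≤ k) (hk : k ≤ n) :
    FreeGroup.lift (fφ n) (rD n k) = Ss n k := by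
  rw [rD, dif_pos ⟨h2, hk⟩]; exact FreeGroup.lift_apply_of

variable (hn : 3 < n)
include hn

lemma hφ : ∀ r ∈ relsD n, FreeGroup.lift (fφ n) r = 1 := by
  rintro r (rfl | ⟨k, h1, h2, rfl⟩ | rfl | rfl | ⟨k, h1, h2, rfl⟩ | rfl | ⟨k, h1, h2, rfl⟩ |
    ⟨k, h1, h2, rfl⟩ | ⟨k, h1, h2, rfl⟩ | ⟨l, k, h1, h2, h3, h4, rfl⟩)
  · simp [map_pow, liftφ_rb, pow_two, σ0sq]
  · simp [map_pow, liftφ_r k h1 h2, pow_two, Ss_sq]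
  · -- (rb r2)^2
    have l2 := liftφ_r (n := n) 2 le_rfl (by omega)
    have h := cox5Rel (n := n) 1 (Or.inl rfl)
    simp only [map_pow, map_mul, liftφ_rb, l2, Ss2eq]
    simpa [pow_succ, mul_assoc] using h
  · -- (r2 r3)^3
    have l2 := liftφ_r (n := n) 2 le_rfl (by omega)
    have l3 := liftφ_r (n := n) 3 (by omega) (by omega)
    simp only [map_pow, map_mul, l2, l3, Ss2eq, Ss3eq]
    have h := braidRel (n := n) 1 le_rfl (by omega)
    have := congrArg (fun y => σ n 2 * y * σ n 2) h
    simpa [pow_succ, mul_assoc, σcan, σsq] using this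
  · -- (r2 rk)^4
    have l2 := liftφ_r (n := n) 2 le_rfl (by omega)
    have lk := liftφ_r (n := n) k (by omega) h2
    have bk := Bσ (n := n) k (by omega) h2 1 le_rfl (by omega)
    have bk' : ∀ x, Ss n k * (σ n 1 * (Ss n k * x)) = σ n (k - 1) * x := fun x => by
      rw [← bk]; group
    simp only [map_pow, map_mul, l2, lk, Ss2eq]
    simp only [pow_succ, pow_zero, one_mul, mul_assoc]
    rw [bk', bk]
    exact commRel 1 (k - 1) le_rfl (by omega) (by omega)
  · -- (rb r3 r2 r3)^3
    have l2 := liftφ_r (n := n) 2 le_rfl (by omega)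
    have l3 := liftφ_r (n := n) 3 (by omega) (by omega)
    have b3 := Bσ (n := n) 3 (by omega) (by omega) 1 le_rfl (by omega)
    norm_num at b3
    have b3' : ∀ x, Ss n 3 * (σ n 1 * (Ss n 3 * x)) = σ n 2 * x := fun x => by
      rw [← b3]; group
    simp only [map_pow, map_mul, liftφ_rb, l2, l3, Ss2eq]
    simp only [pow_succ, pow_zero, one_mul, mul_assoc]
    rw [b3', b3', b3]
    exact coxRel3
  · -- (rb rk r2 rk)^2
    have l2 := liftφ_r (n := n) 2 le_rfl (by omega)
    have lk := liftφ_r (n := n) k (by omega) h2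
    have bk := Bσ (n := n) k (by omega) h2 1 le_rfl (by omega)
    have bk' : ∀ x, Ss n k * (σ n 1 * (Ss n k * x)) = σ n (k - 1) * x := fun x => by
      rw [← bk]; group
    simp only [map_pow, map_mul, liftφ_rb, l2, lk, Ss2eq]
    simp only [pow_succ, pow_zero, one_mul, mul_assoc]
    rw [bk', bk]
    exact cox5Rel (k - 1) (Or.inr ⟨by omega, by omega⟩)
  · -- Rd8
    obtain ⟨m, rfl⟩ : ∃ m, k = m + 1 := ⟨k - 1, by omega⟩
    have hm2 : 2 ≤ m := by omega
    have hmn : m + 2 ≤ n := by omega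
    have l2 := liftφ_r (n := n) 2 le_rfl (by omega)
    have lm := liftφ_r (n := n) m (by omega) (by omega)
    have lm1 := liftφ_r (n := n) (m + 1) (by omega) (by omega)
    have lm2 := liftφ_r (n := n) (m + 2) (by omega) (by omega)
    have b1 := Bσ (n := n) (m + 2) (by omega) (by omega) 1 le_rfl (by omega)
    rw [show m + 2 - 1 = m + 1 from by omega] at b1
    have b1' : ∀ x, Ss n (m + 2) * (σ n 1 * (Ss n (m + 2) * x)) = σ n (m + 1) * x :=
      fun x => by rw [← b1]; group
    simp only [Nat.add_sub_cancel, map_pow, map_mul, l2, lm, lm1, lm2, Ss2eq]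
    simp only [mul_assoc]
    rw [b1', SS', ← mul_assoc, SS, ← mul_assoc,
      show Cc n m * σ n (m + 1) = Cc n (m + 1) from rfl, mul_inv_cancel]
  · -- Rd9
    obtain ⟨m, rfl⟩ : ∃ m, k = m + 1 := ⟨k - 1, by omega⟩
    have hm2 : 2 ≤ m := by omega
    have hmn : m + 2 ≤ n := by omega
    have l3 := liftφ_r (n := n) 3 (by omega) (by omega)
    have lm := liftφ_r (n := n) m (by omega) (by omega)
    have lm1 := liftφ_r (n := n) (m + 1) (by omega) (by omega)
    have lm2 := liftφ_r (n := n) (m + 2) (by omega) (by omega)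
    have b1 := Bσ (n := n) (m + 2) (by omega) (by omega) 1 le_rfl (by omega)
    rw [show m + 2 - 1 = m + 1 from by omega] at b1
    have b1' : ∀ x, Ss n (m + 2) * (σ n 1 * (Ss n (m + 2) * x)) = σ n (m + 1) * x :=
      fun x => by rw [← b1]; group
    have b2 := Bσ (n := n) (m + 2) (by omega) (by omega) 2 (by omega) (by omega)
    rw [show m + 2 - 2 = m from by omega] at b2
    have b2' : ∀ x, Ss n (m + 2) * (σ n 2 * (Ss n (m + 2) * x)) = σ n m * x :=
      fun x => by rw [← b2]; group
    have conj3 : ∀ x, Ss n (m + 2) * (Ss n 3 * (Ss n (m + 2) * x)) =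
        σ n (m + 1) * (σ n m * (σ n (m + 1) * x)) := by
      intro x
      have : Ss n (m + 2) * (Ss n 3 * (Ss n (m + 2) * x)) =
          Ss n (m + 2) * (σ n 1 * (Ss n (m + 2) * (Ss n (m + 2) * (σ n 2 *
            (Ss n (m + 2) * (Ss n (m + 2) * (σ n 1 * (Ss n (m + 2) * x)))))))) := by
        rw [Ss3eq]; simp [mul_assoc, Sscan]
      rw [this, b1', b2', b1']
    have SS2 : Ss n m * Ss n (m + 2) = (Cc n m)⁻¹ * (σ n (m + 1) * (Cc n m)⁻¹) := by
      have e1 : Ss n m * Ss n (m + 2) =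
          ((Ss n m * Cc n m) * σ n (m + 1)) * (Cc n m * Ss n m) := by
        rw [show Ss n (m + 2) = Cc n (m + 1) * Ss n (m + 1) from rfl,
          show Cc n (m + 1) = Cc n m * σ n (m + 1) from rfl,
          show Ss n (m + 1) = Cc n m * Ss n m from rfl]
        group
      rw [e1, SsC]
      have e2 : Ss n m * σ n (m + 1) = σ n (m + 1) * Ss n m :=
        (commS (m + 1) m le_rfl).symm
      calc (((Cc n m)⁻¹ * Ss n m) * σ n (m + 1)) * (Cc n m * Ss n m)
          = (Cc n m)⁻¹ * ((Ss n m * σ n (m + 1)) * (Cc n m * Ss n m)) := by group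
        _ = (Cc n m)⁻¹ * ((σ n (m + 1) * Ss n m) * (Cc n m * Ss n m)) := by rw [e2]
        _ = (Cc n m)⁻¹ * (σ n (m + 1) * ((Ss n m * Cc n m) * Ss n m)) := by group
        _ = (Cc n m)⁻¹ * (σ n (m + 1) * (((Cc n m)⁻¹ * Ss n m) * Ss n m)) := by rw [SsC]
        _ = (Cc n m)⁻¹ * (σ n (m + 1) * ((Cc n m)⁻¹ * (Ss n m * Ss n m))) := by group
        _ = (Cc n m)⁻¹ * (σ n (m + 1) * (Cc n m)⁻¹) := by rw [Ss_sq, mul_one]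
    have ss' : ∀ x, Ss n (m + 1) * (Ss n m * x) = Cc n m * x := fun x => by
      rw [← mul_assoc, SS]
    have cs' : ∀ x, Cc n (m + 1) * (σ n m * x) = σ n (m + 1) * (Cc n (m + 1) * x) :=
      fun x => by rw [← mul_assoc, Ccσ (m + 1) m (by omega) (by omega) (by omega), mul_assoc]
    simp only [Nat.add_sub_cancel, map_pow, map_mul, l3, lm, lm1, lm2]
    simp only [pow_succ, pow_zero, one_mul, mul_assoc]
    rw [conj3, SS2, ss', ss']
    rw [Cinv' m]
    simp only [σcan]
    -- now : Cc m * (Cc m * (σ (m+1) * (σ m * (σ (m+1) * (σ (m+1) * (Cc (m+1))⁻¹ *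
    --        (σ (m+1) * (Cc (m+1))⁻¹ ... )))))
    rw [← CmC m]
    simp only [mul_assoc, σcan]
    rw [cs']
    simp only [σcan, mul_inv_cancel_left, inv_mul_cancel_left, mul_inv_cancel]
  · -- Rd10
    have hm4 : 4 ≤ l - k + 2 := by omega
    have hml : l - k + 2 ≤ l - 1 := by omega
    have l2 := liftφ_r (n := n) 2 le_rfl (by omega)
    have ll := liftφ_r (n := n) l (by omega) h2
    have lk := liftφ_r (n := n) k (by omega) (by omega)
    have lm := liftφ_r (n := n) (l - k + 2) (by omega) (by omega)
    have bk := Bσ (n := n) k (by omega) (by omega) 1 le_rfl (by omega)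
    have bm := Bσ (n := n) (l - k + 2) (by omega) (by omega) 1 le_rfl (by omega)
    have bm' : ∀ x, Ss n (l - k + 2) * (σ n 1 * (Ss n (l - k + 2) * x)) =
        σ n (l - k + 2 - 1) * x := fun x => by rw [← bm]; group
    have bl := Bσ (n := n) l (by omega) h2 (l - k + 2 - 1) (by omega) (by omega)
    rw [show l - (l - k + 2 - 1) = k - 1 from by omega] at bl
    have bl' : ∀ x, Ss n l * (σ n (l - k + 2 - 1) * (Ss n l * x)) = σ n (k - 1) * x :=
      fun x => by rw [← bl]; group
    simp only [map_pow, map_mul, l2, ll, lk, lm, Ss2eq]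
    simp only [mul_assoc]
    rw [bk, bm', bl', σsq]

end Aux2

namespace Aux2
variable (n : ℕ)

def fψ : CoxGenD n → GG n := fun x => x.elim (aG n) (fun p => uG n p.1)

variable {n}

lemma liftψ_s0 : FreeGroup.lift (fψ n) (s0D n) = aG n := FreeGroup.lift_apply_of

lemma liftψ_s (i : ℕ) (h1 : 1 ≤ i) (h2 : i ≤ n - 1) :
    FreeGroup.lift (fψ n) (sD n i) = uG n i := by
  rw [sD, dif_pos ⟨h1, h2⟩]; exact FreeGroup.lift_apply_of

variable (hn : 3 < n)
include hn

lemma u2u1cube : (uG n 2 * uG n 1) ^ 3 = 1 := by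
  have h := gR4 hn
  have := congrArg (fun y => τ n 3 * (y * y) * τ n 3) h
  simpa [uG, pow_succ, mul_assoc, τcan, τsq] using this

lemma hψ : ∀ r ∈ coxRelsD n, FreeGroup.lift (fψ n) r = 1 := by
  rintro r (⟨i, h1, h2, rfl⟩ | rfl | rfl | ⟨i, h1, h2, rfl⟩ | ⟨i, hh, rfl⟩ |
    ⟨i, j, h1, h2, h3, h4, rfl⟩)
  · -- s_i^2
    simp [map_pow, liftψ_s i h1 h2, pow_two, uG, mul_assoc, τcan, τsq]
  · simp [map_pow, liftψ_s0, pow_two, asq]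
  · -- (s0 s2)^3
    have l2 := liftψ_s (n := n) 2 (by omega) (by omega)
    have h := gR6 hn
    simp only [map_pow, map_mul, liftψ_s0, l2, uG]
    simpa [pow_succ, mul_assoc] using h
  · -- braid (s_i s_{i+1})^3
    by_cases hi : i = 1
    · subst hi
      have l1 := liftψ_s (n := n) 1 le_rfl (by omega)
      have l2 := liftψ_s (n := n) 2 (by omega) (by omega)
      have h := gR4 hn
      have := congrArg (fun y => y * y) h
      simp only [map_pow, map_mul, l1, l2, uG]
      simpa [pow_succ, mul_assoc, τcan, τsq] using this
    · have hi2 : 2 ≤ i := by omega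
      have li := liftψ_s (n := n) i h1 (by omega)
      have li1 := liftψ_s (n := n) (i + 1) (by omega) (by omega)
      have f2 := F1 hn (i + 2) 2 (by omega) (by omega) (by omega) (by omega)
      rw [show i + 2 - 2 = i from by omega] at f2
      have f1 := F1 hn (i + 2) 1 (by omega) (by omega) le_rfl (by omega)
      rw [show i + 2 - 1 = i + 1 from by omega] at f1
      have key := u2u1cube hn
      simp only [map_pow, map_mul, li, li1]
      rw [← f2, ← f1]
      have := congrArg (fun y => τ n (i + 2) * y * τ n (i + 2)) key
      simpa [uG, pow_succ, mul_assoc, τcan, τsq] using this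
  · -- (s0 s_i)^2
    rcases hh with rfl | ⟨h3, h4⟩
    · have l1 := liftψ_s (n := n) 1 le_rfl (by omega)
      have h := gR3 hn
      simp only [map_pow, map_mul, liftψ_s0, l1, uG]
      simpa [pow_succ, mul_assoc, τcan, τsq] using h
    · have li := liftψ_s (n := n) i (by omega) h4
      have h := gR7 hn (i + 1) (by omega) (by omega)
      simp only [map_pow, map_mul, liftψ_s0, li, uG]
      simpa [pow_succ, mul_assoc, τcan, τsq] using h
  · -- (s_i s_j)^2
    have li := liftψ_s (n := n) i h1 (by omega)
    have lj := liftψ_s (n := n) j (by omega) h4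
    -- conjugate by τ (j+1)
    have gi := F1 hn (j + 1) (j + 1 - i) (by omega) (by omega) (by omega) (by omega)
    rw [show j + 1 - (j + 1 - i) = i from by omega] at gi
    have gj := F1 hn (j + 1) 1 (by omega) (by omega) le_rfl (by omega)
    rw [show j + 1 - 1 = j from by omega] at gj
    have key2 : (uG n (j + 1 - i) * uG n 1) ^ 2 = 1 := by
      have h := gR5 hn (j + 1 - i + 1) (by omega) (by omega)
      have := congrArg (fun y => τ n (j + 1 - i + 1) * y * τ n (j + 1 - i + 1)) h
      simpa [uG, pow_succ, mul_assoc, τcan, τsq] using this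
    simp only [map_pow, map_mul, li, lj]
    rw [← gi, ← gj]
    have := congrArg (fun y => τ n (j + 1) * y * τ n (j + 1)) key2
    simpa [uG, pow_succ, mul_assoc, τcan, τsq] using this

end Aux2

namespace Aux2
variable {n : ℕ} (hn : 3 < n)
include hn

lemma φh_τ (k : ℕ) (h2 : 2 ≤ k) (hk : k ≤ n) :
    PresentedGroup.toGroup (hφ hn) (τ n k) = Ss n k := by
  have : τ n k = PresentedGroup.of (rels := relsD n) (some ⟨k, h2, hk⟩) := by
    rw [τ, rD, dif_pos ⟨h2, hk⟩]; rfl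
  rw [this]; exact PresentedGroup.toGroup.of _

lemma ψh_σ (i : ℕ) (h1 : 1 ≤ i) (h2 : i ≤ n - 1) :
    PresentedGroup.toGroup (hψ hn) (σ n i) = uG n i := by
  have : σ n i = PresentedGroup.of (rels := coxRelsD n) (some ⟨i, h1, h2⟩) := by
    rw [σ, sD, dif_pos ⟨h1, h2⟩]; rfl
  rw [this]; exact PresentedGroup.toGroup.of _

lemma ψh_C : ∀ t, t ≤ n - 1 → PresentedGroup.toGroup (hψ hn) (Cc n t) = CG n t := by
  intro t
  induction t with
  | zero => intro _; exact map_one _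
  | succ t ih =>
      intro ht
      show PresentedGroup.toGroup (hψ hn) (Cc n t * σ n (t + 1)) = CG n t * uG n (t + 1)
      rw [map_mul, ih (by omega), ψh_σ hn (t + 1) (by omega) ht]

lemma ψh_S : ∀ k, k ≤ n → PresentedGroup.toGroup (hψ hn) (Ss n k) = SG n k := by
  intro k
  induction k with
  | zero => intro _; exact map_one _
  | succ k ih =>
      intro hk
      show PresentedGroup.toGroup (hψ hn) (Cc n k * Ss n k) = CG n k * SG n k
      rw [map_mul, ih (by omega), ψh_C hn k (by omega)]

lemma main : Nonempty (GG n ≃* HH n) := by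
  refine ⟨MonoidHom.toMulEquiv (PresentedGroup.toGroup (hφ hn))
    (PresentedGroup.toGroup (hψ hn)) ?_ ?_⟩
  · apply PresentedGroup.ext
    rintro (_ | ⟨k, hk2, hkn⟩)
    · simp only [MonoidHom.comp_apply, MonoidHom.id_apply]
      have e1 : PresentedGroup.toGroup (hφ hn) (PresentedGroup.of (rels := relsD n) none)
          = σ0 n := PresentedGroup.toGroup.of _
      rw [e1]
      exact PresentedGroup.toGroup.of _
    · simp only [MonoidHom.comp_apply, MonoidHom.id_apply]
      have e1 : PresentedGroup.toGroup (hφ hn)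
          (PresentedGroup.of (rels := relsD n) (some ⟨k, hk2, hkn⟩)) = Ss n k :=
        PresentedGroup.toGroup.of _
      rw [e1, ψh_S hn k hkn, SG_eq hn k hk2 hkn]
      rw [show τ n k = PresentedGroup.of (rels := relsD n) (some ⟨k, hk2, hkn⟩) from by
        rw [τ, rD, dif_pos ⟨hk2, hkn⟩]; rfl]
  · apply PresentedGroup.ext
    rintro (_ | ⟨i, hi1, hin⟩)
    · simp only [MonoidHom.comp_apply, MonoidHom.id_apply]
      have e1 : PresentedGroup.toGroup (hψ hn) (PresentedGroup.of (rels := coxRelsD n) none)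
          = aG n := PresentedGroup.toGroup.of _
      rw [e1]
      exact PresentedGroup.toGroup.of _
    · simp only [MonoidHom.comp_apply, MonoidHom.id_apply]
      have e1 : PresentedGroup.toGroup (hψ hn)
          (PresentedGroup.of (rels := coxRelsD n) (some ⟨i, hi1, hin⟩)) = uG n i :=
        PresentedGroup.toGroup.of _
      rw [e1]
      have e2 : PresentedGroup.toGroup (hφ hn) (uG n i) =
          Ss n (i + 1) * (σ n 1 * Ss n (i + 1)) := by
        simp only [uG, map_mul, φh_τ hn (i + 1) (by omega) (by omega),
          φh_τ hn 2 le_rfl (by omega), Ss2eq, mul_assoc]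
      rw [e2]
      have b := Bσ (n := n) (i + 1) (by omega) (by omega) 1 le_rfl (by omega)
      rw [show i + 1 - 1 = i from by omega] at b
      rw [b]
      rw [show σ n i = PresentedGroup.of (rels := coxRelsD n) (some ⟨i, hi1, hin⟩) from by
        rw [σ, sD, dif_pos ⟨hi1, hin⟩]; rfl]

end Aux2


theorem stmt2 (n : ℕ) (hn : 3 < n) :
    Nonempty (PresentedGroup (relsD n) ≃* PresentedGroup (coxRelsD n)) := by
  exact Aux2.main hn
end

section
/- Let n > 3, let G be a group, and let r_2, …, r_n ∈ G satisfy the relations (R1)–(R6). Define s_{i-1} = r_i r_2 r_i for all i ∈ [2,n], and assume the elements s_1, …, s_{n-1} satisfy the type A Coxeter relations. Then for every k ∈ [2,n], r_k = s_1 (s_2 s_1) (s_3 s_2 s_1) ⋯ (s_{k-1} s_{k-2} ⋯ s_3 s_2 s_1). -/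
/-- The word `s₁ (s₂ s₁) (s₃ s₂ s₁) ⋯ (s_{k-1} s_{k-2} ⋯ s₂ s₁)` in a group. -/
def rwordA {G : Type*} [Group G] (s : ℕ → G) (k : ℕ) : G :=
  ((List.range (k - 1)).map (fun j => ((List.range (j + 1)).map (fun i => s (j + 1 - i))).prod)).prod

/-- The word `s_j s_{j-1} ⋯ s_1` in a group. -/
def chainW {G : Type*} [Group G] (s : ℕ → G) (j : ℕ) : G :=
  ((List.range j).map (fun i => s (j - i))).prod

lemma chainW_succ {G : Type*} [Group G] (s : ℕ → G) (j : ℕ) :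
    chainW s (j + 1) = s (j + 1) * chainW s j := by
  simp [chainW, List.range_succ_eq_map, List.map_map, Function.comp_def]

lemma rwordA_succ {G : Type*} [Group G] (s : ℕ → G) (m : ℕ) :
    rwordA s (m + 2) = rwordA s (m + 1) * chainW s (m + 1) := by
  simp [rwordA, chainW, List.range_succ]

lemma rwordA_two {G : Type*} [Group G] (s : ℕ → G) : rwordA s 2 = s 1 := by
  simp [rwordA, List.range_succ]

lemma chainW_two {G : Type*} [Group G] (s : ℕ → G) : chainW s 2 = s 2 * s 1 := by
  simp [chainW, List.range_succ]

theorem stmt3 (n : ℕ) (hn : 3 < n) (G : Type*) [Group G] (r s : ℕ → G)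
    (hR1 : ∀ k, 2 ≤ k → k ≤ n → r k * r k = 1)
    (hR2 : (r 2 * r 3) ^ 3 = 1)
    (hR3 : ∀ k, 4 ≤ k → k ≤ n → (r 2 * r k) ^ 4 = 1)
    (hR4 : ∀ l k, 4 ≤ l → l ≤ n → 3 ≤ k → k ≤ l - 1 →
      r l * r (l - k + 2) * r 2 * r (l - k + 2) * r l * r k * r 2 * r k = 1)
    (hR5 : ∀ k, 3 ≤ k → k ≤ n - 1 →
      r k * r (k - 1) * r (k + 1) * r 2 * r (k + 1) * r k * r (k + 1) = 1)
    (hR6 : ∀ k, 3 ≤ k → k ≤ n - 1 →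
      (r k * r (k - 1)) ^ 2 * r (k + 1) * r 3 * r (k + 1) * r (k - 1) * r (k + 1) = 1)
    (hs : ∀ i, 2 ≤ i → i ≤ n → s (i - 1) = r i * r 2 * r i)
    (hA1 : ∀ i, 1 ≤ i → i ≤ n - 1 → s i * s i = 1)
    (hA2 : ∀ i, 1 ≤ i → i ≤ n - 2 → (s i * s (i + 1)) ^ 3 = 1)
    (hA3 : ∀ i j, 1 ≤ i → i ≤ n - 3 → i + 2 ≤ j → j ≤ n - 1 → (s i * s j) ^ 2 = 1) :
    ∀ k, 2 ≤ k → k ≤ n → r k = rwordA s k := by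
  have L : ∀ x : G, x * x = 1 → ∀ y, x * (x * y) = y := by
    intro x hx y; rw [← mul_assoc, hx, one_mul]
  have hs1 : s 1 = r 2 := by
    have h := hs 2 (by omega) (by omega)
    have h2 := hR1 2 (by omega) (by omega)
    simpa [h2] using h
  -- Key lemma: r k * r (k+1) = s_k s_{k-1} ⋯ s_1
  have hkey : ∀ k, 2 ≤ k → k + 1 ≤ n → r k * r (k + 1) = chainW s k := by
    intro k hk2
    induction k, hk2 using Nat.le_induction with
    | base =>
      intro _
      have ha := hR1 2 (by omega) (by omega)
      have hb := hR1 3 (by omega) (by omega)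
      have hs2 : s 2 = r 3 * r 2 * r 3 := by simpa using hs 3 (by omega) (by omega)
      have h0 : r 2 * (r 3 * (r 2 * (r 3 * (r 2 * r 3)))) = 1 := by
        have h := hR2
        rw [pow_succ, pow_succ, pow_one] at h
        simpa only [mul_assoc] using h
      have h1 : r 3 * (r 2 * (r 3 * (r 2 * r 3))) = r 2 := by
        have h := congrArg (fun z => r 2 * z) h0
        simpa only [L _ ha, mul_one] using h
      have h2 : r 3 * (r 2 * (r 3 * r 2)) = r 2 * r 3 := by
        have h := congrArg (fun z => z * r 3) h1
        simpa only [mul_assoc, hb, mul_one] using h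
      rw [chainW_two, hs2, hs1]
      simp only [mul_assoc]
      exact h2.symm
    | succ k hk ih =>
      intro hkn
      have ih' := ih (by omega)
      have ha := hR1 k (by omega) (by omega)
      have hb := hR1 (k + 1) (by omega) (by omega)
      have hc := hR1 (k + 2) (by omega) (by omega)
      have hd := hR1 2 (by omega) (by omega)
      have hsk : s (k + 1) = r (k + 2) * r 2 * r (k + 2) := by
        simpa using hs (k + 2) (by omega) (by omega)
      have h5 := hR5 (k + 1) (by omega) (by omega)
      have h5' : r (k + 1) * (r k * (r (k + 2) * (r 2 * (r (k + 2) *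
          (r (k + 1) * r (k + 2)))))) = 1 := by
        simpa only [Nat.add_sub_cancel, mul_assoc] using h5
      have h6 : r (k + 2) * (r 2 * (r (k + 2) * (r (k + 1) * r (k + 2)))) =
          r k * r (k + 1) := by
        have h := congrArg (fun z => r k * (r (k + 1) * z)) h5'
        simpa only [L _ ha, L _ hb, mul_one] using h
      rw [chainW_succ, ← ih', hsk, ← h6]
      simp only [mul_assoc, L _ hc, L _ hd]
  intro k hk2
  induction k, hk2 using Nat.le_induction with
  | base =>
    intro _
    rw [rwordA_two, hs1]
  | succ k hk ih =>
    intro hkn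
    have ih' := ih (by omega)
    have hkey' := hkey k (by omega) (by omega)
    have ha := hR1 k (by omega) (by omega)
    have hstep : r (k + 1) = r k * (r k * r (k + 1)) := by
      rw [← mul_assoc, ha, one_mul]
    rw [hstep, hkey', ih']
    obtain ⟨m, rfl⟩ : ∃ m, k = m + 1 := ⟨k - 1, by omega⟩
    exact (rwordA_succ s m).symm
end

section
/- Let n > 3, let G be a group, and let r_2, …, r_n ∈ G satisfy the relations (R1)–(R6). Define s_{i-1} = r_i r_2 r_i for all i ∈ [2,n], and assume the elements s_1, …, s_{n-1} satisfy the type A Coxeter relations. Then for every k ∈ [2,n-1], r_{k+1} r_k = s_1 s_2 ⋯ s_{k-1} s_k. -/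
/-- The ascending word `s₁ s₂ ⋯ s_k` in a group. -/
def ascProd {G : Type*} [Group G] (s : ℕ → G) (k : ℕ) : G :=
  ((List.range k).map (fun i => s (i + 1))).prod

lemma ascProd_succ {G : Type*} [Group G] (s : ℕ → G) (k : ℕ) :
    ascProd s (k + 1) = ascProd s k * s (k + 1) := by
  simp [ascProd, List.range_succ]

theorem stmt4 (n : ℕ) (hn : 3 < n) (G : Type*) [Group G] (r s : ℕ → G)
    (hR1 : ∀ k, 2 ≤ k → k ≤ n → r k * r k = 1)
    (hR2 : (r 2 * r 3) ^ 3 = 1)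
    (hR3 : ∀ k, 4 ≤ k → k ≤ n → (r 2 * r k) ^ 4 = 1)
    (hR4 : ∀ l k, 4 ≤ l → l ≤ n → 3 ≤ k → k ≤ l - 1 →
      r l * r (l - k + 2) * r 2 * r (l - k + 2) * r l * r k * r 2 * r k = 1)
    (hR5 : ∀ k, 3 ≤ k → k ≤ n - 1 →
      r k * r (k - 1) * r (k + 1) * r 2 * r (k + 1) * r k * r (k + 1) = 1)
    (hR6 : ∀ k, 3 ≤ k → k ≤ n - 1 →
      (r k * r (k - 1)) ^ 2 * r (k + 1) * r 3 * r (k + 1) * r (k - 1) * r (k + 1) = 1)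
    (hs : ∀ i, 2 ≤ i → i ≤ n → s (i - 1) = r i * r 2 * r i)
    (hA1 : ∀ i, 1 ≤ i → i ≤ n - 1 → s i * s i = 1)
    (hA2 : ∀ i, 1 ≤ i → i ≤ n - 2 → (s i * s (i + 1)) ^ 3 = 1)
    (hA3 : ∀ i j, 1 ≤ i → i ≤ n - 3 → i + 2 ≤ j → j ≤ n - 1 → (s i * s j) ^ 2 = 1) :
    ∀ k, 2 ≤ k → k ≤ n - 1 → r (k + 1) * r k = ascProd s k := by
  -- inverses of the r's are themselves
  have hinv : ∀ k, 2 ≤ k → k ≤ n → (r k)⁻¹ = r k := by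
    intro k h1 h2
    exact inv_eq_of_mul_eq_one_right (hR1 k h1 h2)
  intro k hk2 hkn
  induction k with
  | zero => omega
  | succ k ih =>
    rcases Nat.lt_or_ge k 2 with hk | hk
    · -- base case: k + 1 = 2
      interval_cases k
      · omega
      · -- show r 3 * r 2 = ascProd s 2 = s 1 * s 2
        have h2 : ascProd s 2 = s 1 * s 2 := by
          simp [ascProd, List.range_succ]
        have hs1 : s 1 = r 2 * r 2 * r 2 := hs 2 (by omega) (by omega)
        have hs2 : s 2 = r 3 * r 2 * r 3 := hs 3 (by omega) (by omega)
        have e2 : r 2 * r 2 = 1 := hR1 2 (by omega) (by omega)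
        have e3 : r 3 * r 3 = 1 := hR1 3 (by omega) (by omega)
        -- (r2 r3)^2 = (r2 r3)⁻¹ = r3 r2
        have key : r 3 * r 2 = r 2 * r 3 * (r 2 * r 3) := by
          have h' : (r 2 * r 3) * (r 2 * r 3) = (r 2 * r 3)⁻¹ := by
            apply eq_inv_of_mul_eq_one_left
            rw [← pow_two, ← pow_succ]
            exact hR2
          rw [h', mul_inv_rev, hinv 2 (by omega) (by omega), hinv 3 (by omega) (by omega)]
        rw [h2, hs1, hs2]
        calc r 3 * r 2 = r 2 * r 3 * (r 2 * r 3) := key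
          _ = r 2 * r 2 * r 2 * (r 3 * r 2 * r 3) := by
              rw [e2]; group
    · -- inductive step, k ≥ 2, k + 1 ≤ n - 1
      have ihk : r (k + 1) * r k = ascProd s k := ih hk (by omega)
      have h5 := hR5 (k + 1) (by omega) (by omega)
      simp only [Nat.add_sub_cancel] at h5
      -- h5 : r (k+1) * r k * r (k+2) * r 2 * r (k+2) * r (k+1) * r (k+2) = 1
      have hsk : s (k + 1) = r (k + 2) * r 2 * r (k + 2) := by
        have := hs (k + 2) (by omega) (by omega)
        simpa using this
      rw [ascProd_succ, ← ihk, hsk]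
      -- goal : r (k+2) * r (k+1) = r (k+1) * r k * (r (k+2) * r 2 * r (k+2))
      have hX : r (k + 1) * r k * r (k + 2) * r 2 * r (k + 2)
          = (r (k + 1) * r (k + 2))⁻¹ := by
        apply eq_inv_of_mul_eq_one_left
        rw [← h5]; group
      rw [show r (k+1) * r k * (r (k+2) * r 2 * r (k+2))
            = r (k+1) * r k * r (k+2) * r 2 * r (k+2) by group, hX,
        mul_inv_rev, hinv (k+1) (by omega) (by omega), hinv (k+2) (by omega) (by omega)]
end

section
/- Let n > 3, let G be a group, and let r_2, …, r_n ∈ G satisfy the relations (R1)–(R6). Define s_{i-1} = r_i r_2 r_i for all i ∈ [2,n], and assume the elements s_1, …, s_{n-1} satisfy the type A Coxeter relations. Then for every k ∈ [3,n], r_k r_3 r_k = s_{k-2} s_{k-1} s_{k-2}. -/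
theorem stmt6 (n : ℕ) (hn : 3 < n) (G : Type*) [Group G] (r s : ℕ → G)
    (hR1 : ∀ k, 2 ≤ k → k ≤ n → r k * r k = 1)
    (hR2 : (r 2 * r 3) ^ 3 = 1)
    (hR3 : ∀ k, 4 ≤ k → k ≤ n → (r 2 * r k) ^ 4 = 1)
    (hR4 : ∀ l k, 4 ≤ l → l ≤ n → 3 ≤ k → k ≤ l - 1 →
      r l * r (l - k + 2) * r 2 * r (l - k + 2) * r l * r k * r 2 * r k = 1)
    (hR5 : ∀ k, 3 ≤ k → k ≤ n - 1 →
      r k * r (k - 1) * r (k + 1) * r 2 * r (k + 1) * r k * r (k + 1) = 1)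
    (hR6 : ∀ k, 3 ≤ k → k ≤ n - 1 →
      (r k * r (k - 1)) ^ 2 * r (k + 1) * r 3 * r (k + 1) * r (k - 1) * r (k + 1) = 1)
    (hs : ∀ i, 2 ≤ i → i ≤ n → s (i - 1) = r i * r 2 * r i)
    (hA1 : ∀ i, 1 ≤ i → i ≤ n - 1 → s i * s i = 1)
    (hA2 : ∀ i, 1 ≤ i → i ≤ n - 2 → (s i * s (i + 1)) ^ 3 = 1)
    (hA3 : ∀ i j, 1 ≤ i → i ≤ n - 3 → i + 2 ≤ j → j ≤ n - 1 → (s i * s j) ^ 2 = 1) :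
    ∀ k, 3 ≤ k → k ≤ n → r k * r 3 * r k = s (k - 2) * s (k - 1) * s (k - 2) := by
  intro k hk3 hkn
  have e2 : r 2 * r 2 = 1 := hR1 2 (by omega) (by omega)
  have e3 : r 3 * r 3 = 1 := hR1 3 (by omega) (by omega)
  have c2 : ∀ x : G, r 2 * (r 2 * x) = x := fun x => by rw [← mul_assoc, e2, one_mul]
  have c3 : ∀ x : G, r 3 * (r 3 * x) = x := fun x => by rw [← mul_assoc, e3, one_mul]
  have hat : ∀ x : G, r 2 * (r 3 * (r 2 * (r 3 * (r 2 * (r 3 * x))))) = x := by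
    intro x
    have h := congrArg (· * x) hR2
    simpa only [pow_succ, pow_zero, one_mul, mul_assoc] using h
  rcases eq_or_lt_of_le hk3 with h3 | hk4
  · subst h3
    have hs1 : s 1 = r 2 * r 2 * r 2 := hs 2 (by omega) (by omega)
    have hs2 : s 2 = r 3 * r 2 * r 3 := hs 3 (by omega) (by omega)
    show r 3 * r 3 * r 3 = s 1 * s 2 * s 1
    rw [hs1, hs2]
    have h := hat (r 3)
    simp only [e3, mul_one] at h
    simp only [mul_assoc, c2, c3]
    exact h.symm
  · -- 4 ≤ k
    have hk4' : 4 ≤ k := hk4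
    have ek : r k * r k = 1 := hR1 k (by omega) hkn
    have ck : ∀ x : G, r k * (r k * x) = x := fun x => by rw [← mul_assoc, ek, one_mul]
    have ekm : r (k - 1) * r (k - 1) = 1 := hR1 (k - 1) (by omega) (by omega)
    have hsk : s (k - 1) = r k * r 2 * r k := hs k (by omega) hkn
    have hskm : s (k - 2) = r (k - 1) * r 2 * r (k - 1) := by
      have h := hs (k - 1) (by omega) (by omega)
      rwa [show k - 1 - 1 = k - 2 by omega] at h
    have h4 := hR4 k (k - 1) hk4' hkn (by omega) (by omega)
    rw [show k - (k - 1) + 2 = 3 by omega] at h4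
    -- h4 : r k * r 3 * r 2 * r 3 * r k * r (k-1) * r 2 * r (k-1) = 1
    have hbab : ∀ x : G, r (k - 1) * (r 2 * (r (k - 1) * x))
        = r k * (r 3 * (r 2 * (r 3 * (r k * x)))) := by
      intro x
      have h := congrArg (fun y => y * (r (k - 1) * (r 2 * (r (k - 1) * x)))) h4
      simp only [one_mul, mul_assoc] at h
      simp only [c2, ck, fun y : G => (by rw [← mul_assoc, ekm, one_mul] :
        r (k - 1) * (r (k - 1) * y) = y)] at h
      exact h.symm
    have hbab0 : r (k - 1) * (r 2 * r (k - 1))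
        = r k * (r 3 * (r 2 * (r 3 * r k))) := by
      have h := hbab 1
      simpa only [mul_one] using h
    rw [hsk, hskm]
    simp only [mul_assoc]
    rw [hbab0, hbab]
    simp only [ck, hat, c2, c3]
end

section
/- Let n > 3, let G be a group, and let r_1, …, r_n ∈ G satisfy the relations (Rb1)–(Rb8). Then (r_2 r_3 r_1)^3 = 1. -/
theorem aux9 {G : Type*} [Group G] (a b c : G)
    (ha : a * a = 1) (hb : b * b = 1) (hc : c * c = 1)
    (hab : (a * b) ^ 4 = 1) (hac : (a * c) ^ 4 = 1)
    (h5 : (c * a * c * b) ^ 2 = 1)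
    (h6 : b * a * b * a * b * c * b * c * b * a * c = 1)
    (h7 : c * a * b * a * c * a * b * c * b = 1) :
    (b * c * a) ^ 3 = 1 := by
  have ia : a⁻¹ = a := inv_eq_of_mul_eq_one_right ha
  have ib : b⁻¹ = b := inv_eq_of_mul_eq_one_right hb
  have ic : c⁻¹ = c := inv_eq_of_mul_eq_one_right hc
  have ha1 : ∀ x : G, a * (a * x) = x := fun x => by rw [← mul_assoc, ha, one_mul]
  have hb1 : ∀ x : G, b * (b * x) = x := fun x => by rw [← mul_assoc, hb, one_mul]
  have hc1 : ∀ x : G, c * (c * x) = x := fun x => by rw [← mul_assoc, hc, one_mul]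
  -- (ab)^2 = (ba)^2
  have hab2 : (a * b * a * b) * (a * b * a * b) = 1 := by
    simpa [pow_succ, pow_zero, one_mul, mul_assoc] using hab
  have hab' : a * b * a * b = b * a * b * a := by
    have h2 : a * b * a * b = (a * b * a * b)⁻¹ := eq_inv_of_mul_eq_one_left hab2
    rw [h2]; simp [mul_inv_rev, ia, ib, mul_assoc]
  -- (ac)^2 = (ca)^2
  have hac2 : (a * c * a * c) * (a * c * a * c) = 1 := by
    simpa [pow_succ, pow_zero, one_mul, mul_assoc] using hac
  have hac' : a * c * a * c = c * a * c * a := by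
    have h2 : a * c * a * c = (a * c * a * c)⁻¹ := eq_inv_of_mul_eq_one_left hac2
    rw [h2]; simp [mul_inv_rev, ia, ic, mul_assoc]
  -- bcac = cacb
  have h52 : (c * a * c * b) * (c * a * c * b) = 1 := by
    simpa [pow_succ, pow_zero, one_mul, mul_assoc] using h5
  have R5w : b * c * a * c = c * a * c * b := by
    have h2 : c * a * c * b = (c * a * c * b)⁻¹ := eq_inv_of_mul_eq_one_left h52
    rw [h2]; simp [mul_inv_rev, ia, ib, ic, mul_assoc]
  -- cabac = bcba
  have h72 : (c * a * b * a * c) * (a * b * c * b) = 1 := by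
    simpa [mul_assoc] using h7
  have R7 : c * a * b * a * c = b * c * b * a := by
    have h2 : c * a * b * a * c = (a * b * c * b)⁻¹ := eq_inv_of_mul_eq_one_left h72
    rw [h2]; simp [mul_inv_rev, ia, ib, ic, mul_assoc]
  -- bababcbcb = ca
  have h62 : (b * a * b * a * b * c * b * c * b) * (a * c) = 1 := by
    simpa [mul_assoc] using h6
  have R6 : b * a * b * a * b * c * b * c * b = c * a := by
    have h2 : b * a * b * a * b * c * b * c * b = (a * c)⁻¹ := eq_inv_of_mul_eq_one_left h62
    rw [h2]; simp [mul_inv_rev, ia, ic]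
  -- babab = aba
  have h55 : b * a * b * a * b = a * b * a := by
    calc b * a * b * a * b = (a * b * a * b) * b := by rw [← hab']
      _ = a * b * a := by
        simp only [mul_assoc, one_mul, mul_one, ha, hb, hc, ha1, hb1, hc1]
  -- cbcb = abaca
  have h1 : (a * b * a) * (c * b * c * b) = c * a := by
    calc (a * b * a) * (c * b * c * b) = (b * a * b * a * b) * (c * b * c * b) := by rw [h55]
      _ = b * a * b * a * b * c * b * c * b := by simp [mul_assoc]
      _ = c * a := R6
  have hK : c * b * c * b = a * b * a * c * a := by
    calc c * b * c * b = (a * b * a) * ((a * b * a) * (c * b * c * b)) := by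
          simp only [mul_assoc, one_mul, mul_one, ha, hb, hc, ha1, hb1, hc1]
      _ = (a * b * a) * (c * a) := by rw [h1]
      _ = a * b * a * c * a := by simp [mul_assoc]
  -- bcb = cabaca
  have hbcb : b * c * b = c * a * b * a * c * a := by
    calc b * c * b = c * (c * b * c * b) := by
          simp only [mul_assoc, one_mul, mul_one, ha, hb, hc, ha1, hb1, hc1]
      _ = c * (a * b * a * c * a) := by rw [hK]
      _ = c * a * b * a * c * a := by simp [mul_assoc]
  have hK1 : (b * c * b) * a * (b * c * b) = a := by
    rw [hbcb]
    simp only [mul_assoc, one_mul, mul_one, ha, hb, hc, ha1, hb1, hc1]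
  have hcomm : a * (b * c * b) = (b * c * b) * a := by
    calc a * (b * c * b) = ((b * c * b) * a * (b * c * b)) * (b * c * b) := by rw [hK1]
      _ = (b * c * b) * a := by
          simp only [mul_assoc, one_mul, mul_one, ha, hb, hc, ha1, hb1, hc1]
  have hK2 : c * b * a * b = b * a * b * c := by
    calc c * b * a * b = b * ((b * c * b) * a) * b := by
          simp only [mul_assoc, one_mul, mul_one, ha, hb, hc, ha1, hb1, hc1]
      _ = b * (a * (b * c * b)) * b := by rw [hcomm]
      _ = b * a * b * c := by
          simp only [mul_assoc, one_mul, mul_one, ha, hb, hc, ha1, hb1, hc1]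
  have R7' : c * a * b = b * c * b * a * c * a := by
    calc c * a * b = (c * a * b * a * c) * (c * a) := by
          simp only [mul_assoc, one_mul, mul_one, ha, hb, hc, ha1, hb1, hc1]
      _ = (b * c * b * a) * (c * a) := by rw [R7]
      _ = b * c * b * a * c * a := by simp [mul_assoc]
  calc (b * c * a) ^ 3 = b * (c * a * b) * ((c * a * b) * (c * a)) := by
        simp [pow_succ, pow_zero, one_mul, mul_assoc]
    _ = b * (b * c * b * a * c * a) * ((b * c * b * a * c * a) * (c * a)) := by rw [R7']
    _ = (c * b * a * c * a * b * c * b * a) * (c * a * c * a) := by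
        simp only [mul_assoc, one_mul, mul_one, ha, hb, hc, ha1, hb1, hc1]
    _ = (c * b * a * c * a * b * c * b * a) * (a * c * a * c) := by rw [← hac']
    _ = (c * b * a * c * a * b * c) * (b * c * a * c) := by
        simp only [mul_assoc, one_mul, mul_one, ha, hb, hc, ha1, hb1, hc1]
    _ = (c * b * a * c * a * b * c) * (c * a * c * b) := by rw [R5w]
    _ = c * b * a * (c * a * b * a * c) * b := by
        simp only [mul_assoc, one_mul, mul_one, ha, hb, hc, ha1, hb1, hc1]
    _ = c * b * a * (b * c * b * a) * b := by rw [R7]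
    _ = (c * b * a * b) * (c * b * a * b) := by
        simp only [mul_assoc, one_mul, mul_one, ha, hb, hc, ha1, hb1, hc1]
    _ = (c * b * a * b) * (b * a * b * c) := by rw [hK2]
    _ = 1 := by
        simp only [mul_assoc, one_mul, mul_one, ha, hb, hc, ha1, hb1, hc1]

theorem stmt9 (n : ℕ) (hn : 3 < n) (G : Type*) [Group G] (r : ℕ → G)
    (hRb1 : ∀ k, 1 ≤ k → k ≤ n → r k * r k = 1)
    (hRb2 : (r 2 * r 3) ^ 6 = 1)
    (hRb3 : ∀ k, 2 ≤ k → k ≤ n → (r 1 * r k) ^ 4 = 1)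
    (hRb4 : ∀ k, 4 ≤ k → k ≤ n → (r 1 * r 2 * r 1 * r k) ^ 4 = 1)
    (hRb5 : ∀ k, 3 ≤ k → k ≤ n → (r k * r 1 * r k * r 2) ^ 2 = 1)
    (hRb6 : ∀ k, 2 ≤ k → k ≤ n - 1 →
      r k * r 1 * r 2 * r 1 * r k * r (k + 1) * r 2 * r 3 * r 2 * r 1 * r (k + 1) = 1)
    (hRb7 : ∀ k, 2 ≤ k → k ≤ n - 1 →
      r (k + 1) * r 1 * r 2 * r 1 * r (k + 1) * r (k - 1) * r k * r (k + 1) * r k = 1)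
    (hRb8 : ∀ k l, 2 ≤ k → k ≤ n - 2 → k + 2 ≤ l → l ≤ n →
      r k * r 1 * r 2 * r 1 * r k * r l * r (l - k + 2) * r 1 * r 2 * r 1 * r (l - k + 2) * r l = 1) :
    (r 2 * r 3 * r 1) ^ 3 = 1 := by
  have ha := hRb1 1 (by omega) (by omega)
  have hb := hRb1 2 (by omega) (by omega)
  have hc := hRb1 3 (by omega) (by omega)
  have h6 := hRb6 2 (by omega) (by omega)
  have h7 := hRb7 2 (by omega) (by omega)
  norm_num at h6 h7
  exact aux9 (r 1) (r 2) (r 3) ha hb hc (hRb3 2 (by omega) (by omega))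
    (hRb3 3 (by omega) (by omega)) (hRb5 3 (by omega) (by omega)) h6 h7
end
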